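/- arXiv:0812.5082 — 9 statements merged into one kernel-verified Lean document; each statement's English description precedes it below -/
import Mathlib

section
/- The generalized character Θ = Σ_{k=0}^{n-1} (-1)^k χ^{(n-k,1^k)} of S_n vanishes on every element that is not an n-cycle, and takes the value n on every n-cycle. -/
/-- The beta-set (set of first-column hook lengths) of a partition given as a
weakly decreasing list of parts: the `i`-th part `a` contributes `a + (ℓ - 1 - i)`. -/
def betaSet (l : List ℕ) : Finset ℕ :=
  (l.mapIdx (fun i a => a + (l.length - 1 - i))).toFinset

/-- The leg length of the `a`-hook removed from the partition with beta-set `X`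
by replacing the beta-number `x` with `x - a`: the number of beta-numbers
strictly between `x - a` and `x`. -/
def legLen (X : Finset ℕ) (a x : ℕ) : ℕ :=
  (X.filter (fun y => x - a < y ∧ y < x)).card

/-- For a partition with beta-set `X` and a list `l = [a₁,…,a_k]`, the multiset of
the sums of leg lengths of the hooks removed along all `l`-paths of `X`, i.e. along
all ways of successively removing an `a₁`-hook, an `a₂`-hook, … ending at the
empty partition.  Removing an `a`-hook from a partition with beta-set `X`
corresponds to replacing some `x ∈ X` with `x - a ∉ X` (where `a ≤ x`). -/
def legSums : Finset ℕ → List ℕ → Multiset ℕ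
  | X, [] => if X = Finset.range X.card then {0} else 0
  | X, a :: r =>
      (X.filter (fun x => a ≤ x ∧ x - a ∉ X)).val.bind
        (fun x => (legSums (insert (x - a) (X.erase x)) r).map (fun L => legLen X a x + L))

/-- The number of `l`-paths in the partition with beta-set `X`:
the number of ways to successively remove hooks of lengths `a₁, a₂, …`
(for `l = [a₁,…,a_k]`) ending at the empty partition. -/
def numPaths (X : Finset ℕ) (l : List ℕ) : ℕ := (legSums X l).card

/-- Murnaghan–Nakayama evaluation: for partitions `lam`, `mu` given as weakly
decreasing lists, this is `Σ_paths (-1)^(sum of leg lengths)`, which by the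
Murnaghan–Nakayama formula equals the value `χ^lam(mu)` of the irreducible
character of the symmetric group indexed by `lam` on the class of cycle type `mu`. -/
def charList (lam mu : List ℕ) : ℤ :=
  ((legSums (betaSet lam) mu).map (fun L => (-1 : ℤ) ^ L)).sum

/-- The parts of a partition as a weakly decreasing list. -/
def sortedParts {n : ℕ} (mu : n.Partition) : List ℕ :=
  (Multiset.sort mu.parts (· ≤ ·)).reverse

/-- The value `χ^lam(mu)` of the irreducible character of `S_n` indexed by the
partition `lam` on the conjugacy class of cycle type `mu`, computed by the
Murnaghan–Nakayama formula. -/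
def charValue {n : ℕ} (lam mu : n.Partition) : ℤ :=
  charList (sortedParts lam) (sortedParts mu)

/-- The hook partition `(n-k, 1^k)` as a weakly decreasing list of parts. -/
def hookList (n k : ℕ) : List ℕ := (n - k) :: List.replicate k 1

lemma mapIdx_replicate_one (k : ℕ) (f : ℕ → ℕ → ℕ) :
    (List.replicate k (1:ℕ)).mapIdx f = (List.range k).map (fun i => f i 1) := by
  induction k generalizing f with
  | zero => simp
  | succ k ih =>
      rw [List.replicate_succ, List.mapIdx_cons, List.range_succ_eq_map, List.map_cons, ih]
      simp [List.map_map, Function.comp]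

lemma betaSet_hook (n k : ℕ) (h : k ≤ n) :
    betaSet (hookList n k) = insert n (Finset.Icc 1 k) := by
  have hlen : (hookList n k).length = k + 1 := by simp [hookList]
  rw [betaSet, hlen, hookList, List.mapIdx_cons, mapIdx_replicate_one]
  ext x
  simp only [List.toFinset_cons, List.mem_toFinset, Finset.mem_insert, List.mem_map,
    List.mem_range, Finset.mem_Icc, List.mem_toFinset]
  constructor
  · rintro (rfl | ⟨i, hi, rfl⟩)
    · left; omega
    · right; omega
  · rintro (rfl | ⟨h1, h2⟩)
    · left; omega
    · right; exact ⟨k - x, by omega, by omega⟩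

private lemma succ_inj' : Function.Injective (· + 1 : ℕ → ℕ) := fun x y h => Nat.add_right_cancel h

lemma legSums_shift1 (l : List ℕ) (hl : ∀ b ∈ l, 1 ≤ b) (X : Finset ℕ) :
    legSums (insert 0 (X.image (· + 1))) l = legSums X l := by
  induction l generalizing X with
  | nil =>
      have h0 : (0:ℕ) ∉ X.image (· + 1) := by simp
      have hcard : (insert 0 (X.image (· + 1))).card = X.card + 1 := by
        rw [Finset.card_insert_of_notMem h0, Finset.card_image_of_injective _ succ_inj']
      have hiff : insert 0 (X.image (· + 1)) = Finset.range ((insert 0 (X.image (· + 1))).card)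
          ↔ X = Finset.range X.card := by
        rw [hcard]
        constructor
        · intro h
          have hsub : X ⊆ Finset.range X.card := by
            intro y hy
            have : y + 1 ∈ insert 0 (X.image (· + 1)) := by
              simp only [Finset.mem_insert, Finset.mem_image]
              exact Or.inr ⟨y, hy, rfl⟩
            rw [h, Finset.mem_range] at this
            rw [Finset.mem_range]; omega
          exact Finset.eq_of_subset_of_card_le hsub (by simp)
        · intro h
          rw [h]
          ext x
          simp only [Finset.mem_insert, Finset.mem_image, Finset.mem_range, Finset.card_range]
          constructor
          · rintro (rfl | ⟨y, hy, rfl⟩) <;> omega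
          · intro hx
            rcases Nat.eq_zero_or_pos x with rfl | hpos
            · exact Or.inl rfl
            · exact Or.inr ⟨x - 1, by omega, by omega⟩
      simp only [legSums]
      split_ifs with h1 h2 h2 <;> first | rfl | (exfalso; tauto)
  | cons a r ih =>
      have ha : 1 ≤ a := hl a (by simp)
      have hr : ∀ b ∈ r, 1 ≤ b := fun b hb => hl b (by simp [hb])
      set X' := insert 0 (X.image (· + 1)) with hX'
      have hmemX' : ∀ z, z ∈ X' ↔ z = 0 ∨ ∃ w ∈ X, w + 1 = z := by
        intro z; simp [hX', Finset.mem_insert, Finset.mem_image]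
      have hfilt : X'.filter (fun x => a ≤ x ∧ x - a ∉ X') =
          (X.filter (fun x => a ≤ x ∧ x - a ∉ X)).image (· + 1) := by
        ext x
        simp only [Finset.mem_filter, Finset.mem_image, hmemX']
        constructor
        · rintro ⟨hx, hax, hnot⟩
          rcases hx with rfl | ⟨y, hy, rfl⟩
          · omega
          · have hay : a ≤ y := by
              by_contra hc
              exact hnot (Or.inl (by omega))
            refine ⟨y, ⟨hy, hay, ?_⟩, rfl⟩
            intro hmem
            exact hnot (Or.inr ⟨y - a, hmem, by omega⟩)
        · rintro ⟨y, ⟨hy, hay, hnot⟩, rfl⟩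
          refine ⟨Or.inr ⟨y, hy, rfl⟩, by omega, ?_⟩
          rintro (h0 | ⟨w, hw, hw1⟩)
          · omega
          · have hwa : w = y - a := by omega
            exact hnot (hwa ▸ hw)
      have hll : ∀ y ∈ X, a ≤ y → legLen X' a (y + 1) = legLen X a y := by
        intro y hy hay
        unfold legLen
        have : X'.filter (fun z => y + 1 - a < z ∧ z < y + 1) =
            (X.filter (fun z => y - a < z ∧ z < y)).image (· + 1) := by
          ext z
          simp only [Finset.mem_filter, Finset.mem_image, hmemX']
          constructor
          · rintro ⟨(rfl | ⟨w, hw, rfl⟩), h1, h2⟩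
            · omega
            · exact ⟨w, ⟨hw, by omega, by omega⟩, rfl⟩
          · rintro ⟨w, ⟨hw, h1, h2⟩, rfl⟩
            exact ⟨Or.inr ⟨w, hw, rfl⟩, by omega, by omega⟩
        rw [this, Finset.card_image_of_injective _ succ_inj']
      have hins : ∀ y ∈ X, a ≤ y → insert (y + 1 - a) (X'.erase (y + 1)) =
          insert 0 ((insert (y - a) (X.erase y)).image (· + 1)) := by
        intro y hy hay
        ext z
        simp only [Finset.mem_insert, Finset.mem_erase, Finset.mem_image, hmemX',
          Finset.mem_insert, Finset.mem_erase]
        constructor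
        · rintro (rfl | ⟨hne, (rfl | ⟨w, hw, rfl⟩)⟩)
          · right; exact ⟨y - a, Or.inl rfl, by omega⟩
          · left; rfl
          · right; exact ⟨w, Or.inr ⟨by omega, hw⟩, rfl⟩
        · rintro (rfl | ⟨w, (rfl | ⟨hne, hw⟩), rfl⟩)
          · right; exact ⟨by omega, Or.inl rfl⟩
          · left; omega
          · right; exact ⟨by omega, Or.inr ⟨w, hw, rfl⟩⟩
      simp only [legSums]
      rw [hfilt]
      have hval : ((X.filter (fun x => a ≤ x ∧ x - a ∉ X)).image (· + 1)).val =
          (X.filter (fun x => a ≤ x ∧ x - a ∉ X)).val.map (· + 1) := by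
        rw [Finset.image_val, Multiset.dedup_eq_self.mpr]
        exact Multiset.Nodup.map succ_inj' (X.filter _).nodup
      rw [hval, Multiset.bind_map]
      apply Multiset.bind_congr
      intro y hy
      rw [← Finset.mem_def, Finset.mem_filter] at hy
      rw [hins y hy.1 hy.2.1, hll y hy.1 hy.2.1, ih hr]

lemma legSums_pad (l : List ℕ) (hl : ∀ b ∈ l, 1 ≤ b) (j : ℕ) (X : Finset ℕ) :
    legSums (Finset.range j ∪ X.image (· + j)) l = legSums X l := by
  induction j with
  | zero =>
      have : Finset.range 0 ∪ X.image (· + 0) = X := by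
        ext x; simp
      rw [this]
  | succ j ih =>
      have : Finset.range (j+1) ∪ X.image (· + (j+1)) =
          insert 0 ((Finset.range j ∪ X.image (· + j)).image (· + 1)) := by
        ext x
        simp only [Finset.mem_union, Finset.mem_range, Finset.mem_image, Finset.mem_insert]
        constructor
        · rintro (hx | ⟨y, hy, rfl⟩)
          · rcases Nat.eq_zero_or_pos x with rfl | hpos
            · exact Or.inl rfl
            · exact Or.inr ⟨x - 1, Or.inl (by omega), by omega⟩
          · exact Or.inr ⟨y + j, Or.inr ⟨y, hy, rfl⟩, by omega⟩
        · rintro (rfl | ⟨w, (hw | ⟨y, hy, rfl⟩), rfl⟩)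
          · exact Or.inl (by omega)
          · exact Or.inl (by omega)
          · exact Or.inr ⟨y, hy, by omega⟩
      rw [this, legSums_shift1 l hl, ih]

lemma charList_hook_ncycle (n k : ℕ) (hn : 1 ≤ n) (hk : k < n) :
    charList (hookList n k) [n] = (-1 : ℤ) ^ k := by
  rw [charList, betaSet_hook n k (by omega)]
  set X : Finset ℕ := insert n (Finset.Icc 1 k) with hX
  have hmem : ∀ z, z ∈ X ↔ z = n ∨ (1 ≤ z ∧ z ≤ k) := by
    intro z; simp [hX, Finset.mem_insert, Finset.mem_Icc]
  have hfilt : X.filter (fun x => n ≤ x ∧ x - n ∉ X) = {n} := by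
    ext x
    simp only [Finset.mem_filter, hmem, Finset.mem_singleton]
    omega
  have herase : X.erase n = Finset.Icc 1 k := by
    rw [hX, Finset.erase_insert (by simp [Finset.mem_Icc]; omega)]
  have hins : insert (n - n) (X.erase n) = Finset.range (k + 1) := by
    rw [herase]
    ext x
    simp only [Finset.mem_insert, Finset.mem_Icc, Finset.mem_range]
    omega
  have hleg : legLen X n n = k := by
    rw [legLen]
    have : X.filter (fun y => n - n < y ∧ y < n) = Finset.Icc 1 k := by
      ext y
      simp only [Finset.mem_filter, hmem, Finset.mem_Icc]
      omega
    rw [this, Nat.card_Icc]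
    omega
  simp only [legSums, hfilt, Finset.singleton_val, Multiset.singleton_bind, hins, hleg]
  rw [if_pos (by simp)]
  simp

lemma charList_hook_step (n k a : ℕ) (r : List ℕ) (ha1 : 1 ≤ a) (han : a < n) (hk : k < n)
    (hr : ∀ b ∈ r, 1 ≤ b) :
    charList (hookList n k) (a :: r) =
      (if a + k < n then charList (hookList (n - a) k) r else 0)
      + (if a ≤ k then (-1 : ℤ) ^ (a - 1) * charList (hookList (n - a) (k - a)) r else 0) := by
  rw [charList, betaSet_hook n k (by omega)]
  set X : Finset ℕ := insert n (Finset.Icc 1 k) with hX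
  have hmem : ∀ z, z ∈ X ↔ z = n ∨ (1 ≤ z ∧ z ≤ k) := by
    intro z; simp [hX, Finset.mem_insert, Finset.mem_Icc]
  have hfilt : X.filter (fun x => a ≤ x ∧ x - a ∉ X) =
      (if a + k < n then {n} else ∅) ∪ (if a ≤ k then {a} else ∅) := by
    ext x
    simp only [Finset.mem_filter, hmem, Finset.mem_union]
    split_ifs with h1 h2 h2 <;>
      simp only [Finset.mem_singleton, Finset.notMem_empty, or_false, false_or, iff_false] <;>
      omega
  have hb1 : a + k < n →
      (Multiset.map (fun L => (-1 : ℤ) ^ L)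
        ((legSums (insert (n - a) (X.erase n)) r).map (fun L => legLen X a n + L))).sum
        = charList (hookList (n - a) k) r := by
    intro h1
    have herase : X.erase n = Finset.Icc 1 k := by
      rw [hX, Finset.erase_insert (by simp [Finset.mem_Icc]; omega)]
    have hins : insert (n - a) (X.erase n) = betaSet (hookList (n - a) k) := by
      rw [herase, betaSet_hook (n - a) k (by omega)]
    have hleg : legLen X a n = 0 := by
      rw [legLen, Finset.card_eq_zero]
      ext y
      simp only [Finset.mem_filter, hmem, Finset.notMem_empty, iff_false]
      omega
    rw [hins, hleg]
    simp [charList]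
  have hb2 : a ≤ k →
      (Multiset.map (fun L => (-1 : ℤ) ^ L)
        ((legSums (insert (a - a) (X.erase a)) r).map (fun L => legLen X a a + L))).sum
        = (-1 : ℤ) ^ (a - 1) * charList (hookList (n - a) (k - a)) r := by
    intro h2
    have hins : insert (a - a) (X.erase a) =
        Finset.range a ∪ (betaSet (hookList (n - a) (k - a))).image (· + a) := by
      rw [betaSet_hook (n - a) (k - a) (by omega)]
      ext z
      simp only [Finset.mem_insert, Finset.mem_erase, hmem, Finset.mem_union, Finset.mem_range,
        Finset.mem_image, Finset.mem_insert, Finset.mem_Icc]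
      constructor
      · rintro (rfl | ⟨hne, hz⟩)
        · left; omega
        · rcases hz with he | ⟨hz1, hz2⟩
          · right; exact ⟨z - a, Or.inl (by omega), by omega⟩
          · by_cases hza : z < a
            · left; exact hza
            · right; exact ⟨z - a, Or.inr ⟨by omega, by omega⟩, by omega⟩
      · rintro (hz | ⟨w, (rfl | ⟨hw1, hw2⟩), rfl⟩)
        · rcases Nat.eq_zero_or_pos z with rfl | hpos
          · left; omega
          · right; exact ⟨by omega, Or.inr ⟨by omega, by omega⟩⟩
        · right; exact ⟨by omega, Or.inl (by omega)⟩
        · right; exact ⟨by omega, Or.inr ⟨by omega, by omega⟩⟩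
    have hleg : legLen X a a = a - 1 := by
      rw [legLen]
      have : X.filter (fun y => a - a < y ∧ y < a) = Finset.Icc 1 (a - 1) := by
        ext y
        simp only [Finset.mem_filter, hmem, Finset.mem_Icc]
        omega
      rw [this, Nat.card_Icc]
      omega
    rw [hins, hleg, legSums_pad r hr a _]
    rw [charList, Multiset.map_map]
    have hpow : ∀ L : ℕ, (-1 : ℤ) ^ (a - 1 + L) = (-1 : ℤ) ^ (a - 1) * (-1 : ℤ) ^ L := fun L =>
      pow_add _ _ _
    simp only [Function.comp, hpow]
    rw [← Multiset.sum_map_mul_left]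
  simp only [legSums, hfilt]
  by_cases h1 : a + k < n <;> by_cases h2 : a ≤ k <;>
      simp only [h1, h2, if_true, if_false]
  · have hna : n ∉ ({a} : Finset ℕ) := by simp; omega
    rw [← Finset.insert_eq, Finset.insert_val_of_notMem hna, Multiset.cons_bind,
      Finset.singleton_val, Multiset.singleton_bind, Multiset.map_add, Multiset.sum_add,
      hb1 h1, hb2 h2]
  · rw [Finset.union_empty, Finset.singleton_val, Multiset.singleton_bind, hb1 h1, add_zero]
  · rw [Finset.empty_union, Finset.singleton_val, Multiset.singleton_bind, hb2 h2, zero_add]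
  · simp

theorem main_sum (n : ℕ) (hn : 1 ≤ n) (μ : List ℕ) (hpos : ∀ b ∈ μ, 1 ≤ b)
    (hsum : μ.sum = n) :
    ∑ k ∈ Finset.range n, (-1 : ℤ) ^ k * charList (hookList n k) μ
      = if μ = [n] then (n : ℤ) else 0 := by
  match μ with
  | [] => simp at hsum; omega
  | [a] =>
      have ha : a = n := by simpa using hsum
      subst ha
      rw [if_pos rfl]
      have : ∀ k ∈ Finset.range a, (-1 : ℤ) ^ k * charList (hookList a k) [a] = 1 := by
        intro k hk
        rw [charList_hook_ncycle a k hn (Finset.mem_range.mp hk), ← mul_pow]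
        norm_num
      rw [Finset.sum_congr rfl this]
      simp
  | a :: b :: r' =>
      have ha1 : 1 ≤ a := hpos a (by simp)
      have hrpos : ∀ c ∈ b :: r', 1 ≤ c := fun c hc => hpos c (List.mem_cons_of_mem a hc)
      have hsum' : a + (b :: r').sum = n := by rw [← hsum]; simp
      have hbsum : 1 ≤ (b :: r').sum := by
        have h1 : (b :: r').sum = b + r'.sum := by simp
        have h2 : 1 ≤ b := hrpos b (by simp)
        omega
      have han : a < n := by omega
      rw [if_neg (by simp)]
      rw [Finset.sum_congr rfl (fun k hk =>
        congrArg _ (charList_hook_step n k a (b :: r') ha1 han (Finset.mem_range.mp hk) hrpos))]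
      simp only [mul_add]
      rw [Finset.sum_add_distrib]
      set c : ℕ → ℤ := fun k => charList (hookList (n - a) k) (b :: r') with hc
      have e1 : ∑ k ∈ Finset.range n, (-1:ℤ)^k * (if a + k < n then c k else 0)
          = ∑ k ∈ Finset.range (n - a), (-1:ℤ)^k * c k := by
        rw [← Finset.sum_subset (Finset.range_subset_range.mpr (show n - a ≤ n by omega))
          (fun k _ hk => by
            rw [Finset.mem_range] at hk
            rw [if_neg (by omega), mul_zero])]
        apply Finset.sum_congr rfl
        intro k hk
        rw [Finset.mem_range] at hk
        rw [if_pos (by omega)]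
      have e2 : ∑ k ∈ Finset.range n,
            (-1:ℤ)^k * (if a ≤ k then (-1:ℤ)^(a-1) * c (k - a) else 0)
          = ∑ k ∈ Finset.range (n - a), -((-1:ℤ)^k * c k) := by
        rw [Finset.range_eq_Ico, ← Finset.sum_subset
          (Finset.Ico_subset_Ico (Nat.zero_le a) le_rfl)
          (fun k hk hk' => by
            rw [Finset.mem_Ico] at hk hk'
            rw [if_neg (by omega), mul_zero])]
        rw [Finset.sum_Ico_eq_sum_range]
        apply Finset.sum_congr rfl
        intro i _
        rw [if_pos (Nat.le_add_right a i), Nat.add_sub_cancel_left]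
        have hkey : (-1:ℤ)^(a+i) * (-1)^(a-1) = -(-1)^i := by
          rw [← pow_add]
          have hexp : a + i + (a - 1) = 2 * (a - 1) + 1 + i := by omega
          rw [hexp, pow_add, pow_add, pow_mul]
          norm_num
        rw [← mul_assoc, hkey]
        ring
      rw [e1, e2, ← Finset.sum_add_distrib]
      simp

/-- The generalized character `Θ = Σ_{k=0}^{n-1} (-1)^k χ^{(n-k,1^k)}` of `S_n`
vanishes on every element that is not an `n`-cycle, and takes the value `n`
on every `n`-cycle. -/
theorem alternating_hook_sum (n : ℕ) (hn : 1 ≤ n) (g : Equiv.Perm (Fin n)) :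
    ((Equiv.Perm.partition g).parts ≠ ({n} : Multiset ℕ) →
      ∑ k ∈ Finset.range n, (-1 : ℤ) ^ k *
        charList (hookList n k) ((Multiset.sort (Equiv.Perm.partition g).parts (· ≤ ·)).reverse)
        = 0) ∧
    ((Equiv.Perm.partition g).parts = ({n} : Multiset ℕ) →
      ∑ k ∈ Finset.range n, (-1 : ℤ) ^ k *
        charList (hookList n k) ((Multiset.sort (Equiv.Perm.partition g).parts (· ≤ ·)).reverse)
        = n) := by
  set P := Equiv.Perm.partition g with hP
  set μ : List ℕ := (Multiset.sort P.parts (· ≤ ·)).reverse with hμ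
  have hcoe : (↑μ : Multiset ℕ) = P.parts := by
    rw [hμ, Multiset.coe_reverse, Multiset.sort_eq]
  have hsum : μ.sum = n := by
    have := P.parts_sum
    rw [← hcoe, Multiset.sum_coe] at this
    simpa using this
  have hpos : ∀ b ∈ μ, 1 ≤ b := by
    intro b hb
    have : b ∈ P.parts := by rw [← hcoe]; exact_mod_cast hb
    exact P.parts_pos this
  have hiff : μ = [n] ↔ P.parts = {n} := by
    constructor
    · intro h
      rw [← hcoe, h]
      rfl
    · intro h
      rw [hμ, h, Multiset.sort_singleton]
      rfl
  have := main_sum n hn μ hpos hsum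
  constructor
  · intro h
    rw [this, if_neg (fun hc => h (hiff.mp hc))]
  · intro h
    rw [this, if_pos (hiff.mpr h)]
end

section
/- Let m > n and let λ be a partition of m + n. Then λ has at most one hook of length m (i.e., at most one cell of λ has hook length m). -/
/-- The `i`-th part (0-indexed) of a partition, or `0` beyond the last part. -/
def partFn {n : ℕ} (lam : n.Partition) (i : ℕ) : ℕ := (sortedParts lam).getD i 0

/-- The `j`-th part (0-indexed) of the conjugate partition:
the number of parts of `lam` that exceed `j`. -/
def conjFn {n : ℕ} (lam : n.Partition) (j : ℕ) : ℕ :=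
  ((Finset.range n).filter (fun i => j < partFn lam i)).card

/-- The hook length of the (0-indexed) cell `(i, j)` of `lam`:
`lam_i - j + lam’_j - i - 1` in 0-indexed form. -/
def hookLength {n : ℕ} (lam : n.Partition) (i j : ℕ) : ℕ :=
  partFn lam i + conjFn lam j - i - j - 1

lemma sortedParts_sorted {n : ℕ} (lam : n.Partition) : (sortedParts lam).Pairwise (· ≥ ·) := by
  rw [sortedParts, List.pairwise_reverse]
  exact (Multiset.pairwise_sort (s := lam.parts) (r := (· ≤ ·))).imp (fun h => h)

lemma sortedParts_sum {n : ℕ} (lam : n.Partition) : (sortedParts lam).sum = n := by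
  rw [sortedParts, List.sum_reverse]
  have := Multiset.sort_eq (s := lam.parts) (r := (· ≤ ·))
  have h2 : ((Multiset.sort lam.parts (· ≤ ·) : List ℕ) : Multiset ℕ).sum = lam.parts.sum := by
    rw [this]
  rw [Multiset.sum_coe] at h2
  exact h2.trans lam.parts_sum

lemma sortedParts_length_le {n : ℕ} (lam : n.Partition) : (sortedParts lam).length ≤ n := by
  have h1 : ∀ x ∈ sortedParts lam, 1 ≤ x := by
    intro x hx
    rw [sortedParts, List.mem_reverse, ← Multiset.mem_coe, Multiset.sort_eq] at hx
    exact lam.parts_pos hx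
  calc (sortedParts lam).length ≤ (sortedParts lam).sum := List.length_le_sum_of_one_le _ h1
  _ = n := sortedParts_sum lam

lemma partFn_anti {n : ℕ} (lam : n.Partition) : Antitone (partFn lam) := by
  intro i j hij
  unfold partFn
  rcases lt_or_ge j (sortedParts lam).length with hj | hj
  · have hi : i < (sortedParts lam).length := lt_of_le_of_lt hij hj
    rw [List.getD_eq_getElem _ _ hj, List.getD_eq_getElem _ _ hi]
    rcases eq_or_lt_of_le hij with rfl | h
    · exact le_rfl
    · exact (sortedParts_sorted lam).rel_get_of_lt h
  · rw [List.getD_eq_default _ _ hj]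
    exact Nat.zero_le _

lemma partFn_eq_zero {n : ℕ} (lam : n.Partition) {i : ℕ} (hi : n ≤ i) : partFn lam i = 0 :=
  List.getD_eq_default _ _ ((sortedParts_length_le lam).trans hi)

lemma conjFn_le {n : ℕ} (lam : n.Partition) (j : ℕ) : conjFn lam j ≤ n := by
  calc conjFn lam j ≤ (Finset.range n).card := Finset.card_le_card (Finset.filter_subset _ _)
  _ = n := Finset.card_range n

lemma conjFn_anti {n : ℕ} (lam : n.Partition) : Antitone (conjFn lam) := by
  intro j j' h
  apply Finset.card_le_card
  intro i hi
  rw [Finset.mem_filter] at *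
  exact ⟨hi.1, lt_of_le_of_lt h hi.2⟩

lemma lt_conjFn_iff {n : ℕ} (lam : n.Partition) {i : ℕ} (j : ℕ) (hi : i < n) :
    i < conjFn lam j ↔ j < partFn lam i := by
  have hPn : ¬ j < partFn lam n := by rw [partFn_eq_zero lam le_rfl]; omega
  have hex : ∃ m, ¬ j < partFn lam m := ⟨n, hPn⟩
  set k := Nat.find hex with hk
  have hkspec : ¬ j < partFn lam k := Nat.find_spec hex
  have hkn : k ≤ n := Nat.find_le hPn
  have hfil : (Finset.range n).filter (fun i => j < partFn lam i) = Finset.range k := by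
    ext x
    simp only [Finset.mem_filter, Finset.mem_range]
    constructor
    · rintro ⟨hxn, hPx⟩
      by_contra hxk
      push_neg at hxk
      exact hkspec (lt_of_lt_of_le hPx (partFn_anti lam hxk))
    · intro hxk
      have hPx : j < partFn lam x := by
        by_contra hc
        have hkx : k ≤ x := Nat.find_le hc
        omega
      exact ⟨lt_of_lt_of_le hxk hkn, hPx⟩
  have : conjFn lam j = k := by rw [conjFn, hfil, Finset.card_range]
  rw [this]
  constructor
  · intro hik
    by_contra hc
    have hki : k ≤ i := Nat.find_le hc
    omega
  · intro hPi
    by_contra hik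
    push_neg at hik
    exact hkspec (lt_of_lt_of_le hPi (partFn_anti lam hik))

lemma partFn_sum {n : ℕ} (lam : n.Partition) : ∑ i ∈ Finset.range n, partFn lam i = n := by
  have hlen := sortedParts_length_le lam
  have key : ∀ k, ∑ i ∈ Finset.range k, partFn lam i = ((sortedParts lam).take k).sum := by
    intro k
    induction k with
    | zero => simp
    | succ k ih =>
      rw [Finset.sum_range_succ, ih]
      rcases lt_or_ge k (sortedParts lam).length with h | h
      · rw [List.sum_take_succ _ _ h, partFn, List.getD_eq_getElem _ _ h]
      · rw [List.take_of_length_le h, List.take_of_length_le (by omega),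
          partFn, List.getD_eq_default _ _ h, add_zero]
  rw [key n, List.take_of_length_le hlen, sortedParts_sum]

lemma hIco {N : ℕ} (lam : N.Partition) (a b j : ℕ) (hb : b ≤ conjFn lam j) :
    (b - a) * (j + 1) ≤ ∑ i ∈ Finset.Ico a b, partFn lam i := by
  have h := Finset.card_nsmul_le_sum (Finset.Ico a b) (partFn lam) (j + 1) ?_
  · simpa [Nat.card_Ico, smul_eq_mul] using h
  · intro i hi
    rw [Finset.mem_Ico] at hi
    have hiN : i < N := lt_of_lt_of_le (lt_of_lt_of_le hi.2 hb) (conjFn_le lam j)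
    exact (lt_conjFn_iff lam j hiN).mp (lt_of_lt_of_le hi.2 hb)

lemma no_two_hooks {m n : ℕ} (hmn : n < m) (lam : (m + n).Partition) {i1 j1 i2 j2 : ℕ}
    (h1i : i1 < m + n) (h2i : i2 < m + n)
    (hv1 : j1 < partFn lam i1) (hv2 : j2 < partFn lam i2)
    (he1 : partFn lam i1 + conjFn lam j1 = m + i1 + j1 + 1)
    (he2 : partFn lam i2 + conjFn lam j2 = m + i2 + j2 + 1)
    (hlt : i1 < i2) : False := by
  set f := partFn lam with hf
  set c := conjFn lam with hc
  have hf12 : f i2 ≤ f i1 := partFn_anti lam hlt.le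
  have hj21 : j2 < j1 := by
    by_contra hcon
    push_neg at hcon
    have : c j2 ≤ c j1 := conjFn_anti lam hcon
    omega
  have hic1 : i1 < c j1 := (lt_conjFn_iff lam j1 h1i).mpr hv1
  have hic2 : i2 < c j2 := (lt_conjFn_iff lam j2 h2i).mpr hv2
  have hcle1 : c j1 ≤ m + n := conjFn_le lam j1
  have hcle2 : c j2 ≤ m + n := conjFn_le lam j2
  have hsum := partFn_sum lam
  rcases le_or_gt (c j1) i2 with hcase | hcase
  · -- disjoint hooks
    have hdisj : Disjoint (Finset.Ico i1 (c j1)) (Finset.Ico i2 (c j2)) := by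
      rw [Finset.disjoint_left]
      intro x hx1 hx2
      rw [Finset.mem_Ico] at hx1 hx2
      omega
    have hsub : Finset.Ico i1 (c j1) ∪ Finset.Ico i2 (c j2) ⊆ Finset.range (m + n) := by
      intro x hx
      rw [Finset.mem_union, Finset.mem_Ico, Finset.mem_Ico] at hx
      rw [Finset.mem_range]
      omega
    have hle : ∑ x ∈ Finset.Ico i1 (c j1) ∪ Finset.Ico i2 (c j2), f x ≤ m + n := by
      rw [← hsum]
      exact Finset.sum_le_sum_of_subset hsub
    rw [Finset.sum_union hdisj] at hle
    have hs1 : f i1 + (c j1 - (i1 + 1)) * (j1 + 1) ≤ ∑ x ∈ Finset.Ico i1 (c j1), f x := by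
      rw [Finset.sum_eq_sum_Ico_succ_bot hic1]
      exact Nat.add_le_add_left (hIco lam (i1 + 1) (c j1) j1 le_rfl) _
    have hs2 : f i2 + (c j2 - (i2 + 1)) * (j2 + 1) ≤ ∑ x ∈ Finset.Ico i2 (c j2), f x := by
      rw [Finset.sum_eq_sum_Ico_succ_bot hic2]
      exact Nat.add_le_add_left (hIco lam (i2 + 1) (c j2) j2 le_rfl) _
    have e1 : c j1 - (i1 + 1) ≤ (c j1 - (i1 + 1)) * (j1 + 1) := Nat.le_mul_of_pos_right _ (by omega)
    have e2 : c j2 - (i2 + 1) ≤ (c j2 - (i2 + 1)) * (j2 + 1) := Nat.le_mul_of_pos_right _ (by omega)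
    obtain ⟨A, hA⟩ : ∃ A, (c j1 - (i1 + 1)) * (j1 + 1) = A := ⟨_, rfl⟩
    obtain ⟨B, hB⟩ : ∃ B, (c j2 - (i2 + 1)) * (j2 + 1) = B := ⟨_, rfl⟩
    rw [hA] at hs1 e1
    rw [hB] at hs2 e2
    omega
  · -- overlapping case
    have hcc : c j1 ≤ c j2 := conjFn_anti lam hj21.le
    have hsub : Finset.Ico i1 (c j2) ⊆ Finset.range (m + n) := by
      intro x hx
      rw [Finset.mem_Ico] at hx
      rw [Finset.mem_range]
      omega
    have hle : ∑ x ∈ Finset.Ico i1 (c j2), f x ≤ m + n := by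
      rw [← hsum]
      exact Finset.sum_le_sum_of_subset hsub
    have split1 : ∑ x ∈ Finset.Ico i1 (c j1), f x + ∑ x ∈ Finset.Ico (c j1) (c j2), f x
        = ∑ x ∈ Finset.Ico i1 (c j2), f x :=
      Finset.sum_Ico_consecutive _ (by omega) hcc
    have split2 : ∑ x ∈ Finset.Ico i1 (c j1), f x
        = f i1 + ∑ x ∈ Finset.Ico (i1 + 1) (c j1), f x :=
      Finset.sum_eq_sum_Ico_succ_bot hic1 _
    have split3 : ∑ x ∈ Finset.Ico (i1 + 1) i2, f x + ∑ x ∈ Finset.Ico i2 (c j1), f x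
        = ∑ x ∈ Finset.Ico (i1 + 1) (c j1), f x :=
      Finset.sum_Ico_consecutive _ (by omega) (by omega)
    have split4 : ∑ x ∈ Finset.Ico i2 (c j1), f x
        = f i2 + ∑ x ∈ Finset.Ico (i2 + 1) (c j1), f x :=
      Finset.sum_eq_sum_Ico_succ_bot hcase _
    have b1 : (i2 - (i1 + 1)) * (j1 + 1) ≤ ∑ x ∈ Finset.Ico (i1 + 1) i2, f x :=
      hIco lam _ _ _ hcase.le
    have b2 : (c j1 - (i2 + 1)) * (j1 + 1) ≤ ∑ x ∈ Finset.Ico (i2 + 1) (c j1), f x :=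
      hIco lam _ _ _ le_rfl
    have b3 : (c j2 - c j1) * (j2 + 1) ≤ ∑ x ∈ Finset.Ico (c j1) (c j2), f x :=
      hIco lam _ _ _ le_rfl
    have e1 : i2 - (i1 + 1) ≤ (i2 - (i1 + 1)) * (j1 + 1) := Nat.le_mul_of_pos_right _ (by omega)
    have e2 : (c j1 - (i2 + 1)) * 2 ≤ (c j1 - (i2 + 1)) * (j1 + 1) :=
      Nat.mul_le_mul_left _ (by omega)
    have e3 : c j2 - c j1 ≤ (c j2 - c j1) * (j2 + 1) := Nat.le_mul_of_pos_right _ (by omega)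
    obtain ⟨A, hA⟩ : ∃ A, (i2 - (i1 + 1)) * (j1 + 1) = A := ⟨_, rfl⟩
    obtain ⟨B, hB⟩ : ∃ B, (c j1 - (i2 + 1)) * (j1 + 1) = B := ⟨_, rfl⟩
    obtain ⟨C, hC⟩ : ∃ C, (c j2 - c j1) * (j2 + 1) = C := ⟨_, rfl⟩
    rw [hA] at b1 e1
    rw [hB] at b2 e2
    rw [hC] at b3 e3
    omega


lemma hook_eq {N : ℕ} (lam : N.Partition) {i j m : ℕ} (hiN : i < N)
    (hj : j < partFn lam i) (hm : hookLength lam i j = m) :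
    partFn lam i + conjFn lam j = m + i + j + 1 := by
  have hic : i < conjFn lam j := (lt_conjFn_iff lam j hiN).mpr hj
  unfold hookLength at hm
  omega


/-- If `m > n` and `lam` is a partition of `m + n`, then at most one cell of
`lam` has hook length `m`. -/
theorem at_most_one_hook_of_large_length (m n : ℕ) (hmn : n < m)
    (lam : (m + n).Partition) :
    (((Finset.range (m + n)) ×ˢ (Finset.range (m + n))).filter
      (fun p => p.2 < partFn lam p.1 ∧ hookLength lam p.1 p.2 = m)).card ≤ 1 := by
  rw [Finset.card_le_one]
  intro p hp q hq
  simp only [Finset.mem_filter, Finset.mem_product, Finset.mem_range] at hp hq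
  obtain ⟨⟨hp1, hp2⟩, hpv, hph⟩ := hp
  obtain ⟨⟨hq1, hq2⟩, hqv, hqh⟩ := hq
  have hep := hook_eq lam hp1 hpv hph
  have heq := hook_eq lam hq1 hqv hqh
  rcases lt_trichotomy p.1 q.1 with h | h | h
  · exact absurd (no_two_hooks hmn lam hp1 hq1 hpv hqv hep heq h) (fun x => x)
  · have h2 : p.2 = q.2 := by
      rcases lt_trichotomy p.2 q.2 with h2 | h2 | h2
      · have := conjFn_anti lam h2.le
        rw [h] at hep
        omega
      · exact h2
      · have := conjFn_anti lam h2.le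
        rw [h] at hep
        omega
    exact Prod.ext h h2
  · exact absurd (no_two_hooks hmn lam hq1 hp1 hqv hpv heq hep h) (fun x => x)
end

section
/- Every sd-partition μ = (a_1,...,a_k) of n is a unique-path partition: for every partition λ of n there is at most one sequence λ = λ_0, λ_1, ..., λ_k = ∅ of partitions where λ_i is obtained from λ_{i-1} by removing a hook of length a_i. -/
/-- A list of parts is *strongly decreasing* if each entry (except possibly the
last) is strictly greater than the sum of all later entries. -/
def StronglyDecreasing : List ℕ → Prop
  | [] => True
  | a :: r => (r = [] ∨ r.sum < a) ∧ StronglyDecreasing r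

/-- The size of the partition with beta-set `X`, as an integer. -/
def szZ (X : Finset ℕ) : ℤ :=
  (∑ x ∈ X, (x : ℤ)) - ∑ i ∈ Finset.range X.card, (i : ℤ)

lemma sum_range_card_le (X : Finset ℕ) :
    ∑ i ∈ Finset.range X.card, i ≤ ∑ x ∈ X, x := by
  obtain ⟨n, h⟩ : ∃ n, X.card = n := ⟨_, rfl⟩
  induction n generalizing X with
  | zero => simp [Finset.card_eq_zero.mp h]
  | succ k ih =>
    have hne : X.Nonempty := Finset.card_pos.mp (by omega)
    set M := X.max' hne with hMdef
    have hMmem : M ∈ X := X.max'_mem hne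
    have hM : X ⊆ Finset.range (M + 1) := fun y hy =>
      Finset.mem_range.mpr (Nat.lt_succ_of_le (X.le_max' y hy))
    have hcard : X.card ≤ M + 1 := by
      calc X.card ≤ (Finset.range (M + 1)).card := Finset.card_le_card hM
        _ = M + 1 := Finset.card_range _
    have he : (X.erase M).card = k := by
      rw [Finset.card_erase_of_mem hMmem]; omega
    have h1 := ih (X.erase M) he
    rw [he] at h1
    have hsum : ∑ x ∈ X.erase M, x + M = ∑ x ∈ X, x :=
      Finset.sum_erase_add _ _ hMmem
    rw [h, Finset.sum_range_succ]
    omega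

lemma szZ_nonneg (X : Finset ℕ) : 0 ≤ szZ X := by
  have := sum_range_card_le X
  unfold szZ
  have h2 := (Nat.cast_le (α := ℤ)).mpr this
  push_cast at h2
  linarith

lemma hook_mem_card {X : Finset ℕ} {a x : ℕ} (hx : x ∈ X) (hax : a ≤ x)
    (hgap : x - a ∉ X) : (insert (x - a) (X.erase x)).card = X.card := by
  rw [Finset.card_insert_of_notMem (fun h => hgap (Finset.mem_of_mem_erase h)),
    Finset.card_erase_of_mem hx]
  have : 1 ≤ X.card := Finset.card_pos.mpr ⟨x, hx⟩
  omega

lemma szZ_hook {X : Finset ℕ} {a x : ℕ} (hx : x ∈ X) (hax : a ≤ x)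
    (hgap : x - a ∉ X) : szZ (insert (x - a) (X.erase x)) = szZ X - a := by
  unfold szZ
  rw [hook_mem_card hx hax hgap,
    Finset.sum_insert (fun h => hgap (Finset.mem_of_mem_erase h))]
  have hsum : (∑ y ∈ X.erase x, (y : ℤ)) + x = ∑ y ∈ X, (y : ℤ) :=
    Finset.sum_erase_add _ _ hx
  have : ((x - a : ℕ) : ℤ) = (x : ℤ) - a := by omega
  rw [this]
  linarith

lemma legSums_ne_zero_sum {l : List ℕ} :
    ∀ {X : Finset ℕ}, legSums X l ≠ 0 → szZ X = l.sum := by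
  induction l with
  | nil =>
    intro X h
    rw [legSums] at h
    split at h
    · rename_i hX
      rw [hX]
      simp [szZ, Finset.card_range]
    · exact absurd rfl h
  | cons a r ih =>
    intro X h
    rw [legSums] at h
    have hcard : Multiset.card (legSums X (a :: r)) ≠ 0 := by
      rw [legSums]
      intro hc
      exact h (Multiset.card_eq_zero.mp hc)
    rw [legSums, Multiset.card_bind] at hcard
    have hsum : (∑ x ∈ X.filter (fun x => a ≤ x ∧ x - a ∉ X),
        Multiset.card (legSums (insert (x - a) (X.erase x)) r)) ≠ 0 := by
      intro hc
      apply hcard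
      rw [← Finset.sum_map_val] at hc
      simpa [Function.comp] using hc
    obtain ⟨x, hxS, hxne⟩ := Finset.exists_ne_zero_of_sum_ne_zero hsum
    have hmem := Finset.mem_filter.mp hxS
    have hxX := hmem.1
    have hax := hmem.2.1
    have hgap := hmem.2.2
    have hne : legSums (insert (x - a) (X.erase x)) r ≠ 0 :=
      fun hz => hxne (by rw [hz]; rfl)
    have h1 := ih hne
    have h2 := szZ_hook hxX hax hgap
    rw [List.sum_cons, Nat.cast_add]
    omega

lemma numPaths_le_one (l : List ℕ) (hsd : StronglyDecreasing l) :
    ∀ X : Finset ℕ, numPaths X l ≤ 1 := by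
  induction l with
  | nil =>
    intro X
    unfold numPaths legSums
    split <;> simp
  | cons a r ih =>
    intro X
    obtain ⟨hhead, hr⟩ := hsd
    unfold numPaths
    rw [legSums, Multiset.card_bind]
    set S := X.filter (fun x => a ≤ x ∧ x - a ∉ X) with hS
    have hrw : ((S.val.map (Multiset.card ∘ fun x =>
        (legSums (insert (x - a) (X.erase x)) r).map (fun L => legLen X a x + L)))).sum
        = ∑ x ∈ S, Multiset.card (legSums (insert (x - a) (X.erase x)) r) := by
      rw [← Finset.sum_map_val]
      simp [Function.comp]
    rw [hrw]
    set c : ℕ → ℕ := fun x => Multiset.card (legSums (insert (x - a) (X.erase x)) r) with hc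
    -- restrict to nonzero terms
    rw [← Finset.sum_filter_ne_zero]
    set T := S.filter (fun x => c x ≠ 0) with hT
    -- each term is at most 1
    have hterm : ∀ x ∈ T, c x ≤ 1 := fun x _ => ih hr _
    -- T has at most one element
    have hT1 : T.card ≤ 1 := by
      rw [Finset.card_le_one]
      intro x hx y hy
      by_contra hne
      obtain ⟨hxS, hxne⟩ := Finset.mem_filter.mp hx
      obtain ⟨hyS, hyne⟩ := Finset.mem_filter.mp hy
      have hmemx := Finset.mem_filter.mp hxS
      have hxX := hmemx.1
      have hax := hmemx.2.1
      have hxgap := hmemx.2.2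
      have hmemy := Finset.mem_filter.mp hyS
      have hyX := hmemy.1
      have hay := hmemy.2.1
      have hygap := hmemy.2.2
      have hapos : 0 < a := by
        rcases Nat.eq_zero_or_pos a with h0 | h0
        · subst h0; simp at hxgap; exact absurd hxX hxgap
        · exact h0
      -- from the path at x : szZ X = a + r.sum
      have hxpath : legSums (insert (x - a) (X.erase x)) r ≠ 0 :=
        fun hz => hxne (by rw [hc]; simp [hz])
      have hsz : szZ X = (a : ℤ) + (r.sum : ℤ) := by
        have h1 := legSums_ne_zero_sum hxpath
        have h2 := szZ_hook hxX hax hxgap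
        rw [h1] at h2
        omega
      -- y is still an a-hook in X₁ = insert (x-a) (X.erase x)
      set X1 := insert (x - a) (X.erase x) with hX1
      have hyX1 : y ∈ X1 :=
        Finset.mem_insert_of_mem (Finset.mem_erase.mpr ⟨fun h => hne h.symm, hyX⟩)
      have hygap1 : y - a ∉ X1 := by
        intro hmem
        rcases Finset.mem_insert.mp hmem with h | h
        · exact hne (by omega)
        · exact hygap (Finset.mem_of_mem_erase h)
      have hsz1 := szZ_hook hyX1 hay hygap1
      have hsz0 := szZ_hook hxX hax hxgap
      have hpos := szZ_nonneg (insert (y - a) (X1.erase y))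
      rw [hsz1, hsz0] at hpos
      -- so 2a ≤ szZ X = a + r.sum, i.e. a ≤ r.sum
      have hale : (a : ℤ) ≤ (r.sum : ℤ) := by omega
      rcases hhead with hnil | hlt
      · subst hnil; simp at hale; omega
      · have : (r.sum : ℤ) < (a : ℤ) := by exact_mod_cast hlt
        omega
    calc ∑ x ∈ T, c x ≤ ∑ _x ∈ T, 1 := Finset.sum_le_sum hterm
      _ = T.card := by simp
      _ ≤ 1 := hT1

/-- Every sd-partition `μ` of `n` is a unique-path partition: for every
partition `lam` of `n` there is at most one way to successively remove hooks
of lengths `a₁, a₂, …` (the parts of `μ`) from `lam`, ending at the empty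
partition. -/
theorem sd_partition_is_unique_path (n : ℕ) (μ : n.Partition)
    (hsd : StronglyDecreasing (sortedParts μ)) (lam : n.Partition) :
    numPaths (betaSet (sortedParts lam)) (sortedParts μ) ≤ 1 :=
  numPaths_le_one _ hsd _
end

section
/- Let s(n) denote the number of sd-partitions of n (partitions (a_1,...,a_k) with a_i > a_{i+1}+...+a_k for all i < k), with s(0) = 1. Then s(n) = Σ_{i=0}^{⌊(n-1)/2⌋} s(i) for all n ≥ 1. -/
/-- `s n` is the number of strongly decreasing (sd-)partitions of `n`
(so `s 0 = 1`, counting the empty partition). -/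
noncomputable def s (n : ℕ) : ℕ :=
  Nat.card {μ : n.Partition // StronglyDecreasing (sortedParts μ)}

namespace SDAux

lemma coe_sortedParts {n : ℕ} (μ : n.Partition) :
    ((sortedParts μ) : Multiset ℕ) = μ.parts := by
  rw [sortedParts, Multiset.coe_reverse, Multiset.sort_eq]

lemma sortedParts_sum {n : ℕ} (μ : n.Partition) : (sortedParts μ).sum = n := by
  have := congrArg Multiset.sum (coe_sortedParts μ)
  simpa [μ.parts_sum] using this

lemma mem_sortedParts {n : ℕ} {μ : n.Partition} {a : ℕ} :
    a ∈ sortedParts μ ↔ a ∈ μ.parts := by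
  rw [← coe_sortedParts μ]; simp

lemma sortedParts_sorted {n : ℕ} (μ : n.Partition) :
    (sortedParts μ).Pairwise (· ≥ ·) := by
  have h := Multiset.pairwise_sort μ.parts (· ≤ ·)
  exact List.pairwise_reverse.2 h

lemma sortedParts_eq {n : ℕ} (μ : n.Partition) (l : List ℕ) (hl : l.Pairwise (· ≥ ·))
    (h : μ.parts = (l.reverse : Multiset ℕ)) : sortedParts μ = l := by
  have hrev : (l.reverse).Pairwise (· ≤ ·) := List.pairwise_reverse.2 hl
  have hs : Multiset.sort μ.parts (· ≤ ·) = l.reverse :=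
    List.Perm.eq_of_pairwise'
      (Multiset.pairwise_sort _ _) hrev
      (Multiset.coe_eq_coe.1 (by rw [Multiset.sort_eq, h]))
  simp [sortedParts, hs]

lemma sd_tail : ∀ {l : List ℕ}, StronglyDecreasing l → StronglyDecreasing l.tail
  | [], h => h
  | _ :: _, h => h.2

lemma cons_tail {n : ℕ} (hn : 1 ≤ n) (μ : n.Partition) :
    sortedParts μ = (n - (sortedParts μ).tail.sum) :: (sortedParts μ).tail := by
  cases h : sortedParts μ with
  | nil =>
      have hs := sortedParts_sum μ
      rw [h] at hs; simp at hs; omega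
  | cons a r =>
      have hs := sortedParts_sum μ
      rw [h] at hs
      simp only [List.sum_cons] at hs
      simp only [List.tail_cons, List.cons.injEq, and_true]
      omega

lemma two_mul_le {n i : ℕ} (hi : i ≤ (n - 1) / 2) : 2 * i ≤ n - 1 := by
  have := (Nat.le_div_iff_mul_le (by norm_num)).1 hi
  omega

lemma tail_sum_le {n : ℕ} (hn : 1 ≤ n) (μ : n.Partition)
    (hμ : StronglyDecreasing (sortedParts μ)) :
    (sortedParts μ).tail.sum ≤ (n - 1) / 2 := by
  have hc := cons_tail hn μ
  have hsd := hμ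
  rw [hc] at hsd
  have hs := sortedParts_sum μ
  rw [hc] at hs
  simp only [List.sum_cons] at hs
  rcases hsd.1 with h | h
  · simp [h]
  · rw [Nat.le_div_iff_mul_le (by norm_num)]
    omega

lemma part_le {i : ℕ} (ν : i.Partition) {x : ℕ} (hx : x ∈ ν.parts) : x ≤ i := by
  rw [← ν.parts_sum]
  exact Multiset.single_le_sum (fun _ _ => Nat.zero_le _) x hx

/-- The partition of the tail sum obtained by removing the largest part. -/
def tailPartition {n : ℕ} (μ : n.Partition) : ((sortedParts μ).tail.sum).Partition where
  parts := ((sortedParts μ).tail : Multiset ℕ)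
  parts_pos := fun hi =>
    μ.parts_pos (mem_sortedParts.1 (List.mem_of_mem_tail (by simpa using hi)))
  parts_sum := by simp

lemma sortedParts_tailPartition {n : ℕ} (μ : n.Partition) :
    sortedParts (tailPartition μ) = (sortedParts μ).tail := by
  apply sortedParts_eq
  · exact (sortedParts_sorted μ).tail
  · show ((sortedParts μ).tail : Multiset ℕ) = _
    rw [Multiset.coe_reverse]

/-- The partition of `n` obtained by adding the part `n - i`. -/
def consPartition (n i : ℕ) (hn : 1 ≤ n) (hi : i ≤ (n - 1) / 2) (ν : i.Partition) :
    n.Partition where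
  parts := (n - i) ::ₘ ν.parts
  parts_pos := by
    intro j hj
    rcases Multiset.mem_cons.1 hj with rfl | hj
    · have := two_mul_le hi; omega
    · exact ν.parts_pos hj
  parts_sum := by
    have := two_mul_le hi
    rw [Multiset.sum_cons, ν.parts_sum]
    omega

lemma sortedParts_consPartition (n i : ℕ) (hn : 1 ≤ n) (hi : i ≤ (n - 1) / 2)
    (ν : i.Partition) :
    sortedParts (consPartition n i hn hi ν) = (n - i) :: sortedParts ν := by
  have h2 := two_mul_le hi
  apply sortedParts_eq
  · rw [List.pairwise_cons]
    refine ⟨fun b hb => ?_, sortedParts_sorted ν⟩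
    have : b ≤ i := part_le ν (mem_sortedParts.1 hb)
    omega
  · show (n - i) ::ₘ ν.parts = _
    rw [Multiset.coe_reverse, ← Multiset.cons_coe, coe_sortedParts]

lemma sigma_eq {n : ℕ} {i j : Fin ((n - 1) / 2 + 1)}
    (x : {ν : (i : ℕ).Partition // StronglyDecreasing (sortedParts ν)})
    (y : {ν : (j : ℕ).Partition // StronglyDecreasing (sortedParts ν)})
    (h : x.1.parts = y.1.parts) :
    (⟨i, x⟩ : Σ k : Fin ((n - 1) / 2 + 1),
        {ν : (k : ℕ).Partition // StronglyDecreasing (sortedParts ν)}) = ⟨j, y⟩ := by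
  have hij : i = j := Fin.ext (by rw [← x.1.parts_sum, ← y.1.parts_sum, h])
  subst hij
  exact congrArg _ (Subtype.ext (Nat.Partition.ext h))

/-- The key bijection removing / re-adding the largest part. -/
noncomputable def sdEquiv (n : ℕ) (hn : 1 ≤ n) :
    {μ : n.Partition // StronglyDecreasing (sortedParts μ)} ≃
      Σ i : Fin ((n - 1) / 2 + 1),
        {ν : (i : ℕ).Partition // StronglyDecreasing (sortedParts ν)} where
  toFun μp :=
    ⟨⟨(sortedParts μp.1).tail.sum, Nat.lt_succ_of_le (tail_sum_le hn μp.1 μp.2)⟩,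
      ⟨tailPartition μp.1, by
        rw [sortedParts_tailPartition]
        exact sd_tail μp.2⟩⟩
  invFun x :=
    ⟨consPartition n x.1.1 hn (Nat.lt_succ_iff.1 x.1.2) x.2.1, by
      rw [sortedParts_consPartition]
      refine ⟨Or.inr ?_, x.2.2⟩
      rw [sortedParts_sum]
      have := two_mul_le (Nat.lt_succ_iff.1 x.1.2)
      omega⟩
  left_inv := by
    rintro ⟨μ, hμ⟩
    apply Subtype.ext
    apply Nat.Partition.ext
    show (n - (sortedParts μ).tail.sum) ::ₘ ((sortedParts μ).tail : Multiset ℕ) = μ.parts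
    rw [← coe_sortedParts μ]
    conv_rhs => rw [cons_tail hn μ]
    rw [Multiset.cons_coe]
  right_inv := by
    rintro ⟨⟨i, hi⟩, ν, hν⟩
    apply sigma_eq
    show ((sortedParts (consPartition n i hn (Nat.lt_succ_iff.1 hi) ν)).tail : Multiset ℕ) = ν.parts
    rw [sortedParts_consPartition]
    simp only [List.tail_cons]
    exact coe_sortedParts ν

lemma card_sigma' {k : ℕ} (B : Fin k → Type*) [∀ i, Finite (B i)] :
    Nat.card (Σ i, B i) = ∑ i, Nat.card (B i) := by
  letI := fun i => Fintype.ofFinite (B i)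
  simp [Nat.card_eq_fintype_card, Fintype.card_sigma]

end SDAux

/-- The number `s n` of sd-partitions of `n` satisfies
`s(n) = Σ_{i=0}^{⌊(n-1)/2⌋} s(i)` for all `n ≥ 1`. -/
theorem sd_count_recurrence (n : ℕ) (hn : 1 ≤ n) :
    s n = ∑ i ∈ Finset.range ((n - 1) / 2 + 1), s i := by
  rw [s, Nat.card_congr (SDAux.sdEquiv n hn), SDAux.card_sigma',
    ← Fin.sum_univ_eq_sum_range (fun i => s i)]
  rfl
end

section
/- With s(n) the number of sd-partitions of n (and s(0)=1), one has s(2k-1) = s(2k) for all k ≥ 1. -/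
namespace SDaux

lemma coe_sortedParts {n : ℕ} (μ : n.Partition) :
    (↑(sortedParts μ) : Multiset ℕ) = μ.parts := by
  rw [sortedParts, Multiset.coe_reverse, Multiset.sort_eq]

lemma sorted_sortedParts {n : ℕ} (μ : n.Partition) :
    (sortedParts μ).Pairwise (· ≥ ·) := by
  rw [sortedParts, List.pairwise_reverse]
  exact Multiset.pairwise_sort _ (· ≤ ·)

lemma sum_sortedParts {n : ℕ} (μ : n.Partition) : (sortedParts μ).sum = n := by
  have h := congrArg Multiset.sum (coe_sortedParts μ)
  rwa [Multiset.sum_coe, μ.parts_sum] at h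

lemma pos_of_mem_sortedParts {n : ℕ} (μ : n.Partition) {x : ℕ}
    (hx : x ∈ sortedParts μ) : 0 < x := by
  apply μ.parts_pos
  rw [← coe_sortedParts μ]
  exact_mod_cast hx

lemma sortedParts_eq {n : ℕ} (μ : n.Partition) (l : List ℕ)
    (hl : l.Pairwise (· ≥ ·)) (h : μ.parts = ↑l) : sortedParts μ = l := by
  rw [sortedParts, h]
  have hs : Multiset.sort (↑l : Multiset ℕ) (· ≤ ·) = l.reverse := by
    apply fun hp h1 h2 => List.Perm.eq_of_pairwise' (r := (· ≤ ·)) h1 h2 hp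
    rotate_right
    · exact (Multiset.coe_eq_coe.mp (Multiset.sort_eq _ _)).trans l.reverse_perm.symm
    · exact Multiset.pairwise_sort _ _
    · rw [List.pairwise_reverse]; exact hl
  rw [hs, List.reverse_reverse]

lemma cons_headI_tail {n : ℕ} (μ : n.Partition) (hn : 1 ≤ n) :
    (sortedParts μ).headI :: (sortedParts μ).tail = sortedParts μ := by
  have hne : sortedParts μ ≠ [] := by
    intro h
    have := sum_sortedParts μ
    rw [h] at this
    simp at this
    omega
  cases h : sortedParts μ with
  | nil => exact absurd h hne
  | cons a r => rfl

lemma headI_add_tail_sum {n : ℕ} (μ : n.Partition) (hn : 1 ≤ n) :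
    (sortedParts μ).headI + (sortedParts μ).tail.sum = n := by
  have h := sum_sortedParts μ
  rw [← cons_headI_tail μ hn, List.sum_cons] at h
  exact h

lemma tail_le_headI {n : ℕ} (μ : n.Partition) (hn : 1 ≤ n) :
    ∀ x ∈ (sortedParts μ).tail, x ≤ (sortedParts μ).headI := by
  have h := sorted_sortedParts μ
  rw [← cons_headI_tail μ hn, List.pairwise_cons] at h
  exact h.1

lemma sd_head {n : ℕ} (μ : n.Partition) (hn : 1 ≤ n)
    (hμ : StronglyDecreasing (sortedParts μ)) :
    (sortedParts μ).tail = [] ∨ (sortedParts μ).tail.sum < (sortedParts μ).headI := by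
  rw [← cons_headI_tail μ hn] at hμ
  exact hμ.1

lemma sd_tail {n : ℕ} (μ : n.Partition) (hn : 1 ≤ n)
    (hμ : StronglyDecreasing (sortedParts μ)) :
    StronglyDecreasing (sortedParts μ).tail := by
  rw [← cons_headI_tail μ hn] at hμ
  exact hμ.2

/-- Build the partition of `m` whose parts are `b` together with the
non-largest parts of `μ`. -/
def retop {n : ℕ} (μ : n.Partition) (b m : ℕ) (hb : 0 < b)
    (hsum : b + (sortedParts μ).tail.sum = m) : m.Partition where
  parts := ↑(b :: (sortedParts μ).tail)
  parts_pos := by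
    intro i hi
    rw [Multiset.mem_coe, List.mem_cons] at hi
    rcases hi with rfl | hi
    · exact hb
    · exact pos_of_mem_sortedParts μ (List.mem_of_mem_tail hi)
  parts_sum := by rw [Multiset.sum_coe, List.sum_cons, hsum]

lemma sortedParts_retop {n : ℕ} (μ : n.Partition) (b m : ℕ) (hb : 0 < b)
    (hsum : b + (sortedParts μ).tail.sum = m)
    (hle : ∀ x ∈ (sortedParts μ).tail, x ≤ b) :
    sortedParts (retop μ b m hb hsum) = b :: (sortedParts μ).tail := by
  apply sortedParts_eq
  · rw [List.pairwise_cons]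
    exact ⟨hle, (sorted_sortedParts μ).tail⟩
  · rfl

lemma headI_large {k : ℕ} (hk : 1 ≤ k) (μ : (2 * k).Partition)
    (hμ : StronglyDecreasing (sortedParts μ)) :
    k + 1 ≤ (sortedParts μ).headI := by
  have h2 : 1 ≤ 2 * k := by omega
  have hsum := headI_add_tail_sum μ h2
  rcases sd_head μ h2 hμ with h | h
  · rw [h] at hsum; simp at hsum; omega
  · omega

/-- Add one to the largest part. -/
def up (k : ℕ) (hk : 1 ≤ k) (μ : (2 * k - 1).Partition)
    (hμ : StronglyDecreasing (sortedParts μ)) :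
    {ν : (2 * k).Partition // StronglyDecreasing (sortedParts ν)} := by
  have h1 : 1 ≤ 2 * k - 1 := by omega
  have hsum := headI_add_tail_sum μ h1
  refine ⟨retop μ ((sortedParts μ).headI + 1) (2 * k) (by omega) (by omega), ?_⟩
  rw [sortedParts_retop μ ((sortedParts μ).headI + 1) (2 * k) (by omega) (by omega)
    (fun x hx => le_trans (tail_le_headI μ h1 x hx) (by omega))]
  refine ⟨?_, sd_tail μ h1 hμ⟩
  rcases sd_head μ h1 hμ with h | h
  · exact Or.inl h
  · exact Or.inr (by omega)

/-- Subtract one from the largest part. -/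
def down (k : ℕ) (hk : 1 ≤ k) (μ : (2 * k).Partition)
    (hμ : StronglyDecreasing (sortedParts μ)) :
    {ν : (2 * k - 1).Partition // StronglyDecreasing (sortedParts ν)} := by
  have h2 : 1 ≤ 2 * k := by omega
  have hsum := headI_add_tail_sum μ h2
  have hbig := headI_large hk μ hμ
  refine ⟨retop μ ((sortedParts μ).headI - 1) (2 * k - 1) (by omega) (by omega), ?_⟩
  rw [sortedParts_retop μ ((sortedParts μ).headI - 1) (2 * k - 1) (by omega) (by omega)
    (fun x hx => by
      have := List.single_le_sum (fun y (_ : y ∈ (sortedParts μ).tail) => Nat.zero_le y) x hx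
      omega)]
  refine ⟨?_, sd_tail μ h2 hμ⟩
  rcases sd_head μ h2 hμ with h | h
  · exact Or.inl h
  · exact Or.inr (by omega)

lemma up_parts (k : ℕ) (hk : 1 ≤ k) (μ : (2 * k - 1).Partition)
    (hμ : StronglyDecreasing (sortedParts μ)) :
    (up k hk μ hμ).1.parts = ↑(((sortedParts μ).headI + 1) :: (sortedParts μ).tail) := rfl

lemma down_parts (k : ℕ) (hk : 1 ≤ k) (μ : (2 * k).Partition)
    (hμ : StronglyDecreasing (sortedParts μ)) :
    (down k hk μ hμ).1.parts = ↑(((sortedParts μ).headI - 1) :: (sortedParts μ).tail) := rfl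

lemma sortedParts_up (k : ℕ) (hk : 1 ≤ k) (μ : (2 * k - 1).Partition)
    (hμ : StronglyDecreasing (sortedParts μ)) :
    sortedParts (up k hk μ hμ).1 = ((sortedParts μ).headI + 1) :: (sortedParts μ).tail := by
  have h1 : 1 ≤ 2 * k - 1 := by omega
  apply sortedParts_eq
  · rw [List.pairwise_cons]
    exact ⟨fun x hx => le_trans (tail_le_headI μ h1 x hx) (by omega),
      (sorted_sortedParts μ).tail⟩
  · exact up_parts k hk μ hμ

lemma sortedParts_down (k : ℕ) (hk : 1 ≤ k) (μ : (2 * k).Partition)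
    (hμ : StronglyDecreasing (sortedParts μ)) :
    sortedParts (down k hk μ hμ).1 = ((sortedParts μ).headI - 1) :: (sortedParts μ).tail := by
  have h2 : 1 ≤ 2 * k := by omega
  have hsum := headI_add_tail_sum μ h2
  have hbig := headI_large hk μ hμ
  apply sortedParts_eq
  · rw [List.pairwise_cons]
    refine ⟨fun x hx => ?_, (sorted_sortedParts μ).tail⟩
    have := List.single_le_sum (fun y (_ : y ∈ (sortedParts μ).tail) => Nat.zero_le y) x hx
    omega
  · exact down_parts k hk μ hμ

end SDaux

open SDaux in
/-- The number `s n` of sd-partitions of `n` satisfies `s(2k-1) = s(2k)` for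
all `k ≥ 1`. -/
theorem sd_count_odd_eq_even (k : ℕ) (hk : 1 ≤ k) :
    s (2 * k - 1) = s (2 * k) := by
  have h1 : 1 ≤ 2 * k - 1 := by omega
  have h2 : 1 ≤ 2 * k := by omega
  apply Nat.card_congr
  refine
    { toFun := fun μ => up k hk μ.1 μ.2
      invFun := fun μ => down k hk μ.1 μ.2
      left_inv := ?_
      right_inv := ?_ }
  · rintro ⟨μ, hμ⟩
    apply Subtype.ext
    apply Nat.Partition.ext
    have h := down_parts k hk (up k hk μ hμ).1 (up k hk μ hμ).2
    rw [sortedParts_up k hk μ hμ] at h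
    rw [h]
    simp only [List.headI_cons, List.tail_cons, Nat.add_sub_cancel]
    rw [cons_headI_tail μ h1, coe_sortedParts]
  · rintro ⟨μ, hμ⟩
    apply Subtype.ext
    apply Nat.Partition.ext
    have h := up_parts k hk (down k hk μ hμ).1 (down k hk μ hμ).2
    rw [sortedParts_down k hk μ hμ] at h
    rw [h]
    have hbig := headI_large hk μ hμ
    have : (sortedParts μ).headI - 1 + 1 = (sortedParts μ).headI := by omega
    rw [List.headI_cons, List.tail_cons, this, cons_headI_tail μ h2, coe_sortedParts]
end

section
/- For all k ≥ 1, the quantity t(k) = s(2k-1) + s(2k) = 2·s(2k) equals the number of binary partitions of 2k, i.e., the number of partitions of 2k all of whose parts are powers of 2. -/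
namespace SDAux

/-- Multiset version of the strongly decreasing condition. -/
def MSD (t : Multiset ℕ) : Prop := ∀ a ∈ t, (t.filter (· ≤ a)).sum < 2 * a

lemma mem_le_sum {t : Multiset ℕ} {a : ℕ} (h : a ∈ t) : a ≤ t.sum :=
  Multiset.single_le_sum (fun x _ => Nat.zero_le x) a h

lemma sd_iff_msd_coe (l : List ℕ) (hs : l.Pairwise fun a b => b ≤ a)
    (hp : ∀ a ∈ l, 0 < a) : StronglyDecreasing l ↔ MSD ↑l := by
  induction l with
  | nil =>
    simp [StronglyDecreasing, MSD]
  | cons a r ih =>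
    rw [List.pairwise_cons] at hs
    obtain ⟨har, hr⟩ := hs
    have ha : 0 < a := hp a (by simp)
    have ih' := ih hr (fun b hb => hp b (List.mem_cons_of_mem _ hb))
    have hcoe : ((a :: r : List ℕ) : Multiset ℕ) = a ::ₘ (r : Multiset ℕ) := rfl
    have hfilterall : Multiset.filter (· ≤ a) (a ::ₘ (r : Multiset ℕ))
        = a ::ₘ (r : Multiset ℕ) := by
      rw [Multiset.filter_eq_self]
      intro x hx
      rcases Multiset.mem_cons.1 hx with rfl | hx
      · exact le_rfl
      · exact har x (by exact_mod_cast hx)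
    constructor
    · rintro ⟨h1, h2⟩
      intro b hb
      rw [hcoe] at hb ⊢
      rcases Multiset.mem_cons.1 hb with rfl | hb
      · rw [hfilterall, Multiset.sum_cons, Multiset.sum_coe]
        rcases h1 with rfl | h1
        · simpa using by omega
        · omega
      · have hb' : b ∈ r := by exact_mod_cast hb
        have hbr : b ≤ r.sum := by
          have := mem_le_sum (t := (r : Multiset ℕ)) (a := b) hb
          rwa [Multiset.sum_coe] at this
        have hba : b < a := by
          rcases h1 with rfl | h1
          · simp at hb'
          · omega
        rw [Multiset.filter_cons_of_neg (p := fun x => x ≤ b) _ (by omega : ¬ (a ≤ b))]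
        exact (ih'.1 h2) b hb
    · intro H
      have hmsdr : MSD (r : Multiset ℕ) := by
        intro b hb
        have hHb := H b (by rw [hcoe]; exact Multiset.mem_cons_of_mem hb)
        rw [hcoe] at hHb
        by_cases hab : a ≤ b
        · rw [Multiset.filter_cons_of_pos (p := fun x => x ≤ b) _ hab, Multiset.sum_cons] at hHb
          omega
        · rwa [Multiset.filter_cons_of_neg (p := fun x => x ≤ b) _ hab] at hHb
      have hHa := H a (by rw [hcoe]; exact Multiset.mem_cons_self a _)
      rw [hcoe, hfilterall, Multiset.sum_cons, Multiset.sum_coe] at hHa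
      exact ⟨Or.inr (by omega), ih'.2 hmsdr⟩

lemma sd_iff_msd {n : ℕ} (μ : n.Partition) :
    StronglyDecreasing (sortedParts μ) ↔ MSD μ.parts := by
  have hcoe : ((sortedParts μ : List ℕ) : Multiset ℕ) = μ.parts := by
    rw [sortedParts, Multiset.coe_reverse, Multiset.sort_eq]
  have hsorted : (sortedParts μ).Pairwise fun a b => b ≤ a := by
    rw [sortedParts, List.pairwise_reverse]
    exact Multiset.pairwise_sort μ.parts (· ≤ ·)
  have hpos : ∀ a ∈ sortedParts μ, 0 < a := by
    intro a haa
    apply μ.parts_pos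
    rw [← hcoe]
    exact_mod_cast haa
  rw [sd_iff_msd_coe _ hsorted hpos, hcoe]

/-- `s'` counts partitions with the multiset SD condition. -/
noncomputable def s' (n : ℕ) : ℕ := Nat.card {μ : n.Partition // MSD μ.parts}

lemma s_eq_s' (n : ℕ) : s n = s' n :=
  Nat.card_congr (Equiv.subtypeEquivRight fun μ => sd_iff_msd μ)

lemma exists_max (t : Multiset ℕ) (ht : t ≠ 0) : ∃ a ∈ t, ∀ b ∈ t, b ≤ a := by
  induction t using Multiset.induction_on with
  | empty => exact absurd rfl ht
  | cons a t ih =>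
    rcases eq_or_ne t 0 with rfl | ht'
    · exact ⟨a, Multiset.mem_cons_self a _, by simp⟩
    · obtain ⟨c, hc, hmax⟩ := ih ht'
      rcases le_total a c with h' | h'
      · refine ⟨c, Multiset.mem_cons_of_mem hc, ?_⟩
        intro b hb
        rcases Multiset.mem_cons.1 hb with rfl | hb
        · exact h'
        · exact hmax b hb
      · refine ⟨a, Multiset.mem_cons_self a _, ?_⟩
        intro b hb
        rcases Multiset.mem_cons.1 hb with rfl | hb
        · exact le_rfl
        · exact (hmax b hb).trans h'

/-- Insert a dominant part `n - m` into a partition of `m`. -/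
def insertPart {n : ℕ} (m : ℕ) (h : 2 * m < n) (ν : m.Partition) : n.Partition where
  parts := (n - m) ::ₘ ν.parts
  parts_pos := by
    intro i hi
    rcases Multiset.mem_cons.1 hi with rfl | hi
    · omega
    · exact ν.parts_pos hi
  parts_sum := by
    rw [Multiset.sum_cons, ν.parts_sum]
    omega

lemma msd_insertPart {n m : ℕ} (h : 2 * m < n) (ν : m.Partition) (hν : MSD ν.parts) :
    MSD ((insertPart m h ν).parts) := by
  have hle : ∀ b ∈ ν.parts, b ≤ m := fun b hb => ν.parts_sum ▸ mem_le_sum hb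
  intro a ha
  rcases Multiset.mem_cons.1 ha with rfl | ha
  · have hall : Multiset.filter (· ≤ n - m) ((n - m) ::ₘ ν.parts)
        = (n - m) ::ₘ ν.parts := by
      rw [Multiset.filter_eq_self]
      intro x hx
      rcases Multiset.mem_cons.1 hx with rfl | hx
      · exact le_rfl
      · have := hle x hx; omega
    show (Multiset.filter (· ≤ n - m) ((n - m) ::ₘ ν.parts)).sum < 2 * (n - m)
    rw [hall]
    have hps : ((n - m) ::ₘ ν.parts).sum = n := (insertPart m h ν).parts_sum
    omega
  · have hba : ¬ (n - m ≤ a) := by have := hle a ha; omega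
    show (Multiset.filter (· ≤ a) ((n - m) ::ₘ ν.parts)).sum < 2 * a
    rw [Multiset.filter_cons_of_neg (p := fun x => x ≤ a) _ hba]
    exact hν a ha

noncomputable def sigmaEquiv (n : ℕ) (hn : 0 < n) :
    (Σ m : Fin ((n + 1) / 2), {ν : ((m : ℕ)).Partition // MSD ν.parts})
      ≃ {μ : n.Partition // MSD μ.parts} := by
  have hlt : ∀ m : Fin ((n + 1) / 2), 2 * (m : ℕ) < n := fun m => by
    have := m.2; omega
  refine Equiv.ofBijective
    (fun x => ⟨insertPart (x.1 : ℕ) (hlt x.1) x.2.1, msd_insertPart (hlt x.1) x.2.1 x.2.2⟩)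
    ⟨?_, ?_⟩
  · rintro ⟨⟨m1, h1⟩, ν1, hν1⟩ ⟨⟨m2, h2⟩, ν2, hν2⟩ h
    have hparts : (n - m1) ::ₘ ν1.parts = (n - m2) ::ₘ ν2.parts :=
      congrArg Nat.Partition.parts (congrArg Subtype.val h)
    have hsum1 : ν1.parts.sum = m1 := ν1.parts_sum
    have hsum2 : ν2.parts.sum = m2 := ν2.parts_sum
    have hm : m1 = m2 := by
      by_contra hne
      have hmem : (n - m1) ∈ (n - m2) ::ₘ ν2.parts := hparts ▸ Multiset.mem_cons_self _ _
      rcases Multiset.mem_cons.1 hmem with heq | hmem2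
      · have := h1; have := h2
        have hb1 : 2 * m1 < n := by omega
        have hb2 : 2 * m2 < n := by omega
        omega
      · have := mem_le_sum hmem2
        have hb1 : 2 * m1 < n := by omega
        have hb2 : 2 * m2 < n := by omega
        omega
    subst hm
    have hν : ν1.parts = ν2.parts := by
      have := (Multiset.cons_inj_right (n - m1)).1 hparts
      exact this
    have : ν1 = ν2 := Nat.Partition.ext hν
    subst this
    have : hν1 = hν2 := rfl
    rfl
  · rintro ⟨μ, hμ⟩
    have hne : μ.parts ≠ 0 := by
      intro h0
      have := μ.parts_sum
      rw [h0] at this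
      simp at this
      omega
    obtain ⟨a, ha, hmax⟩ := exists_max μ.parts hne
    have h2a : n < 2 * a := by
      have := hμ a ha
      rwa [Multiset.filter_eq_self.2 (fun b hb => hmax b hb), μ.parts_sum] at this
    have han : a ≤ n := μ.parts_sum ▸ mem_le_sum ha
    have hasum : a + (μ.parts.erase a).sum = n := by
      rw [Multiset.sum_erase ha, μ.parts_sum]
    have hnotdup : a ∉ μ.parts.erase a := by
      intro hdup
      have hQ := hμ a ha
      rw [← Multiset.cons_erase ha, Multiset.filter_cons_of_pos (p := fun x => x ≤ a) _ le_rfl,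
        Multiset.sum_cons] at hQ
      have : a ≤ (Multiset.filter (· ≤ a) (μ.parts.erase a)).sum :=
        mem_le_sum (Multiset.mem_filter.2 ⟨hdup, le_rfl⟩)
      omega
    have hblt : ∀ b ∈ μ.parts.erase a, b < a := by
      intro b hb
      refine lt_of_le_of_ne (hmax b (Multiset.mem_of_mem_erase hb)) ?_
      rintro rfl
      exact hnotdup hb
    have hmsd : MSD (μ.parts.erase a) := by
      intro b hb
      have hfe : Multiset.filter (· ≤ b) μ.parts
          = Multiset.filter (· ≤ b) (μ.parts.erase a) := by
        conv_lhs => rw [← Multiset.cons_erase ha]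
        exact Multiset.filter_cons_of_neg (p := fun x => x ≤ b) _ (by have := hblt b hb; omega)
      have := hμ b (Multiset.mem_of_mem_erase hb)
      rwa [hfe] at this
    refine ⟨⟨⟨n - a, by omega⟩,
      ⟨⟨μ.parts.erase a, fun hi => μ.parts_pos (Multiset.mem_of_mem_erase hi),
        by show (μ.parts.erase a).sum = n - a; omega⟩, hmsd⟩⟩, ?_⟩
    apply Subtype.ext
    apply Nat.Partition.ext
    show (n - (n - a)) ::ₘ μ.parts.erase a = μ.parts
    rw [show n - (n - a) = a by omega, Multiset.cons_erase ha]

lemma s'_sum (n : ℕ) (hn : 0 < n) :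
    s' n = ∑ m ∈ Finset.range ((n + 1) / 2), s' m := by
  classical
  haveI : ∀ m : Fin ((n + 1) / 2), Fintype {ν : ((m : ℕ)).Partition // MSD ν.parts} :=
    fun _ => Fintype.ofFinite _
  rw [s', ← Nat.card_congr (sigmaEquiv n hn), Nat.card_eq_fintype_card,
    Fintype.card_sigma, ← Fin.sum_univ_eq_sum_range (fun m => s' m)]
  apply Finset.sum_congr rfl
  intro i _
  rw [s', Nat.card_eq_fintype_card]

/-- Number of binary partitions. -/
noncomputable def B (n : ℕ) : ℕ :=
  Nat.card {μ : n.Partition // ∀ a ∈ μ.parts, ∃ j : ℕ, a = 2 ^ j}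

lemma one_mem_of_odd {n : ℕ} (hn : n % 2 = 1) (μ : n.Partition)
    (hμ : ∀ a ∈ μ.parts, ∃ j : ℕ, a = 2 ^ j) : 1 ∈ μ.parts := by
  by_contra h
  have hdvd : 2 ∣ μ.parts.sum := by
    apply Multiset.dvd_sum
    intro x hx
    obtain ⟨j, rfl⟩ := hμ x hx
    cases j with
    | zero => exact absurd hx (by simpa using h)
    | succ j => exact dvd_pow_self 2 (Nat.succ_ne_zero j)
  rw [μ.parts_sum] at hdvd
  omega

/-- Add a part equal to 1. -/
def consOnePart {n : ℕ} (μ : n.Partition) : (n + 1).Partition where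
  parts := 1 ::ₘ μ.parts
  parts_pos := by
    intro i hi
    rcases Multiset.mem_cons.1 hi with rfl | hi
    · omega
    · exact μ.parts_pos hi
  parts_sum := by rw [Multiset.sum_cons, μ.parts_sum]; omega

lemma B_odd (k : ℕ) : B (2 * k + 1) = B (2 * k) := by
  classical
  refine (Nat.card_congr (Equiv.ofBijective
    (fun ν : {μ : (2 * k).Partition // ∀ a ∈ μ.parts, ∃ j : ℕ, a = 2 ^ j} =>
      (⟨consOnePart ν.1, ?_⟩ :
        {μ : (2 * k + 1).Partition // ∀ a ∈ μ.parts, ∃ j : ℕ, a = 2 ^ j}))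
    ⟨?_, ?_⟩)).symm
  · intro a ha
    rcases Multiset.mem_cons.1 ha with rfl | ha
    · exact ⟨0, rfl⟩
    · exact ν.2 a ha
  · rintro ⟨ν1, h1⟩ ⟨ν2, h2⟩ h
    apply Subtype.ext
    apply Nat.Partition.ext
    have hparts : (1 : ℕ) ::ₘ ν1.parts = 1 ::ₘ ν2.parts :=
      congrArg Nat.Partition.parts (congrArg Subtype.val h)
    exact (Multiset.cons_inj_right 1).1 hparts
  · rintro ⟨μ, hμ⟩
    have h1 : 1 ∈ μ.parts := one_mem_of_odd (by omega) μ hμ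
    have hsum : (1 : ℕ) + (μ.parts.erase 1).sum = 2 * k + 1 := by
      rw [Multiset.sum_erase h1, μ.parts_sum]
    refine ⟨⟨⟨μ.parts.erase 1, fun hi => μ.parts_pos (Multiset.mem_of_mem_erase hi),
      by omega⟩, fun a ha => hμ a (Multiset.mem_of_mem_erase ha)⟩, ?_⟩
    apply Subtype.ext
    apply Nat.Partition.ext
    show (1 : ℕ) ::ₘ μ.parts.erase 1 = μ.parts
    exact Multiset.cons_erase h1

lemma sum_map_double (t : Multiset ℕ) : (t.map (fun a => 2 * a)).sum = 2 * t.sum := by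
  induction t using Multiset.induction_on with
  | empty => simp
  | cons a t ih => simp [Multiset.sum_cons, ih, Nat.mul_add]

lemma B_step (k : ℕ) : B (2 * k + 2) = B (2 * k + 1) + B (k + 1) := by
  classical
  have e := Equiv.sumCompl
    (fun μ : {μ : (2 * k + 2).Partition // ∀ a ∈ μ.parts, ∃ j : ℕ, a = 2 ^ j} =>
      1 ∈ μ.1.parts)
  rw [B, ← Nat.card_congr e, Nat.card_sum]
  congr 1
  · -- partitions of 2k+2 containing 1 ≃ binary partitions of 2k+1
    refine Nat.card_congr (Equiv.ofBijective
      (fun ν : {μ : (2 * k + 1).Partition // ∀ a ∈ μ.parts, ∃ j : ℕ, a = 2 ^ j} =>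
        (⟨⟨consOnePart ν.1, ?_⟩, Multiset.mem_cons_self 1 _⟩ :
          {x : {μ : (2 * k + 2).Partition // ∀ a ∈ μ.parts, ∃ j : ℕ, a = 2 ^ j} //
            1 ∈ x.1.parts}))
      ⟨?_, ?_⟩).symm
    · intro a ha
      rcases Multiset.mem_cons.1 ha with rfl | ha
      · exact ⟨0, rfl⟩
      · exact ν.2 a ha
    · rintro ⟨ν1, h1⟩ ⟨ν2, h2⟩ h
      apply Subtype.ext
      apply Nat.Partition.ext
      have hparts : (1 : ℕ) ::ₘ ν1.parts = 1 ::ₘ ν2.parts :=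
        congrArg Nat.Partition.parts (congrArg Subtype.val (congrArg Subtype.val h))
      exact (Multiset.cons_inj_right 1).1 hparts
    · rintro ⟨⟨μ, hμ⟩, h1⟩
      have hsum : (1 : ℕ) + (μ.parts.erase 1).sum = 2 * k + 2 := by
        rw [Multiset.sum_erase h1, μ.parts_sum]
      refine ⟨⟨⟨μ.parts.erase 1, fun hi => μ.parts_pos (Multiset.mem_of_mem_erase hi),
        by omega⟩, fun a ha => hμ a (Multiset.mem_of_mem_erase ha)⟩, ?_⟩
      apply Subtype.ext
      apply Subtype.ext
      apply Nat.Partition.ext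
      show (1 : ℕ) ::ₘ μ.parts.erase 1 = μ.parts
      exact Multiset.cons_erase h1
  · -- partitions of 2k+2 not containing 1 ≃ binary partitions of k+1
    refine Nat.card_congr (Equiv.ofBijective
      (fun ν : {μ : (k + 1).Partition // ∀ a ∈ μ.parts, ∃ j : ℕ, a = 2 ^ j} =>
        (⟨⟨⟨ν.1.parts.map (fun a => 2 * a), ?_, ?_⟩, ?_⟩, ?_⟩ :
          {x : {μ : (2 * k + 2).Partition // ∀ a ∈ μ.parts, ∃ j : ℕ, a = 2 ^ j} //
            ¬ 1 ∈ x.1.parts}))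
      ⟨?_, ?_⟩).symm
    · intro i hi
      obtain ⟨a, ha, rfl⟩ := Multiset.mem_map.1 hi
      have := ν.1.parts_pos ha
      omega
    · rw [sum_map_double, ν.1.parts_sum]
      omega
    · intro a ha
      obtain ⟨b, hb, rfl⟩ := Multiset.mem_map.1 ha
      obtain ⟨j, rfl⟩ := ν.2 b hb
      exact ⟨j + 1, by rw [pow_succ]; ring⟩
    · intro hmem
      obtain ⟨b, hb, hb1⟩ := Multiset.mem_map.1 hmem
      have := ν.1.parts_pos hb
      omega
    · rintro ⟨ν1, h1⟩ ⟨ν2, h2⟩ h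
      apply Subtype.ext
      apply Nat.Partition.ext
      have hparts : ν1.parts.map (fun a => 2 * a) = ν2.parts.map (fun a => 2 * a) :=
        congrArg Nat.Partition.parts (congrArg Subtype.val (congrArg Subtype.val h))
      exact Multiset.map_injective (fun a b hab => by omega) hparts
    · rintro ⟨⟨μ, hμ⟩, h1⟩
      have heven : ∀ a ∈ μ.parts, 2 * (a / 2) = a := by
        intro a ha
        obtain ⟨j, rfl⟩ := hμ a ha
        cases j with
        | zero => exact absurd ha h1
        | succ j => rw [pow_succ]; omega
      have hrecon : (μ.parts.map (fun a => a / 2)).map (fun a => 2 * a) = μ.parts := by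
        rw [Multiset.map_map]
        calc μ.parts.map ((fun a => 2 * a) ∘ (fun a => a / 2))
            = μ.parts.map id := Multiset.map_congr rfl (fun a ha => heven a ha)
          _ = μ.parts := Multiset.map_id _
      have hsum : (μ.parts.map (fun a => a / 2)).sum = k + 1 := by
        have := sum_map_double (μ.parts.map (fun a => a / 2))
        rw [hrecon, μ.parts_sum] at this
        omega
      refine ⟨⟨⟨μ.parts.map (fun a => a / 2), ?_, hsum⟩, ?_⟩, ?_⟩
      · intro i hi
        obtain ⟨a, ha, rfl⟩ := Multiset.mem_map.1 hi
        have := heven a ha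
        have := μ.parts_pos ha
        omega
      · intro a ha
        obtain ⟨b, hb, rfl⟩ := Multiset.mem_map.1 ha
        obtain ⟨j, rfl⟩ := hμ b hb
        cases j with
        | zero => exact absurd hb h1
        | succ j => exact ⟨j, by rw [pow_succ]; omega⟩
      · apply Subtype.ext
        apply Subtype.ext
        apply Nat.Partition.ext
        exact hrecon

lemma B_zero : B 0 = 1 := by
  rw [B, Nat.card_eq_one_iff_unique]
  constructor
  · constructor
    rintro ⟨μ1, h1⟩ ⟨μ2, h2⟩
    apply Subtype.ext
    exact Subsingleton.elim μ1 μ2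
  · exact ⟨⟨default, by intro a ha; simp [Nat.Partition.partition_zero_parts] at ha⟩⟩

lemma s'_zero : s' 0 = 1 := by
  rw [s', Nat.card_eq_one_iff_unique]
  constructor
  · constructor
    rintro ⟨μ1, h1⟩ ⟨μ2, h2⟩
    apply Subtype.ext
    exact Subsingleton.elim μ1 μ2
  · exact ⟨⟨default, by intro a ha; simp [Nat.Partition.partition_zero_parts] at ha⟩⟩

lemma main : ∀ k, 1 ≤ k → 2 * s' (2 * k) = B (2 * k) := by
  intro k
  induction k using Nat.strong_induction_on with
  | _ k ih =>
    intro hk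
    rcases Nat.lt_or_ge k 2 with h2 | h2
    · have hk1 : k = 1 := by omega
      subst hk1
      have hs2 : s' 2 = 1 := by
        rw [s'_sum 2 (by omega)]
        norm_num [s'_zero]
      have hB1 : B 1 = 1 := by
        have := B_odd 0
        norm_num at this
        rw [this, B_zero]
      have hB2 : B 2 = 2 := by
        have := B_step 0
        norm_num at this
        rw [this, hB1]
      show 2 * s' 2 = B 2
      rw [hs2, hB2]
    · obtain ⟨j, rfl⟩ : ∃ j, k = j + 1 := ⟨k - 1, by omega⟩
      have hj : 1 ≤ j := by omega
      have hidx : 2 * (j + 1) = 2 * j + 2 := by ring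
      have hstep : s' (2 * j + 2) = s' (2 * j) + s' j := by
        rw [s'_sum (2 * j + 2) (by omega), s'_sum (2 * j) (by omega),
          show (2 * j + 2 + 1) / 2 = j + 1 by omega,
          show (2 * j + 1) / 2 = j by omega, Finset.sum_range_succ]
      have hBs : B (2 * j + 2) = B (2 * j) + B (j + 1) := by
        rw [B_step j, B_odd j]
      have hIH := ih j (by omega) hj
      have hQ : B (j + 1) = 2 * s' j := by
        rcases Nat.even_or_odd j with ⟨i, hi⟩ | ⟨i, hi⟩
        · have hji : j = 2 * i := by omega
        -- i ≥ 1 since j ≥ 1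
          subst hji
          have hi1 : 1 ≤ i := by omega
          have hBo : B (2 * i + 1) = B (2 * i) := B_odd i
          have := ih i (by omega) hi1
          omega
        · have hji : j = 2 * i + 1 := by omega
          subst hji
          have heq : s' (2 * i + 1) = s' (2 * i + 2) := by
            rw [s'_sum (2 * i + 1) (by omega), s'_sum (2 * i + 2) (by omega),
              show (2 * i + 1 + 1) / 2 = i + 1 by omega,
              show (2 * i + 2 + 1) / 2 = i + 1 by omega]
          have hmain := ih (i + 1) (by omega) (by omega)
          rw [show 2 * (i + 1) = 2 * i + 2 by ring] at hmain
          rw [show 2 * i + 1 + 1 = 2 * i + 2 by ring]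
          omega
      rw [hidx, hstep, hBs]
      omega

end SDAux

/-- For all `k ≥ 1`, the quantity `t(k) = s(2k-1) + s(2k) = 2·s(2k)` equals the
number of binary partitions of `2k`, i.e. the number of partitions of `2k` all
of whose parts are powers of `2`. -/
theorem sd_count_and_binary_partitions (k : ℕ) (hk : 1 ≤ k) :
    s (2 * k - 1) + s (2 * k) =
      Nat.card {μ : (2 * k).Partition // ∀ a ∈ μ.parts, ∃ j : ℕ, a = 2 ^ j} ∧
    2 * s (2 * k) =
      Nat.card {μ : (2 * k).Partition // ∀ a ∈ μ.parts, ∃ j : ℕ, a = 2 ^ j} := by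
  have hodd : SDAux.s' (2 * k - 1) = SDAux.s' (2 * k) := by
    rw [SDAux.s'_sum (2 * k - 1) (by omega), SDAux.s'_sum (2 * k) (by omega),
      show (2 * k - 1 + 1) / 2 = k by omega, show (2 * k + 1) / 2 = k by omega]
  have hmain := SDAux.main k hk
  constructor
  · show s (2 * k - 1) + s (2 * k) = SDAux.B (2 * k)
    rw [SDAux.s_eq_s', SDAux.s_eq_s', hodd, ← hmain]
    ring
  · show 2 * s (2 * k) = SDAux.B (2 * k)
    rw [SDAux.s_eq_s']
    exact hmain
end

section
/- Write n = 2^{r_1} + ... + 2^{r_t} in binary with r_1 > ... > r_t ≥ 0 and let μ = (2^{r_1},...,2^{r_t}). Then the set of partitions λ of n with χ^λ(μ) ≠ 0 is exactly the set of partitions λ for which the irreducible character χ^λ of S_n has odd degree, and this set has cardinality 2^{r_1 + r_2 + ... + r_t}. -/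
namespace MNaux
open Finset

/-- hook-removal move on beta-sets -/
def Mv (a : ℕ) (X : Finset ℕ) (x : ℕ) : Finset ℕ := insert (x - a) (X.erase x)

/-- removable beta-numbers -/
def Rv (a : ℕ) (X : Finset ℕ) : Finset ℕ := X.filter (fun x => a ≤ x ∧ x - a ∉ X)

/-- size of the partition encoded by a beta-set -/
def wtB (X : Finset ℕ) : ℕ := X.sum id - (X.card).choose 2

lemma sum_range_id (n : ℕ) : (Finset.range n).sum id = n.choose 2 := by
  induction n with
  | zero => simp
  | succ k ih => rw [Finset.sum_range_succ, ih, Nat.choose_succ_succ]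
                 simp [Nat.choose_one_right]; omega

lemma choose_le_sum (X : Finset ℕ) :
    (X.card).choose 2 ≤ X.sum id ∧ (X.sum id = (X.card).choose 2 → X = Finset.range X.card) := by
  induction X using Finset.strongInduction with
  | _ X ih =>
    rcases X.eq_empty_or_nonempty with h | h
    · subst h; simp
    · have hMmem : X.max' h ∈ X := X.max'_mem h
      set Mx := X.max' h with hM
      have hsub : X.erase Mx ⊂ X := Finset.erase_ssubset hMmem
      obtain ⟨ih1, ih2⟩ := ih _ hsub
      have hcard : (X.erase Mx).card = X.card - 1 := Finset.card_erase_of_mem hMmem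
      have hXcard : 1 ≤ X.card := Finset.card_pos.2 h
      have hMge : X.card - 1 ≤ Mx := by
        have hsub2 : X ⊆ Finset.range (Mx + 1) :=
          fun x hx => Finset.mem_range.2 (Nat.lt_succ_of_le (X.le_max' x hx))
        have := Finset.card_le_card hsub2
        rw [Finset.card_range] at this; omega
      have hsum : X.sum id = Mx + (X.erase Mx).sum id := by
        rw [← Finset.add_sum_erase X id hMmem]; rfl
      have hch : (X.card).choose 2 = (X.card - 1) + (X.card - 1).choose 2 := by
        have : X.card = (X.card - 1) + 1 := by omega
        rw [this, Nat.choose_succ_succ]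
        simp [Nat.choose_one_right]
      constructor
      · rw [hsum, hch]; rw [hcard] at ih1; omega
      · intro heq
        rw [hsum, hch] at heq
        rw [hcard] at ih1 ih2
        have h1 : Mx = X.card - 1 := by omega
        have h2 : (X.erase Mx).sum id = (X.card - 1).choose 2 := by omega
        have h3 : X.erase Mx = Finset.range (X.card - 1) := ih2 h2
        have hX : X = Finset.range ((X.card - 1) + 1) := by
          rw [Finset.range_add_one, ← h3, ← h1, Finset.insert_erase hMmem]
        rw [hX, Finset.card_range]

lemma wtB_zero_iff (X : Finset ℕ) : wtB X = 0 ↔ X = Finset.range X.card := by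
  obtain ⟨h1, h2⟩ := choose_le_sum X
  constructor
  · intro h; exact h2 (by unfold wtB at h; omega)
  · intro h
    have : X.sum id = (X.card).choose 2 := by
      conv_lhs => rw [h]
      rw [sum_range_id, h, Finset.card_range]
    unfold wtB; omega

lemma mem_Rv {a x : ℕ} {X : Finset ℕ} : x ∈ Rv a X ↔ x ∈ X ∧ a ≤ x ∧ x - a ∉ X := by
  simp [Rv]

lemma Mv_card {a x : ℕ} {X : Finset ℕ} (hx : x ∈ Rv a X) : (Mv a X x).card = X.card := by
  obtain ⟨h1, h2, h3⟩ := mem_Rv.1 hx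
  have h4 : x - a ∉ X.erase x := fun h => h3 (Finset.mem_of_mem_erase h)
  have := Finset.card_insert_of_notMem h4
  have := Finset.card_erase_of_mem h1
  have : 1 ≤ X.card := Finset.card_pos.2 ⟨x, h1⟩
  unfold Mv
  rw [Finset.card_insert_of_notMem h4, Finset.card_erase_of_mem h1]
  omega

lemma Mv_sum {a x : ℕ} {X : Finset ℕ} (hx : x ∈ Rv a X) :
    (Mv a X x).sum id + a = X.sum id := by
  obtain ⟨h1, h2, h3⟩ := mem_Rv.1 hx
  have h4 : x - a ∉ X.erase x := fun h => h3 (Finset.mem_of_mem_erase h)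
  have h5 : X.sum id = x + (X.erase x).sum id := by
    rw [← Finset.add_sum_erase X id h1]; rfl
  unfold Mv
  rw [Finset.sum_insert h4]
  simp only [id] at *
  omega

lemma Mv_wt {a x : ℕ} {X : Finset ℕ} (hx : x ∈ Rv a X) :
    wtB (Mv a X x) + a = wtB X := by
  have h1 := Mv_sum hx
  have h2 := Mv_card hx
  have h3 := (choose_le_sum (Mv a X x)).1
  have h4 := (choose_le_sum X).1
  unfold wtB
  rw [h2] at h3 ⊢
  omega

lemma mem_Rv_Mv {a x y : ℕ} {X : Finset ℕ} (hx : x ∈ Rv a X) (hy : y ∈ Rv a X)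
    (hne : x ≠ y) : y ∈ Rv a (Mv a X x) := by
  obtain ⟨hx1, hx2, hx3⟩ := mem_Rv.1 hx
  obtain ⟨hy1, hy2, hy3⟩ := mem_Rv.1 hy
  rw [mem_Rv]
  refine ⟨?_, hy2, ?_⟩
  · unfold Mv
    simp only [Finset.mem_insert, Finset.mem_erase]
    right; exact ⟨hne.symm, hy1⟩
  · unfold Mv
    simp only [Finset.mem_insert, Finset.mem_erase]
    rintro (h | ⟨-, h⟩)
    · omega
    · exact hy3 h

lemma Rv_subsingleton {a : ℕ} {X : Finset ℕ} (ha : 0 < a) (hwt : wtB X < 2 * a) :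
    ∀ x ∈ Rv a X, ∀ y ∈ Rv a X, x = y := by
  intro x hx y hy
  by_contra hne
  have h1 : y ∈ Rv a (Mv a X x) := mem_Rv_Mv hx hy hne
  have h2 := Mv_wt hx
  have h3 := Mv_wt h1
  omega

lemma numPaths_nil (X : Finset ℕ) :
    numPaths X [] = if X = Finset.range X.card then 1 else 0 := by
  unfold numPaths legSums
  split <;> simp

lemma legSums_cons (X : Finset ℕ) (a : ℕ) (r : List ℕ) :
    legSums X (a :: r) =
      (Rv a X).val.bind
        (fun x => (legSums (Mv a X x) r).map (fun L => legLen X a x + L)) := rfl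

lemma numPaths_cons (X : Finset ℕ) (a : ℕ) (r : List ℕ) :
    numPaths X (a :: r) = ∑ x ∈ Rv a X, numPaths (Mv a X x) r := by
  unfold numPaths
  rw [legSums_cons, Multiset.card_bind, Finset.sum]
  congr 1
  apply Multiset.map_congr rfl
  intro x _
  simp only [Function.comp_apply, Multiset.card_map]


/-- superincreasing lists -/
def SIl : List ℕ → Prop
  | [] => True
  | a :: r => r.sum < a ∧ SIl r

lemma SIl_pos : ∀ {l : List ℕ}, SIl l → ∀ b ∈ l, 0 < b
  | [], _, b, hb => by simp at hb
  | a :: r, h, b, hb => by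
      rcases List.mem_cons.1 hb with rfl | hb
      · exact lt_of_le_of_lt (Nat.zero_le _) h.1
      · exact SIl_pos h.2 b hb

lemma numPaths_le_one : ∀ (l : List ℕ), SIl l → ∀ (X : Finset ℕ), wtB X = l.sum →
    numPaths X l ≤ 1
  | [], _, X, _ => by rw [numPaths_nil]; split <;> omega
  | a :: r, h, X, hw => by
    rw [numPaths_cons]
    have ha : 0 < a := lt_of_le_of_lt (Nat.zero_le _) h.1
    have h1 : r.sum < a := h.1
    have h2 : wtB X = a + r.sum := by simpa using hw
    have hsub : ∀ x ∈ Rv a X, ∀ y ∈ Rv a X, x = y := by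
      apply Rv_subsingleton ha
      omega
    rcases (Rv a X).eq_empty_or_nonempty with he | ⟨x, hx⟩
    · rw [he]; simp
    · have hR : Rv a X = {x} :=
        Finset.eq_singleton_iff_unique_mem.2 ⟨hx, fun y hy => hsub y hy x hx⟩
      rw [hR, Finset.sum_singleton]
      apply numPaths_le_one r h.2
      have := Mv_wt hx
      omega

lemma charSum_ne_zero_iff {M : Multiset ℕ} (h : Multiset.card M ≤ 1) :
    (M.map (fun L => (-1 : ℤ) ^ L)).sum ≠ 0 ↔ Multiset.card M = 1 := by
  interval_cases h' : Multiset.card M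
  · rw [Multiset.card_eq_zero] at h'
    subst h'; simp
  · rw [Multiset.card_eq_one] at h'
    obtain ⟨L, rfl⟩ := h'
    simp only [Multiset.map_singleton, Multiset.sum_singleton]
    have hne : ((-1 : ℤ)) ^ L ≠ 0 := pow_ne_zero _ (by norm_num)
    simp [hne]


/-! ### shifting beta-sets -/

def shiftB (X : Finset ℕ) : Finset ℕ := insert 0 (X.image (· + 1))

lemma succ_injective' : Function.Injective (· + 1 : ℕ → ℕ) := add_left_injective 1

lemma zero_not_mem_image (X : Finset ℕ) : 0 ∉ X.image (· + 1) := by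
  simp

lemma mem_shiftB {x : ℕ} {X : Finset ℕ} : x ∈ shiftB X ↔ x = 0 ∨ (1 ≤ x ∧ x - 1 ∈ X) := by
  simp only [shiftB, Finset.mem_insert, Finset.mem_image]
  constructor
  · rintro (rfl | ⟨y, hy, rfl⟩)
    · exact Or.inl rfl
    · exact Or.inr ⟨by omega, by simpa using hy⟩
  · rintro (rfl | ⟨h1, h2⟩)
    · exact Or.inl rfl
    · exact Or.inr ⟨x - 1, h2, by omega⟩

lemma shiftB_card (X : Finset ℕ) : (shiftB X).card = X.card + 1 := by
  unfold shiftB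
  rw [Finset.card_insert_of_notMem (zero_not_mem_image X),
    Finset.card_image_of_injective _ succ_injective']

lemma shiftB_sum (X : Finset ℕ) : (shiftB X).sum id = X.sum id + X.card := by
  unfold shiftB
  rw [Finset.sum_insert (zero_not_mem_image X),
    Finset.sum_image (fun x _ y _ h => succ_injective' h)]
  simp [Finset.sum_add_distrib]

lemma choose_two_succ (n : ℕ) : (n + 1).choose 2 = n.choose 2 + n := by
  rw [Nat.choose_succ_succ]
  simp [Nat.choose_one_right]
  omega

lemma shiftB_wt (X : Finset ℕ) : wtB (shiftB X) = wtB X := by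
  unfold wtB
  rw [shiftB_card, shiftB_sum, choose_two_succ]
  have := (choose_le_sum X).1
  omega

lemma Rv_shiftB {a : ℕ} (ha : 1 ≤ a) (X : Finset ℕ) :
    Rv a (shiftB X) = (Rv a X).image (· + 1) := by
  ext z
  simp only [mem_Rv, Finset.mem_image, mem_shiftB, not_or, not_and]
  constructor
  · rintro ⟨hz, haz, hnz1, hnz2⟩
    rcases hz with rfl | ⟨h1, h2⟩
    · omega
    · refine ⟨z - 1, ⟨h2, by omega, ?_⟩, by omega⟩
      intro hc
      apply hnz2 (by omega)
      have : z - a - 1 = z - 1 - a := by omega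
      rw [this]; exact hc
  · rintro ⟨y, ⟨hy, hay, hny⟩, rfl⟩
    refine ⟨Or.inr ⟨by omega, by simpa using hy⟩, by omega, by omega, ?_⟩
    intro h1 h2
    apply hny
    have : y + 1 - a - 1 = y - a := by omega
    rwa [this] at h2

lemma Mv_shiftB {a x : ℕ} {X : Finset ℕ} (hax : a ≤ x) :
    shiftB (Mv a X x) = Mv a (shiftB X) (x + 1) := by
  unfold Mv shiftB
  rw [Finset.image_insert, Finset.image_erase succ_injective',
    Finset.insert_comm, Finset.erase_insert_of_ne (by omega : (0:ℕ) ≠ x + 1)]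
  congr 2
  omega

lemma numPaths_shiftB : ∀ (l : List ℕ), (∀ b ∈ l, 0 < b) → ∀ X : Finset ℕ,
    numPaths (shiftB X) l = numPaths X l
  | [], _, X => by
      rw [numPaths_nil, numPaths_nil]
      simp only [← wtB_zero_iff, shiftB_wt]
  | a :: r, hpos, X => by
      have ha : 1 ≤ a := hpos a (List.mem_cons_self)
      rw [numPaths_cons, numPaths_cons, Rv_shiftB ha,
        Finset.sum_image (fun x _ y _ h => succ_injective' h)]
      apply Finset.sum_congr rfl
      intro x hx
      rw [← Mv_shiftB (mem_Rv.1 hx).2.1,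
        numPaths_shiftB r (fun b hb => hpos b (List.mem_cons_of_mem a hb))]

/-! ### reduction of beta-sets to canonical form -/

def redB (Y : Finset ℕ) : Finset ℕ :=
  if h : 0 ∈ Y then redB ((Y.erase 0).image (· - 1)) else Y
termination_by Y.card
decreasing_by
  calc ((Y.erase 0).image (· - 1)).card ≤ (Y.erase 0).card := Finset.card_image_le
    _ < Y.card := by
        rw [Finset.card_erase_of_mem h]
        have : 1 ≤ Y.card := Finset.card_pos.2 ⟨0, h⟩
        omega

lemma redB_of_not_mem {Y : Finset ℕ} (h : 0 ∉ Y) : redB Y = Y := by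
  rw [redB]; simp [h]

lemma unshift_shift {Y : Finset ℕ} (h : 0 ∈ Y) :
    shiftB ((Y.erase 0).image (· - 1)) = Y := by
  unfold shiftB
  rw [Finset.image_image]
  have himg : (Y.erase 0).image ((· + 1) ∘ (· - 1)) = Y.erase 0 := by
    rw [show ((· + 1) ∘ (· - 1) : ℕ → ℕ) = fun z => z - 1 + 1 from rfl]
    rw [Finset.image_congr (g := id) ?_, Finset.image_id]
    intro z hz
    have : z ≠ 0 := (Finset.mem_erase.1 hz).1
    simp; omega
  rw [himg, Finset.insert_erase h]

lemma shift_unshift (Z : Finset ℕ) :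
    ((shiftB Z).erase 0).image (· - 1) = Z := by
  unfold shiftB
  rw [Finset.erase_insert (zero_not_mem_image Z), Finset.image_image]
  rw [Finset.image_congr (g := id) ?_, Finset.image_id]
  intro z hz
  simp

lemma redB_shiftB (Z : Finset ℕ) : redB (shiftB Z) = redB Z := by
  rw [redB]
  have h0 : 0 ∈ shiftB Z := Finset.mem_insert_self 0 _
  simp only [h0, dite_true, shift_unshift]

lemma redB_zero_aux : ∀ (k : ℕ) (Y : Finset ℕ), Y.card ≤ k → 0 ∉ redB Y
  | 0, Y, hk => by
      have : Y = ∅ := Finset.card_eq_zero.1 (by omega)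
      subst this
      rw [redB_of_not_mem (by simp)]
      simp
  | k + 1, Y, hk => by
      rw [redB]
      split
      · next h =>
          apply redB_zero_aux k
          calc ((Y.erase 0).image (· - 1)).card ≤ (Y.erase 0).card := Finset.card_image_le
            _ ≤ k := by
                rw [Finset.card_erase_of_mem h]
                omega
      · next h => exact h

lemma redB_zero (Y : Finset ℕ) : 0 ∉ redB Y := redB_zero_aux Y.card Y le_rfl

lemma redB_iterate_aux : ∀ (k : ℕ) (Y : Finset ℕ), Y.card ≤ k →
    ∃ j, Y = shiftB^[j] (redB Y)
  | 0, Y, hk => by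
      have : Y = ∅ := Finset.card_eq_zero.1 (by omega)
      subst this
      exact ⟨0, by rw [redB_of_not_mem (by simp)]; rfl⟩
  | k + 1, Y, hk => by
      by_cases h : 0 ∈ Y
      · have hcard : ((Y.erase 0).image (· - 1)).card ≤ k :=
          calc ((Y.erase 0).image (· - 1)).card ≤ (Y.erase 0).card := Finset.card_image_le
            _ ≤ k := by rw [Finset.card_erase_of_mem h]; omega
        obtain ⟨j, hj⟩ := redB_iterate_aux k _ hcard
        refine ⟨j + 1, ?_⟩
        have hred : redB Y = redB ((Y.erase 0).image (· - 1)) := by rw [redB]; simp [h]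
        rw [hred, Function.iterate_succ_apply', ← hj, unshift_shift h]
      · exact ⟨0, by rw [redB_of_not_mem h]; rfl⟩

lemma redB_iterate (Y : Finset ℕ) : ∃ j, Y = shiftB^[j] (redB Y) :=
  redB_iterate_aux Y.card Y le_rfl

lemma wtB_iterate (j : ℕ) (Z : Finset ℕ) : wtB (shiftB^[j] Z) = wtB Z := by
  induction j with
  | zero => rfl
  | succ k ih => rw [Function.iterate_succ_apply', shiftB_wt, ih]

lemma card_iterate (j : ℕ) (Z : Finset ℕ) : (shiftB^[j] Z).card = Z.card + j := by
  induction j with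
  | zero => rfl
  | succ k ih =>
      rw [Function.iterate_succ_apply', shiftB_card, ih]
      omega

lemma numPaths_iterate (j : ℕ) (l : List ℕ) (hpos : ∀ b ∈ l, 0 < b) (Z : Finset ℕ) :
    numPaths (shiftB^[j] Z) l = numPaths Z l := by
  induction j with
  | zero => rfl
  | succ k ih => rw [Function.iterate_succ_apply', numPaths_shiftB l hpos, ih]

lemma mem_iterate {j x : ℕ} {Z : Finset ℕ} :
    x ∈ shiftB^[j] Z ↔ x < j ∨ (j ≤ x ∧ x - j ∈ Z) := by
  induction j generalizing x with
  | zero => simp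
  | succ k ih =>
      rw [Function.iterate_succ_apply', mem_shiftB, ih]
      have hxx : x - 1 - k = x - (k + 1) := by omega
      rw [hxx]
      by_cases hP : x - (k + 1) ∈ Z <;> simp [hP] <;> omega


/-! ### parity -/

def np2 (X : Finset ℕ) (l : List ℕ) : ZMod 2 := (numPaths X l : ZMod 2)

lemma np2_cons (X : Finset ℕ) (a : ℕ) (r : List ℕ) :
    np2 X (a :: r) = ∑ x ∈ Rv a X, np2 (Mv a X x) r := by
  unfold np2
  rw [numPaths_cons]
  push_cast
  rfl

lemma np2_congr_tail {s s' : List ℕ} (h : ∀ Y, np2 Y s = np2 Y s') (a : ℕ) (X : Finset ℕ) :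
    np2 X (a :: s) = np2 X (a :: s') := by
  rw [np2_cons, np2_cons]
  exact Finset.sum_congr rfl fun x _ => h _

lemma mem_Mv {t x a : ℕ} {X : Finset ℕ} : t ∈ Mv a X x ↔ t = x - a ∨ (t ≠ x ∧ t ∈ X) := by
  simp [Mv, Finset.mem_insert, Finset.mem_erase]

lemma endA {a x : ℕ} {X : Finset ℕ} (ha : 0 < a) (h2a : 2*a ≤ x) (h1 : x ∈ X)
    (h2 : x - a ∉ X) (h3 : x - 2*a ∉ X) :
    Mv a (Mv a X x) (x - a) = Mv (2*a) X x := by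
  ext t
  simp only [mem_Mv]
  by_cases ht : t ∈ X
  · have e1 : t ≠ x - a := fun h => h2 (h ▸ ht)
    have e2 : t ≠ x - 2*a := fun h => h3 (h ▸ ht)
    simp only [ht, and_true]
    omega
  · have e3 : t ≠ x := fun h => ht (h ▸ h1)
    simp only [ht, and_false, or_false]
    omega

lemma endB {a x : ℕ} {X : Finset ℕ} (ha : 0 < a) (hax : a ≤ x) (h1 : x ∈ X)
    (h1' : x + a ∈ X) (h2 : x - a ∉ X) :
    Mv a (Mv a X x) (x + a) = Mv (2*a) X (x + a) := by
  ext t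
  simp only [mem_Mv]
  by_cases ht : t ∈ X
  · have e1 : t ≠ x - a := fun h => h2 (h ▸ ht)
    simp only [ht, and_true]
    omega
  · have e3 : t ≠ x := fun h => ht (h ▸ h1)
    have e4 : t ≠ x + a := fun h => ht (h ▸ h1')
    simp only [ht, and_false, or_false]
    omega

lemma endC {a x y : ℕ} {X : Finset ℕ} (ha : 0 < a) (hax : a ≤ x) (hay : a ≤ y)
    (hx1 : x ∈ X) (hy1 : y ∈ X) (hx3 : x - a ∉ X) (hy3 : y - a ∉ X)
    (hne : y ≠ x) (hne2 : y ≠ x + a) :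
    Mv a (Mv a X x) y = Mv a (Mv a X y) x := by
  ext t
  simp only [mem_Mv]
  by_cases ht : t ∈ X
  · have e1 : t ≠ x - a := fun h => hx3 (h ▸ ht)
    have e2 : t ≠ y - a := fun h => hy3 (h ▸ ht)
    simp only [ht, and_true]
    omega
  · have e3 : t ≠ x := fun h => ht (h ▸ hx1)
    have e4 : t ≠ y := fun h => ht (h ▸ hy1)
    simp only [ht, and_false, or_false]
    omega

lemma np2_doubling {a : ℕ} (ha : 0 < a) (r : List ℕ) (X : Finset ℕ) :
    np2 X (a :: a :: r) = np2 X (2 * a :: r) := by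
  classical
  have hL : np2 X (a :: a :: r)
      = ∑ p ∈ (Rv a X).sigma (fun x => Rv a (Mv a X x)),
          np2 (Mv a (Mv a X p.1) p.2) r := by
    rw [np2_cons, Finset.sum_sigma]
    exact Finset.sum_congr rfl fun x _ => np2_cons _ _ _
  rw [hL, np2_cons,
    ← Finset.sum_filter_add_sum_filter_not ((Rv a X).sigma (fun x => Rv a (Mv a X x)))
      (fun p => p.2 = p.1 - a ∨ p.2 = p.1 + a)
      (fun p => np2 (Mv a (Mv a X p.1) p.2) r)]
  have hfacts : ∀ x y : ℕ, (⟨x, y⟩ : Σ _ : ℕ, ℕ) ∈ (Rv a X).sigma (fun x => Rv a (Mv a X x)) →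
      x ∈ X ∧ a ≤ x ∧ x - a ∉ X ∧ a ≤ y ∧ (y = x - a ∨ (y ≠ x ∧ y ∈ X)) ∧
      y - a ≠ x - a ∧ (y - a ≠ x → y - a ∉ X) := by
    intro x y hp
    obtain ⟨hx, hy⟩ := Finset.mem_sigma.1 hp
    dsimp only at hx hy
    rw [mem_Rv] at hx hy
    obtain ⟨hx1, hx2, hx3⟩ := hx
    obtain ⟨hy1, hy2, hy3⟩ := hy
    rw [mem_Mv] at hy1 hy3
    push_neg at hy3
    exact ⟨hx1, hx2, hx3, hy2, hy1, hy3.1, hy3.2⟩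
  have hzero : ∑ p ∈ ((Rv a X).sigma (fun x => Rv a (Mv a X x))).filter
      (fun p => ¬ (p.2 = p.1 - a ∨ p.2 = p.1 + a)),
      np2 (Mv a (Mv a X p.1) p.2) r = 0 := by
    apply Finset.sum_involution (fun p _ => (⟨p.2, p.1⟩ : Σ _ : ℕ, ℕ))
    · rintro ⟨x, y⟩ hp
      obtain ⟨hpS, hpNC⟩ := Finset.mem_filter.1 hp
      obtain ⟨hx1, hx2, hx3, hy2, hy1, hyy1, hyy2⟩ := hfacts x y hpS
      dsimp only at hpNC ⊢
      push_neg at hpNC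
      obtain ⟨hne1, hne2⟩ := hpNC
      have hyX : y ∈ X := by
        rcases hy1 with h | h
        · exact absurd h hne1
        · exact h.2
      have hynx : y ≠ x := by
        rcases hy1 with h | h
        · exact absurd h hne1
        · exact h.1
      have hyaX : y - a ∉ X := hyy2 (by omega)
      rw [endC ha hx2 hy2 hx1 hyX hx3 hyaX hynx hne2]
      exact CharTwo.add_self_eq_zero _
    · rintro ⟨x, y⟩ hp _
      obtain ⟨hpS, hpNC⟩ := Finset.mem_filter.1 hp
      obtain ⟨hx1, hx2, hx3, hy2, hy1, hyy1, hyy2⟩ := hfacts x y hpS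
      dsimp only at hpNC
      push_neg at hpNC
      intro hc
      have hxy : y = x := by
        have := congrArg (fun q : (Σ _ : ℕ, ℕ) => q.1) hc
        simpa using this
      rcases hy1 with h | h
      · exact hpNC.1 h
      · exact h.1 hxy
    · rintro ⟨x, y⟩ hp
      obtain ⟨hpS, hpNC⟩ := Finset.mem_filter.1 hp
      obtain ⟨hx1, hx2, hx3, hy2, hy1, hyy1, hyy2⟩ := hfacts x y hpS
      dsimp only at hpNC
      push_neg at hpNC
      obtain ⟨hne1, hne2⟩ := hpNC
      have hyX : y ∈ X := by
        rcases hy1 with h | h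
        · exact absurd h hne1
        · exact h.2
      have hynx : y ≠ x := by
        rcases hy1 with h | h
        · exact absurd h hne1
        · exact h.1
      have hyaX : y - a ∉ X := hyy2 (by omega)
      rw [Finset.mem_filter]
      constructor
      · rw [Finset.mem_sigma]
        dsimp only
        constructor
        · rw [mem_Rv]; exact ⟨hyX, hy2, hyaX⟩
        · rw [mem_Rv, mem_Mv, mem_Mv]
          push_neg
          exact ⟨Or.inr ⟨hynx.symm, hx1⟩, hx2, by omega, fun _ => hx3⟩
      · dsimp only
        push_neg
        constructor
        · intro h; apply hne2; omega
        · intro h; apply hne1; omega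
    · rintro ⟨x, y⟩ _
      rfl
  rw [hzero, add_zero]
  apply Finset.sum_nbij'
    (i := fun p : (Σ _ : ℕ, ℕ) => if p.2 = p.1 - a then p.1 else p.2)
    (j := fun z => if z - a ∈ X then (⟨z - a, z⟩ : Σ _ : ℕ, ℕ) else ⟨z, z - a⟩)
  · rintro ⟨x, y⟩ hp
    obtain ⟨hpS, hpNC⟩ := Finset.mem_filter.1 hp
    obtain ⟨hx1, hx2, hx3, hy2, hy1, hyy1, hyy2⟩ := hfacts x y hpS
    dsimp only at hpNC ⊢
    rcases hpNC with hA | hB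
    · rw [if_pos hA, mem_Rv]
      refine ⟨hx1, by omega, ?_⟩
      have h3 : y - a ∉ X := hyy2 (by omega)
      have hxe : x - 2 * a = y - a := by omega
      rw [hxe]; exact h3
    · rw [if_neg (by omega), mem_Rv]
      have hyX : y ∈ X := by
        rcases hy1 with h | h
        · exfalso; omega
        · exact h.2
      refine ⟨hyX, by omega, ?_⟩
      have hxe : y - 2 * a = x - a := by omega
      rw [hxe]; exact hx3
  · intro z hz
    rw [mem_Rv] at hz
    obtain ⟨hz1, hz2, hz3⟩ := hz
    rw [Finset.mem_filter]
    by_cases hza : z - a ∈ X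
    · rw [if_pos hza]
      constructor
      · rw [Finset.mem_sigma]
        dsimp only
        constructor
        · rw [mem_Rv]
          refine ⟨hza, by omega, ?_⟩
          have : z - a - a = z - 2 * a := by omega
          rw [this]; exact hz3
        · rw [mem_Rv, mem_Mv, mem_Mv]
          push_neg
          exact ⟨Or.inr ⟨by omega, hz1⟩, by omega, by omega, fun h => absurd rfl h⟩
      · dsimp only
        right; omega
    · rw [if_neg hza]
      constructor
      · rw [Finset.mem_sigma]
        dsimp only
        constructor
        · rw [mem_Rv]; exact ⟨hz1, by omega, hza⟩
        · rw [mem_Rv, mem_Mv, mem_Mv]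
          push_neg
          refine ⟨Or.inl rfl, by omega, by omega, fun _ => ?_⟩
          have : z - a - a = z - 2 * a := by omega
          rw [this]; exact hz3
      · dsimp only
        left; rfl
  · rintro ⟨x, y⟩ hp
    obtain ⟨hpS, hpNC⟩ := Finset.mem_filter.1 hp
    obtain ⟨hx1, hx2, hx3, hy2, hy1, hyy1, hyy2⟩ := hfacts x y hpS
    dsimp only at hpNC ⊢
    rcases hpNC with hA | hB
    · rw [if_pos hA, if_neg hx3, hA]
    · rw [if_neg (show ¬ (y = x - a) by omega)]
      have hxe : y - a = x := by omega
      rw [hxe, if_pos hx1]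
  · intro z hz
    rw [mem_Rv] at hz
    obtain ⟨hz1, hz2, hz3⟩ := hz
    by_cases hza : z - a ∈ X
    · rw [if_pos hza]
      dsimp only
      rw [if_neg (by omega)]
    · rw [if_neg hza]
      dsimp only
      rw [if_pos rfl]
  · rintro ⟨x, y⟩ hp
    obtain ⟨hpS, hpNC⟩ := Finset.mem_filter.1 hp
    obtain ⟨hx1, hx2, hx3, hy2, hy1, hyy1, hyy2⟩ := hfacts x y hpS
    dsimp only at hpNC ⊢
    rcases hpNC with hA | hB
    · rw [if_pos hA, hA]
      have h3 : x - 2 * a ∉ X := by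
        have h3' : y - a ∉ X := hyy2 (by omega)
        have hxe : x - 2 * a = y - a := by omega
        rw [hxe]; exact h3'
      rw [endA ha (by omega) hx1 hx3 h3]
    · rw [if_neg (by omega), hB]
      have hyX : x + a ∈ X := by
        rcases hy1 with h | h
        · exfalso; omega
        · rw [← hB]; exact h.2
      rw [show Mv a (Mv a X x) (x + a) = Mv (2*a) X (x + a) from
        endB ha hx2 hx1 hyX hx3]

/-! ### beta-sets of partitions -/

def bl : List ℕ → List ℕ
  | [] => []
  | a :: r => (a + r.length) :: bl r

def unbl : List ℕ → List ℕ
  | [] => []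
  | y :: r => (y - r.length) :: unbl r

lemma bl_length : ∀ L : List ℕ, (bl L).length = L.length
  | [] => rfl
  | _ :: r => by simp [bl, bl_length r]

lemma unbl_length : ∀ L : List ℕ, (unbl L).length = L.length
  | [] => rfl
  | _ :: r => by simp [unbl, unbl_length r]

def blm : ℕ → List ℕ → List ℕ
  | _, [] => []
  | m, a :: r => (a + m) :: blm (m - 1) r

lemma mapIdx_blm : ∀ (L : List ℕ) (m : ℕ), (L.mapIdx fun i a => a + (m - i)) = blm m L
  | [], _ => rfl
  | a :: r, m => by
      rw [List.mapIdx_cons]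
      show (a + (m - 0)) :: _ = (a + m) :: blm (m - 1) r
      congr 1
      · rw [show (fun i (x : ℕ) => x + (m - (i + 1)))
            = (fun i x => x + (m - 1 - i)) from
            funext fun i => funext fun x => by omega]
        exact mapIdx_blm r (m - 1)

lemma blm_bl : ∀ L : List ℕ, blm (L.length - 1) L = bl L
  | [] => rfl
  | a :: r => by
      show (a + ((a :: r).length - 1)) :: blm ((a :: r).length - 1 - 1) r
          = (a + r.length) :: bl r
      rw [show (a :: r).length - 1 = r.length from by simp,
        show r.length - 1 = r.length - 1 from rfl, ← blm_bl r]

lemma betaSet_eq (L : List ℕ) : betaSet L = (bl L).toFinset := by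
  unfold betaSet
  rw [show (fun i (a : ℕ) => a + (L.length - 1 - i))
      = (fun i a => a + ((L.length - 1) - i)) from rfl, mapIdx_blm, blm_bl]

lemma unbl_bl : ∀ L : List ℕ, unbl (bl L) = L
  | [] => rfl
  | a :: r => by
      show (a + r.length - (bl r).length) :: unbl (bl r) = a :: r
      rw [bl_length, unbl_bl r]
      simp

lemma bl_chain : ∀ {L : List ℕ}, List.Chain' (· ≥ ·) L → List.Chain' (· > ·) (bl L)
  | [], _ => List.isChain_nil
  | [a], _ => List.isChain_singleton _
  | a :: b :: r, h => by
      obtain ⟨hab, h'⟩ := List.isChain_cons_cons.1 h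
      have ih := bl_chain h'
      show List.Chain' (· > ·) ((a + (b :: r).length) :: (b + r.length) :: bl r)
      simp only [List.Chain', List.isChain_cons_cons]
      constructor
      · simp [List.length_cons]; omega
      · exact ih

lemma bl_pos : ∀ {L : List ℕ}, (∀ x ∈ L, 0 < x) → ∀ y ∈ bl L, 0 < y
  | [], _, y, hy => by simp [bl] at hy
  | a :: r, h, y, hy => by
      rcases List.mem_cons.1 hy with rfl | hy
      · have := h a (List.mem_cons_self); omega
      · exact bl_pos (fun x hx => h x (List.mem_cons_of_mem a hx)) y hy

lemma bl_sum : ∀ L : List ℕ, (bl L).sum = L.sum + (L.length).choose 2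
  | [] => rfl
  | a :: r => by
      show a + r.length + (bl r).sum = (a :: r).sum + ((r.length + 1)).choose 2
      rw [bl_sum r, choose_two_succ, List.sum_cons]
      omega

lemma bl_nodup {L : List ℕ} (h : List.Chain' (· ≥ ·) L) : (bl L).Nodup := by
  have := bl_chain h
  simp only [List.Chain', List.isChain_iff_pairwise] at this
  exact this.imp (fun h => ne_of_gt h)

lemma sort_coe_desc (L : List ℕ) (h : List.Pairwise (· ≥ ·) L) :
    Multiset.sort (↑L : Multiset ℕ) (· ≤ ·) = L.reverse := by
  have h1 : (Multiset.sort (↑L : Multiset ℕ) (· ≤ ·)).Perm L :=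
    Multiset.coe_eq_coe.mp (Multiset.sort_eq (↑L : Multiset ℕ) (· ≤ ·))
  exact List.Perm.eq_of_pairwise'
    (Multiset.pairwise_sort _ _) (List.pairwise_reverse.2 (h.imp (fun hab => hab))) (h1.trans L.reverse_perm.symm)

lemma sortedParts_chain {n : ℕ} (lam : n.Partition) :
    List.Chain' (· ≥ ·) (sortedParts lam) := by
  apply List.Pairwise.isChain
  rw [sortedParts, List.pairwise_reverse]
  exact (Multiset.pairwise_sort _ (· ≤ ·)).imp (fun hab => hab)

lemma sortedParts_pos {n : ℕ} (lam : n.Partition) : ∀ x ∈ sortedParts lam, 0 < x := by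
  intro x hx
  apply lam.parts_pos
  rw [sortedParts, List.mem_reverse] at hx
  exact (Multiset.mem_sort _).1 hx

lemma sortedParts_coe {n : ℕ} (lam : n.Partition) :
    (↑(sortedParts lam) : Multiset ℕ) = lam.parts := by
  rw [sortedParts, Multiset.coe_reverse, Multiset.sort_eq]

lemma sortedParts_sum {n : ℕ} (lam : n.Partition) : (sortedParts lam).sum = n := by
  have h : (↑(sortedParts lam) : Multiset ℕ).sum = lam.parts.sum := by
    rw [sortedParts_coe]
  rw [Multiset.sum_coe] at h
  rw [h, lam.parts_sum]

lemma betaSet_zero {n : ℕ} (lam : n.Partition) : 0 ∉ betaSet (sortedParts lam) := by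
  rw [betaSet_eq, List.mem_toFinset]
  intro h
  exact absurd (bl_pos (sortedParts_pos lam) 0 h) (by omega)

lemma betaSet_card {n : ℕ} (lam : n.Partition) :
    (betaSet (sortedParts lam)).card = (sortedParts lam).length := by
  rw [betaSet_eq, List.toFinset_card_of_nodup (bl_nodup (sortedParts_chain lam)),
    bl_length]

lemma betaSet_wt {n : ℕ} (lam : n.Partition) : wtB (betaSet (sortedParts lam)) = n := by
  have hnd := bl_nodup (sortedParts_chain lam)
  have hsum : (betaSet (sortedParts lam)).sum id = (bl (sortedParts lam)).sum := by
    rw [betaSet_eq, List.sum_toFinset _ hnd, List.map_id]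
  unfold wtB
  rw [hsum, betaSet_card lam, bl_sum, sortedParts_sum]
  omega

lemma sortedParts_inj {n : ℕ} {p q : n.Partition}
    (h : betaSet (sortedParts p) = betaSet (sortedParts q)) : p = q := by
  have hp := bl_nodup (sortedParts_chain p)
  have hq := bl_nodup (sortedParts_chain q)
  rw [betaSet_eq, betaSet_eq] at h
  have hcoe : (↑(bl (sortedParts p)) : Multiset ℕ) = ↑(bl (sortedParts q)) := by
    have h1 := congrArg Finset.val h
    rwa [List.toFinset_val, List.toFinset_val, List.dedup_eq_self.2 hp,
      List.dedup_eq_self.2 hq] at h1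
  have hperm := Multiset.coe_eq_coe.1 hcoe
  have hsorted : ∀ {L : List ℕ}, List.Chain' (· ≥ ·) L →
      List.Pairwise (· ≥ ·) (bl L) := by
    intro L hL
    have := bl_chain hL
    simp only [List.Chain', List.isChain_iff_pairwise] at this
    exact this.imp (fun h => le_of_lt h)
  have heq : bl (sortedParts p) = bl (sortedParts q) :=
    List.Perm.eq_of_pairwise' (hsorted (sortedParts_chain p))
      (hsorted (sortedParts_chain q)) hperm
  have heq2 : sortedParts p = sortedParts q := by
    rw [← unbl_bl (sortedParts p), ← unbl_bl (sortedParts q), heq]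
  apply Nat.Partition.ext
  rw [← sortedParts_coe p, ← sortedParts_coe q, heq2]

lemma desc_head_ge1 : ∀ {y : ℕ} {r : List ℕ}, List.Chain' (· > ·) (y :: r) →
    (∀ z ∈ y :: r, 1 ≤ z) → r.length + 1 ≤ y
  | y, [], _, hpos => by simpa using hpos y (List.mem_cons_self)
  | y, b :: r', hchain, hpos => by
      obtain ⟨hyb, h'⟩ := List.isChain_cons_cons.1 hchain
      have ih := desc_head_ge1 h' (fun z hz => hpos z (List.mem_cons_of_mem y hz))
      simp only [List.length_cons]
      omega

lemma unbl_spec : ∀ (D : List ℕ), List.Chain' (· > ·) D → (∀ z ∈ D, 1 ≤ z) →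
    bl (unbl D) = D ∧ (∀ x ∈ unbl D, 0 < x) ∧ List.Chain' (· ≥ ·) (unbl D)
  | [], _, _ => ⟨rfl, by simp [unbl], List.isChain_nil⟩
  | y :: r, hchain, hpos => by
      have hbound := desc_head_ge1 hchain hpos
      have htail : List.Chain' (· > ·) r := hchain.tail
      have hpos' : ∀ z ∈ r, 1 ≤ z := fun z hz => hpos z (List.mem_cons_of_mem y hz)
      obtain ⟨ih1, ih2, ih3⟩ := unbl_spec r htail hpos'
      refine ⟨?_, ?_, ?_⟩
      · show ((y - r.length) + (unbl r).length) :: bl (unbl r) = y :: r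
        rw [unbl_length, ih1]
        congr 1
        omega
      · intro x hx
        rcases List.mem_cons.1 hx with rfl | hx
        · omega
        · exact ih2 x hx
      · show List.Chain' (· ≥ ·) ((y - r.length) :: unbl r)
        cases r with
        | nil => exact List.isChain_singleton _
        | cons b r' =>
            show List.Chain' (· ≥ ·) ((y - (b :: r').length) :: (b - r'.length) :: unbl r')
            simp only [List.Chain', List.isChain_cons_cons]
            refine ⟨?_, ih3⟩
            obtain ⟨hyb, h'⟩ := List.isChain_cons_cons.1 hchain
            have hb := desc_head_ge1 h' (fun z hz => hpos z (List.mem_cons_of_mem y hz))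
            simp only [List.length_cons]
            omega

lemma exists_partition {n : ℕ} (Z : Finset ℕ) (h0 : 0 ∉ Z) (hw : wtB Z = n) :
    ∃ p : n.Partition, betaSet (sortedParts p) = Z := by
  classical
  set D := (Finset.sort Z (· ≤ ·)).reverse with hD
  have hDchain : List.Chain' (· > ·) D := by
    apply List.Pairwise.isChain
    rw [hD, List.pairwise_reverse]
    exact (Z.sortedLT_sort).pairwise.imp (fun h => h)
  have hDmem : ∀ z, z ∈ D ↔ z ∈ Z := by
    intro z
    rw [hD, List.mem_reverse, Finset.mem_sort]
  have hDpos : ∀ z ∈ D, 1 ≤ z := by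
    intro z hz
    have : z ∈ Z := (hDmem z).1 hz
    have : z ≠ 0 := fun h => h0 (h ▸ this)
    omega
  have hDlen : D.length = Z.card := by
    rw [hD, List.length_reverse, Finset.length_sort]
  have hDsum : D.sum = Z.sum id := by
    have h1 : (↑D : Multiset ℕ) = Z.val := by
      rw [hD, Multiset.coe_reverse]
      exact Finset.sort_eq _ _
    have h2 := congrArg Multiset.sum h1
    rw [Multiset.sum_coe] at h2
    rw [h2, Finset.sum]
    rw [Multiset.map_id]
  obtain ⟨hbl, hLpos, hLchain⟩ := unbl_spec D hDchain hDpos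
  set L := unbl D with hLdef
  have hLlen : L.length = Z.card := by rw [hLdef, unbl_length, hDlen]
  have hLsum : L.sum = n := by
    have h1 : (bl L).sum = L.sum + (L.length).choose 2 := bl_sum L
    rw [hbl] at h1
    have h2 := (choose_le_sum Z).1
    unfold wtB at hw
    rw [hDsum, hLlen] at h1
    omega
  have hpos2 : ∀ {x : ℕ}, x ∈ (↑L : Multiset ℕ) → 0 < x := fun {x} hx => hLpos x (Multiset.mem_coe.1 hx)
  have hsum2 : (↑L : Multiset ℕ).sum = n := by rw [Multiset.sum_coe, hLsum]
  refine ⟨⟨↑L, hpos2, hsum2⟩, ?_⟩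
  have hsp : sortedParts (⟨↑L, hpos2, hsum2⟩ : Nat.Partition n) = L := by
    show (Multiset.sort (↑L : Multiset ℕ) (· ≤ ·)).reverse = L
    rw [sort_coe_desc L (List.isChain_iff_pairwise.1 hLchain), List.reverse_reverse]
  rw [hsp, betaSet_eq, hbl]
  ext x
  rw [List.mem_toFinset]
  exact hDmem x

/-! ### the finset of canonical beta-sets -/

lemma elem_le_wt {Y : Finset ℕ} (h0 : 0 ∉ Y) {x : ℕ} (hx : x ∈ Y) : x ≤ wtB Y := by
  have h1 : 0 ∉ Y.erase x := fun h => h0 (Finset.mem_of_mem_erase h)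
  have h2 := (choose_le_sum (insert 0 (Y.erase x))).1
  rw [Finset.sum_insert h1, Finset.card_insert_of_notMem h1] at h2
  have h3 : Y.sum id = x + (Y.erase x).sum id := by
    rw [← Finset.add_sum_erase Y id hx]; rfl
  have h4 : (Y.erase x).card = Y.card - 1 := Finset.card_erase_of_mem hx
  have h5 : 1 ≤ Y.card := Finset.card_pos.2 ⟨x, hx⟩
  have h6 : (Y.erase x).card + 1 = Y.card := by omega
  rw [h6] at h2
  unfold wtB
  simp only [id] at *
  omega

def Bset (m : ℕ) : Finset (Finset ℕ) :=
  ((Finset.range (m + 1)).powerset).filter (fun Y => 0 ∉ Y ∧ wtB Y = m)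

lemma mem_Bset {m : ℕ} {Y : Finset ℕ} : Y ∈ Bset m ↔ 0 ∉ Y ∧ wtB Y = m := by
  unfold Bset
  rw [Finset.mem_filter, Finset.mem_powerset]
  constructor
  · exact fun h => h.2
  · intro h
    refine ⟨?_, h⟩
    intro x hx
    rw [Finset.mem_range]
    have := elem_le_wt h.1 hx
    omega

/-! ### counting -/

lemma Rv_empty_of_wt_lt {a : ℕ} {Z : Finset ℕ} (h : wtB Z < a) : Rv a Z = ∅ := by
  rw [Finset.eq_empty_iff_forall_notMem]
  intro w hw
  have := Mv_wt hw
  omega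

lemma redB_iterate_eq (j : ℕ) (Z : Finset ℕ) : redB (shiftB^[j] Z) = redB Z := by
  induction j with
  | zero => rfl
  | succ k ih => rw [Function.iterate_succ_apply', redB_shiftB, ih]

def fmap (a : ℕ) (Y : Finset ℕ) : Finset ℕ :=
  if h : (Rv a Y).Nonempty then redB (Mv a Y ((Rv a Y).min' h)) else ∅

lemma fmap_eq {a x : ℕ} {Y : Finset ℕ} (ha : 0 < a) (hwt : wtB Y < 2 * a)
    (hx : x ∈ Rv a Y) : fmap a Y = redB (Mv a Y x) := by
  have hne : (Rv a Y).Nonempty := ⟨x, hx⟩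
  have hmin : (Rv a Y).min' hne = x :=
    Rv_subsingleton ha hwt _ ((Rv a Y).min'_mem hne) _ hx
  rw [fmap, dif_pos hne, hmin]

lemma numPaths_cons_eq {a x : ℕ} {Y : Finset ℕ} {r : List ℕ} (ha : 0 < a)
    (hwt : wtB Y < 2 * a) (hx : x ∈ Rv a Y) :
    numPaths Y (a :: r) = numPaths (Mv a Y x) r := by
  rw [numPaths_cons]
  have hR : Rv a Y = {x} := Finset.eq_singleton_iff_unique_mem.2
    ⟨hx, fun y hy => Rv_subsingleton ha hwt y hy x hx⟩
  rw [hR, Finset.sum_singleton]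

lemma upstep {a j : ℕ} {r : List ℕ} (ha : 0 < a) (hrpos : ∀ b ∈ r, 0 < b)
    {Z Y : Finset ℕ} {x : ℕ} (hZ0 : 0 ∉ Z) (hZw : wtB Z < a)
    (hx : x ∈ Rv a Y) (hMv : Mv a Y x = shiftB^[j] Z) :
    wtB Y = a + wtB Z ∧ numPaths Y (a :: r) = numPaths Z r ∧ fmap a Y = Z := by
  have h1 : wtB (Mv a Y x) = wtB Z := by rw [hMv, wtB_iterate]
  have h2 := Mv_wt hx
  have hwY : wtB Y = a + wtB Z := by omega
  have hwlt : wtB Y < 2 * a := by omega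
  refine ⟨hwY, ?_, ?_⟩
  · rw [numPaths_cons_eq ha hwlt hx, hMv, numPaths_iterate j r hrpos]
  · rw [fmap_eq ha hwlt hx, hMv, redB_iterate_eq, redB_of_not_mem hZ0]

lemma count_main : ∀ (l : List ℕ), SIl l →
    ((Bset l.sum).filter (fun Y => numPaths Y l ≠ 0)).card = l.prod
  | [], _ => by
      have hB : (Bset (List.sum [])).filter (fun Y => numPaths Y [] ≠ 0) = {∅} := by
        ext Y
        rw [Finset.mem_filter, mem_Bset, Finset.mem_singleton]
        constructor
        · rintro ⟨⟨h0, hw⟩, _⟩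
          rw [List.sum_nil] at hw
          have hr := (wtB_zero_iff Y).1 hw
          by_contra hne
          have hcard : Y.card ≠ 0 := fun h => hne (by rw [hr, h]; rfl)
          apply h0
          rw [hr, Finset.mem_range]
          omega
        · rintro rfl
          refine ⟨⟨by simp, by unfold wtB; simp⟩, ?_⟩
          rw [numPaths_nil]
          simp
      rw [hB]
      simp
  | a :: r, hSI => by
      obtain ⟨hra, hSIr⟩ := hSI
      have ha : 0 < a := by omega
      have hrpos : ∀ b ∈ r, 0 < b := SIl_pos hSIr
      have hsum' : (a :: r).sum = a + r.sum := by rw [List.sum_cons]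
      have hmapsto : ∀ Y ∈ (Bset ((a :: r).sum)).filter (fun Y => numPaths Y (a :: r) ≠ 0),
          fmap a Y ∈ (Bset r.sum).filter (fun Z => numPaths Z r ≠ 0) := by
        intro Y hY
        rw [Finset.mem_filter, mem_Bset] at hY
        obtain ⟨⟨h0, hw⟩, hnp⟩ := hY
        rw [hsum'] at hw
        have hwlt : wtB Y < 2 * a := by omega
        have hRne : (Rv a Y).Nonempty := by
          by_contra h
          rw [Finset.not_nonempty_iff_eq_empty] at h
          rw [numPaths_cons, h, Finset.sum_empty] at hnp
          exact hnp rfl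
        obtain ⟨x, hx⟩ := hRne
        have hf : fmap a Y = redB (Mv a Y x) := fmap_eq ha hwlt hx
        have hnp2 : numPaths (Mv a Y x) r ≠ 0 := by
          rw [numPaths_cons_eq ha hwlt hx] at hnp
          exact hnp
        obtain ⟨j, hj⟩ := redB_iterate (Mv a Y x)
        have hwM : wtB (Mv a Y x) = r.sum := by
          have := Mv_wt hx
          omega
        rw [Finset.mem_filter, mem_Bset, hf]
        refine ⟨⟨redB_zero _, ?_⟩, ?_⟩
        · have h5 := wtB_iterate j (redB (Mv a Y x))
          rw [← hj] at h5
          omega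
        · have h5 := numPaths_iterate j r hrpos (redB (Mv a Y x))
          rw [← hj] at h5
          rw [← h5]
          exact hnp2
      rw [Finset.card_eq_sum_card_fiberwise hmapsto]
      have hfib : ∀ Z ∈ (Bset r.sum).filter (fun Z => numPaths Z r ≠ 0),
          (((Bset ((a :: r).sum)).filter (fun Y => numPaths Y (a :: r) ≠ 0)).filter
            (fun Y => fmap a Y = Z)).card = a := by
        intro Z hZ
        rw [Finset.mem_filter, mem_Bset] at hZ
        obtain ⟨⟨hZ0, hZw⟩, hZnp⟩ := hZ
        have hZwa : wtB Z < a := by omega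
        have hZRv : Rv a Z = ∅ := Rv_empty_of_wt_lt hZwa
        -- the two families of hook additions
        have hcard1 : ∀ w ∈ Z.filter (fun w => w + a ∉ Z),
            (insert (w + a) (Z.erase w)).card = Z.card := by
          intro w hw
          rw [Finset.mem_filter] at hw
          rw [Finset.card_insert_of_notMem (fun h => hw.2 (Finset.mem_of_mem_erase h)),
            Finset.card_erase_of_mem hw.1]
          have : 1 ≤ Z.card := Finset.card_pos.2 ⟨w, hw.1⟩
          omega
        have hmemW : ∀ j ∈ (Finset.Icc 1 a).filter (fun j => a - j ∉ Z),
            0 ∈ shiftB^[j] Z ∧ a ∉ shiftB^[j] Z := by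
          intro j hj
          rw [Finset.mem_filter, Finset.mem_Icc] at hj
          constructor
          · exact mem_iterate.2 (Or.inl (by omega))
          · intro hmem
            rcases mem_iterate.1 hmem with h | ⟨h1, h2⟩
            · omega
            · exact hj.2 h2
        have hcard2 : ∀ j ∈ (Finset.Icc 1 a).filter (fun j => a - j ∉ Z),
            (insert a ((shiftB^[j] Z).erase 0)).card = Z.card + j := by
          intro j hj
          obtain ⟨h0W, haW⟩ := hmemW j hj
          rw [Finset.mem_filter, Finset.mem_Icc] at hj
          rw [Finset.card_insert_of_notMem (fun h => haW (Finset.mem_of_mem_erase h)),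
            Finset.card_erase_of_mem h0W, card_iterate]
          omega
        have hfibeq : (((Bset ((a :: r).sum)).filter (fun Y => numPaths Y (a :: r) ≠ 0)).filter
              (fun Y => fmap a Y = Z))
            = (Z.filter (fun w => w + a ∉ Z)).image (fun w => insert (w + a) (Z.erase w))
              ∪ ((Finset.Icc 1 a).filter (fun j => a - j ∉ Z)).image
                  (fun j => insert a ((shiftB^[j] Z).erase 0)) := by
          ext Y
          rw [Finset.mem_filter, Finset.mem_filter, mem_Bset, Finset.mem_union]
          constructor
          · rintro ⟨⟨⟨hY0, hYw⟩, hYnp⟩, hYf⟩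
            rw [hsum'] at hYw
            have hwlt : wtB Y < 2 * a := by omega
            have hRne : (Rv a Y).Nonempty := by
              by_contra h
              rw [Finset.not_nonempty_iff_eq_empty] at h
              rw [numPaths_cons, h, Finset.sum_empty] at hYnp
              exact hYnp rfl
            obtain ⟨x, hx⟩ := hRne
            have hf := fmap_eq ha hwlt hx
            rw [hf] at hYf
            obtain ⟨j, hj⟩ := redB_iterate (Mv a Y x)
            rw [hYf] at hj
            obtain ⟨hx1, hx2, hx3⟩ := mem_Rv.1 hx
            have hYrec : Y = insert x ((Mv a Y x).erase (x - a)) := by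
              unfold Mv
              rw [Finset.erase_insert (fun h => hx3 (Finset.mem_of_mem_erase h)),
                Finset.insert_erase hx1]
            rcases Nat.eq_zero_or_pos j with hj0 | hjpos
            · subst hj0
              rw [Function.iterate_zero_apply] at hj
              left
              rw [Finset.mem_image]
              refine ⟨x - a, ?_, ?_⟩
              · rw [Finset.mem_filter]
                constructor
                · rw [← hj]
                  exact mem_Mv.2 (Or.inl rfl)
                · rw [show x - a + a = x from by omega, ← hj, mem_Mv]
                  push_neg
                  exact ⟨by omega, fun h => absurd rfl h⟩
              · rw [show x - a + a = x from by omega, ← hj]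
                exact hYrec.symm
            · right
              have h0W : 0 ∈ shiftB^[j] Z := mem_iterate.2 (Or.inl hjpos)
              have hxa0 : x - a = 0 := by
                by_contra hne
                apply hY0
                have h01 : (0:ℕ) ∈ (Mv a Y x).erase (x - a) :=
                  Finset.mem_erase.2 ⟨fun h => hne h.symm, hj ▸ h0W⟩
                rw [hYrec]
                exact Finset.mem_insert_of_mem h01
              have hxa : x = a := by omega
              have hanW : a ∉ shiftB^[j] Z := by
                rw [← hj, mem_Mv]
                push_neg
                exact ⟨by omega, fun h => absurd hxa.symm h⟩
              have hja : j ≤ a ∧ a - j ∉ Z := by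
                rw [mem_iterate] at hanW
                push_neg at hanW
                exact ⟨by omega, hanW.2 (by omega)⟩
              rw [Finset.mem_image]
              refine ⟨j, Finset.mem_filter.2 ⟨Finset.mem_Icc.2 ⟨by omega, hja.1⟩, hja.2⟩, ?_⟩
              rw [← hj]
              rw [hxa0] at hYrec
              conv_rhs => rw [hYrec]
              rw [hxa]
          · rintro (h1 | h2)
            · rw [Finset.mem_image] at h1
              obtain ⟨w, hw, rfl⟩ := h1
              rw [Finset.mem_filter] at hw
              obtain ⟨hwZ, hwa⟩ := hw
              have hY0 : 0 ∉ insert (w + a) (Z.erase w) := by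
                intro h
                rcases Finset.mem_insert.1 h with h | h
                · omega
                · exact hZ0 (Finset.mem_of_mem_erase h)
              have hMv : Mv a (insert (w + a) (Z.erase w)) (w + a) = Z := by
                unfold Mv
                rw [show w + a - a = w from by omega,
                  Finset.erase_insert (fun h => hwa (Finset.mem_of_mem_erase h)),
                  Finset.insert_erase hwZ]
              have hx : w + a ∈ Rv a (insert (w + a) (Z.erase w)) := by
                rw [mem_Rv]
                refine ⟨Finset.mem_insert_self _ _, by omega, ?_⟩
                rw [show w + a - a = w from by omega]
                intro h
                rcases Finset.mem_insert.1 h with h | h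
                · omega
                · exact absurd (Finset.mem_of_mem_erase h) (fun _ => (Finset.mem_erase.1 h).1 rfl)
              obtain ⟨u1, u2, u3⟩ := upstep (j := 0) ha hrpos hZ0 hZwa hx
                (by rw [hMv, Function.iterate_zero_apply])
              refine ⟨⟨⟨hY0, by rw [hsum']; omega⟩, by rw [u2]; exact hZnp⟩, u3⟩
            · rw [Finset.mem_image] at h2
              obtain ⟨j, hj, rfl⟩ := h2
              obtain ⟨h0W, haW⟩ := hmemW j hj
              rw [Finset.mem_filter, Finset.mem_Icc] at hj
              have hY0 : 0 ∉ insert a ((shiftB^[j] Z).erase 0) := by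
                intro h
                rcases Finset.mem_insert.1 h with h | h
                · omega
                · exact (Finset.mem_erase.1 h).1 rfl
              have hMv : Mv a (insert a ((shiftB^[j] Z).erase 0)) a = shiftB^[j] Z := by
                unfold Mv
                rw [Nat.sub_self,
                  Finset.erase_insert (fun h => haW (Finset.mem_of_mem_erase h)),
                  Finset.insert_erase h0W]
              have hx : a ∈ Rv a (insert a ((shiftB^[j] Z).erase 0)) := by
                rw [mem_Rv]
                refine ⟨Finset.mem_insert_self _ _, le_rfl, ?_⟩
                rw [Nat.sub_self]
                exact hY0
              obtain ⟨u1, u2, u3⟩ := upstep ha hrpos hZ0 hZwa hx hMv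
              refine ⟨⟨⟨hY0, by rw [hsum']; omega⟩, by rw [u2]; exact hZnp⟩, u3⟩
        rw [hfibeq]
        have hdisj : Disjoint
            ((Z.filter (fun w => w + a ∉ Z)).image (fun w => insert (w + a) (Z.erase w)))
            (((Finset.Icc 1 a).filter (fun j => a - j ∉ Z)).image
              (fun j => insert a ((shiftB^[j] Z).erase 0))) := by
          rw [Finset.disjoint_left]
          intro Y hY1 hY2
          rw [Finset.mem_image] at hY1 hY2
          obtain ⟨w, hw, hYw⟩ := hY1
          obtain ⟨j, hj, hYj⟩ := hY2
          have c1 := hcard1 w hw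
          have c2 := hcard2 j hj
          rw [hYw] at c1
          rw [hYj] at c2
          rw [Finset.mem_filter, Finset.mem_Icc] at hj
          omega
        rw [Finset.card_union_of_disjoint hdisj]
        have hinj1 : ((Z.filter (fun w => w + a ∉ Z)).image
            (fun w => insert (w + a) (Z.erase w))).card
            = (Z.filter (fun w => w + a ∉ Z)).card := by
          apply Finset.card_image_of_injOn
          intro w hw w' hw' heq
          rw [Finset.mem_coe, Finset.mem_filter] at hw hw'
          by_contra hne
          have heq' : insert (w + a) (Z.erase w) = insert (w' + a) (Z.erase w') := heq
          have h1 : w ∈ insert (w' + a) (Z.erase w') :=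
            Finset.mem_insert_of_mem (Finset.mem_erase.2 ⟨hne, hw.1⟩)
          rw [← heq'] at h1
          rcases Finset.mem_insert.1 h1 with h | h
          · omega
          · exact (Finset.mem_erase.1 h).1 rfl
        have hinj2 : (((Finset.Icc 1 a).filter (fun j => a - j ∉ Z)).image
            (fun j => insert a ((shiftB^[j] Z).erase 0))).card
            = ((Finset.Icc 1 a).filter (fun j => a - j ∉ Z)).card := by
          apply Finset.card_image_of_injOn
          intro j hj j' hj' heq
          rw [Finset.mem_coe] at hj hj'
          have heq' : insert a ((shiftB^[j] Z).erase 0)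
              = insert a ((shiftB^[j'] Z).erase 0) := heq
          have c1 := hcard2 j hj
          have c2 := hcard2 j' hj'
          rw [heq'] at c1
          omega
        rw [hinj1, hinj2]
        -- arithmetic: the two families have a elements altogether
        have s1 : (Z.filter (fun w => w + a ∈ Z)).card
            = (Z.filter (fun z => a ≤ z ∧ z - a ∈ Z)).card := by
          apply Finset.card_nbij' (i := fun w => w + a) (j := fun z => z - a)
          · intro w hw
            simp only [Finset.mem_coe, Finset.mem_filter] at hw ⊢
            exact ⟨hw.2, by omega, by rw [show w + a - a = w from by omega]; exact hw.1⟩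
          · intro z hz
            rw [Finset.mem_coe, Finset.mem_filter] at hz ⊢
            obtain ⟨hz1, hz2, hz3⟩ := hz
            exact ⟨hz3, by rw [show z - a + a = z from by omega]; exact hz1⟩
          · intro w hw
            dsimp only
            omega
          · intro z hz
            rw [Finset.mem_coe, Finset.mem_filter] at hz
            dsimp only
            omega
        have s2 : (Z.filter (fun w => w + a ∈ Z)).card
              + (Z.filter (fun w => w + a ∉ Z)).card = Z.card :=
          Finset.card_filter_add_card_filter_not (fun w => w + a ∈ Z)
        have s3 : (Z.filter (fun z => z < a)).card
              + (Z.filter (fun z => ¬ z < a)).card = Z.card :=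
          Finset.card_filter_add_card_filter_not (fun z => z < a)
        have s4 : Z.filter (fun z => ¬ z < a) = Z.filter (fun z => a ≤ z ∧ z - a ∈ Z) := by
          ext z
          rw [Finset.mem_filter, Finset.mem_filter]
          constructor
          · rintro ⟨hz, hza⟩
            refine ⟨hz, by omega, ?_⟩
            by_contra hc
            have hmem : z ∈ Rv a Z := mem_Rv.2 ⟨hz, by omega, hc⟩
            rw [hZRv] at hmem
            exact absurd hmem (Finset.notMem_empty z)
          · rintro ⟨hz, h1, _⟩
            exact ⟨hz, by omega⟩
        have s5 : ((Finset.range a).filter (fun i => i ∉ Z)).card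
              + ((Finset.range a).filter (fun i => i ∈ Z)).card = a := by
          have := Finset.card_filter_add_card_filter_not
            (s := Finset.range a) (fun i => i ∈ Z)
          rw [Finset.card_range] at this
          omega
        have s6 : (Finset.range a).filter (fun i => i ∈ Z) = Z.filter (fun z => z < a) := by
          ext z
          rw [Finset.mem_filter, Finset.mem_filter, Finset.mem_range]
          exact ⟨fun h => ⟨h.2, h.1⟩, fun h => ⟨h.2, h.1⟩⟩
        have s7 : ((Finset.Icc 1 a).filter (fun j => a - j ∉ Z)).card
            = ((Finset.range a).filter (fun i => i ∉ Z)).card := by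
          apply Finset.card_nbij' (i := fun j => a - j) (j := fun i => a - i)
          · intro j hj
            rw [Finset.mem_coe, Finset.mem_filter, Finset.mem_Icc] at hj
            simp only [Finset.mem_coe, Finset.mem_filter, Finset.mem_range]
            exact ⟨by omega, hj.2⟩
          · intro i hi
            rw [Finset.mem_coe, Finset.mem_filter, Finset.mem_range] at hi
            simp only [Finset.mem_coe, Finset.mem_filter, Finset.mem_Icc]
            refine ⟨⟨by omega, by omega⟩, ?_⟩
            rw [show a - (a - i) = i from by omega]
            exact hi.2
          · intro j hj
            rw [Finset.mem_coe, Finset.mem_filter, Finset.mem_Icc] at hj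
            dsimp only
            omega
          · intro i hi
            rw [Finset.mem_coe, Finset.mem_filter, Finset.mem_range] at hi
            dsimp only
            omega
        have s4' := congrArg Finset.card s4
        have s6' := congrArg Finset.card s6
        have s8 : (Z.filter (fun z => z < a)).card ≤ a := by
          rw [← s6]
          calc ((Finset.range a).filter (fun i => i ∈ Z)).card
              ≤ (Finset.range a).card := Finset.card_filter_le _ _
            _ = a := Finset.card_range a
        omega
      rw [Finset.sum_congr rfl hfib, Finset.sum_const, smul_eq_mul, List.prod_cons,
        count_main r hSIr, Nat.mul_comm]

/-! ### binary replicate parity -/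

lemma np2_pow_replicate : ∀ (k : ℕ) (r : List ℕ) (X : Finset ℕ),
    np2 X (List.replicate (2 ^ k) 1 ++ r) = np2 X (2 ^ k :: r)
  | 0, r, X => by rw [pow_zero, List.replicate_one]; rfl
  | k + 1, r, X => by
      have h2 : (2:ℕ) ^ (k + 1) = 2 ^ k + 2 ^ k := by ring
      rw [h2, List.replicate_add, List.append_assoc,
        np2_pow_replicate k (List.replicate (2 ^ k) 1 ++ r) X,
        np2_congr_tail (fun Y => np2_pow_replicate k r Y) _ X,
        np2_doubling (pow_pos (by norm_num) k) r X]
      congr 2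
      omega

lemma np2_binary : ∀ (l : List ℕ) (X : Finset ℕ),
    np2 X (List.replicate ((l.map (fun r => 2 ^ r)).sum) 1)
      = np2 X (l.map (fun r => 2 ^ r))
  | [], X => by simp
  | b :: t, X => by
      rw [List.map_cons, List.sum_cons, List.replicate_add,
        np2_pow_replicate b (List.replicate ((t.map (fun r => 2 ^ r)).sum) 1) X,
        np2_congr_tail (fun Y => np2_binary t Y) _ X]

lemma cast_one_iff_odd (k : ℕ) : ((k : ZMod 2) = 1) ↔ Odd k := by
  rw [Nat.odd_iff]
  have h : ((k % 2 : ℕ) : ZMod 2) = (k : ZMod 2) := ZMod.natCast_mod k 2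
  rcases Nat.mod_two_eq_zero_or_one k with h2 | h2
  · constructor
    · intro hc
      exfalso
      rw [← h, h2] at hc
      exact absurd hc (by decide)
    · intro hc
      omega
  · constructor
    · intro _; exact h2
    · intro _
      rw [← h, h2]
      exact Nat.cast_one

lemma prod_pow_eq (l : List ℕ) : (l.map (fun r => 2 ^ r)).prod = 2 ^ l.sum := by
  induction l with
  | nil => simp
  | cons b t ih => simp [List.prod_cons, List.sum_cons, ih, pow_add]

lemma sum_pow_lt : ∀ (t : List ℕ) (b : ℕ), List.Pairwise (· > ·) t → (∀ x ∈ t, x < b) →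
    (t.map (fun r => 2 ^ r)).sum < 2 ^ b
  | [], b, _, _ => by
      simp only [List.map_nil, List.sum_nil]
      exact pow_pos (by norm_num) b
  | c :: t', b, hp, hlt => by
      obtain ⟨hc, ht⟩ := List.pairwise_cons.1 hp
      have ih := sum_pow_lt t' c ht (fun x hx => hc x hx)
      have hcb : c < b := hlt c (List.mem_cons_self)
      rw [List.map_cons, List.sum_cons]
      have h1 : 2 ^ c + 2 ^ c ≤ 2 ^ b := by
        rw [← two_mul, ← pow_succ']
        exact Nat.pow_le_pow_right (by norm_num) (by omega)
      omega

lemma SIl_map_pow : ∀ {l : List ℕ}, List.Pairwise (· > ·) l → SIl (l.map (fun r => 2 ^ r))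
  | [], _ => trivial
  | b :: t, hp => by
      obtain ⟨hb, ht⟩ := List.pairwise_cons.1 hp
      exact ⟨sum_pow_lt t b ht (fun x hx => hb x hx), SIl_map_pow ht⟩

lemma sortedParts_of_desc {n : ℕ} (μ : n.Partition) (L : List ℕ)
    (hL : List.Pairwise (· ≥ ·) L) (hparts : μ.parts = ↑L) : sortedParts μ = L := by
  rw [sortedParts, hparts, sort_coe_desc L hL, List.reverse_reverse]

end MNaux


open MNaux

/-- Write `n = 2^{r₁} + ⋯ + 2^{r_t}` in binary, `r₁ > ⋯ > r_t ≥ 0`, and let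
`μ = (2^{r₁}, …, 2^{r_t})`.  The set of partitions `lam` of `n` with
`χ^lam(μ) ≠ 0` is exactly the set of `lam` for which `χ^lam` has odd degree
(the degree being the number of standard Young tableaux of shape `lam`, i.e.
the number of ways of removing `n` `1`-hooks), and this set has cardinality
`2^{r₁ + ⋯ + r_t}`. -/
theorem support_of_binary_type_is_odd_degree_chars (n : ℕ) (hn : 1 ≤ n) (l : List ℕ)
    (hl : List.Chain' (· > ·) l) (hsum : (l.map (fun r => 2 ^ r)).sum = n)
    (μ : n.Partition) (hμ : μ.parts = (l.map (fun r => 2 ^ r) : List ℕ)) :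
    {lam : n.Partition | charValue lam μ ≠ 0} =
      {lam : n.Partition | Odd (numPaths (betaSet (sortedParts lam)) (List.replicate n 1))} ∧
    Nat.card {lam : n.Partition // charValue lam μ ≠ 0} = 2 ^ l.sum := by
  classical
  have hpair : List.Pairwise (· > ·) l := List.isChain_iff_pairwise.1 hl
  have hSI : SIl (l.map (fun r => 2 ^ r)) := SIl_map_pow hpair
  have hLpair : List.Pairwise (· ≥ ·) (l.map (fun r => 2 ^ r)) :=
    hpair.map _ (fun a b hab => Nat.pow_le_pow_right (by norm_num) (le_of_lt hab))
  have hspμ : sortedParts μ = l.map (fun r => 2 ^ r) := sortedParts_of_desc μ _ hLpair hμ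
  have key : ∀ lam : n.Partition,
      (charValue lam μ ≠ 0 ↔
        numPaths (betaSet (sortedParts lam)) (l.map (fun r => 2 ^ r)) = 1) ∧
      (Odd (numPaths (betaSet (sortedParts lam)) (List.replicate n 1)) ↔
        numPaths (betaSet (sortedParts lam)) (l.map (fun r => 2 ^ r)) = 1) := by
    intro lam
    have hwt : wtB (betaSet (sortedParts lam)) = n := betaSet_wt lam
    have hle : numPaths (betaSet (sortedParts lam)) (l.map (fun r => 2 ^ r)) ≤ 1 :=
      numPaths_le_one _ hSI _ (by rw [hwt, hsum])
    constructor
    · unfold charValue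
      rw [hspμ]
      unfold charList
      exact charSum_ne_zero_iff hle
    · have hpar : np2 (betaSet (sortedParts lam)) (List.replicate n 1)
          = np2 (betaSet (sortedParts lam)) (l.map (fun r => 2 ^ r)) := by
        have h := np2_binary l (betaSet (sortedParts lam))
        rwa [hsum] at h
      unfold np2 at hpar
      constructor
      · intro hodd
        have h1 : ((numPaths (betaSet (sortedParts lam)) (List.replicate n 1) : ℕ) : ZMod 2)
            = 1 := (cast_one_iff_odd _).2 hodd
        rw [hpar] at h1
        rcases Nat.le_one_iff_eq_zero_or_eq_one.1 hle with h2 | h2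
        · rw [h2] at h1
          exact absurd h1 (by decide)
        · exact h2
      · intro h1
        rw [← cast_one_iff_odd, hpar, h1]
        exact Nat.cast_one
  constructor
  · ext lam
    simp only [Set.mem_setOf_eq]
    rw [(key lam).1, (key lam).2]
  · have hcount := count_main (l.map (fun r => 2 ^ r)) hSI
    rw [hsum] at hcount
    have hset : ∀ lam : n.Partition, charValue lam μ ≠ 0 ↔
        betaSet (sortedParts lam) ∈ (Bset n).filter
          (fun Y => numPaths Y (l.map (fun r => 2 ^ r)) ≠ 0) := by
      intro lam
      rw [Finset.mem_filter, mem_Bset, (key lam).1]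
      constructor
      · intro h1
        exact ⟨⟨betaSet_zero lam, betaSet_wt lam⟩, by rw [h1]; omega⟩
      · rintro ⟨⟨h0, hwt⟩, hnp⟩
        have hle : numPaths (betaSet (sortedParts lam)) (l.map (fun r => 2 ^ r)) ≤ 1 :=
          numPaths_le_one _ hSI _ (by rw [betaSet_wt lam, hsum])
        omega
    have hbij : Function.Bijective (fun lam : {lam : n.Partition // charValue lam μ ≠ 0} =>
        (⟨betaSet (sortedParts lam.1), (hset lam.1).1 lam.2⟩ :
          {Y // Y ∈ (Bset n).filter (fun Y => numPaths Y (l.map (fun r => 2 ^ r)) ≠ 0)})) := by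
      constructor
      · rintro ⟨p, hp⟩ ⟨q, hq⟩ h
        have h2 := congrArg Subtype.val h
        simp only at h2
        exact Subtype.ext (sortedParts_inj h2)
      · rintro ⟨Y, hY⟩
        have hY' := hY
        rw [Finset.mem_filter, mem_Bset] at hY'
        obtain ⟨⟨h0, hwt⟩, hnp⟩ := hY'
        obtain ⟨p, hp⟩ := exists_partition Y h0 hwt
        refine ⟨⟨p, ?_⟩, ?_⟩
        · rw [hset p, hp]
          exact hY
        · exact Subtype.ext hp
    rw [Nat.card_eq_of_bijective _ hbij, Nat.card_eq_fintype_card, Fintype.card_coe,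
      hcount, prod_pow_eq]
end

section
/- Write n = 2^{r_1} + ... + 2^{r_t} in binary, r_1 > ... > r_t ≥ 0, and let P be a Sylow 2-subgroup of S_n. Then |P/P'| = 2^{r_1 + r_2 + ... + r_t}, where P' is the commutator subgroup of P. -/
open Multiplicative

abbrev C2 := Multiplicative (ZMod 2)

def C2hom {M : Type*} [Monoid M] (a : M) (ha : a ^ 2 = 1) : C2 →* M where
  toFun x := a ^ (Multiplicative.toAdd x).val
  map_one' := by simp
  map_mul' x y := by
    have h : ∀ m : ℕ, a ^ (m % 2) = a ^ m := fun m => (pow_eq_pow_mod m ha).symm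
    show a ^ (Multiplicative.toAdd (x * y)).val = _
    rw [toAdd_mul, ZMod.val_add, h, pow_add]

@[simp] lemma C2hom_gen {M : Type*} [Monoid M] (a : M) (ha : a ^ 2 = 1) :
    C2hom a ha (ofAdd 1) = a := by
  show a ^ (Multiplicative.toAdd (ofAdd (1 : ZMod 2))).val = a
  have : (Multiplicative.toAdd (ofAdd (1 : ZMod 2))).val = 1 := by decide
  rw [this, pow_one]

lemma C2_cases (x : C2) : x = 1 ∨ x = ofAdd 1 := by
  have : ∀ y : ZMod 2, y = 0 ∨ y = 1 := by decide
  rcases this (Multiplicative.toAdd x) with h | h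
  · left; rw [← ofAdd_toAdd x, h]; rfl
  · right; rw [← ofAdd_toAdd x, h]

lemma prodComm_sq (N : Type*) [Group N] : (MulEquiv.prodComm : (N × N) ≃* (N × N)) ^ 2 = 1 := by
  ext x <;> rfl

def swapφ (N : Type*) [Group N] : C2 →* MulAut (N × N) :=
  C2hom (MulEquiv.prodComm : (N × N) ≃* (N × N)) (prodComm_sq N)

def W : ℕ → GrpCat.{0}
  | 0 => GrpCat.of PUnit.{1}
  | (r+1) => GrpCat.of ((W r × W r) ⋊[swapφ (W r)] C2)

lemma W_zero : W 0 = GrpCat.of PUnit.{1} := rfl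
lemma W_succ (r : ℕ) : W (r+1) = GrpCat.of ((W r × W r) ⋊[swapφ (W r)] C2) := rfl

def sdEquivProd {N G : Type*} [Group N] [Group G] (φ : G →* MulAut N) :
    (N ⋊[φ] G) ≃ N × G where
  toFun x := (x.1, x.2)
  invFun p := ⟨p.1, p.2⟩
  left_inv _ := rfl
  right_inv _ := rfl

instance sd_finite {N G : Type*} [Group N] [Group G] (φ : G →* MulAut N) [Finite N] [Finite G] :
    Finite (N ⋊[φ] G) :=
  Finite.of_equiv _ (sdEquivProd φ).symm

instance W_finite : ∀ r, Finite (W r)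
  | 0 => inferInstanceAs (Finite PUnit.{1})
  | (r+1) => by
    have := W_finite r
    exact inferInstanceAs (Finite ((W r × W r) ⋊[swapφ (W r)] C2))

lemma card_C2 : Nat.card C2 = 2 := by
  simp [Nat.card_eq_fintype_card]

lemma card_W : ∀ r, Nat.card (W r) = 2 ^ (2 ^ r - 1)
  | 0 => by
    rw [pow_zero]
    exact Nat.card_eq_one_iff_unique.mpr ⟨⟨fun a b => rfl⟩, ⟨(1 : W 0)⟩⟩
  | (r+1) => by
    show Nat.card ((W r × W r) ⋊[swapφ (W r)] C2) = _
    rw [Nat.card_congr (sdEquivProd _), Nat.card_prod, Nat.card_prod, card_W r, card_C2,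
      ← pow_add]
    have h1 : 1 ≤ 2 ^ r := Nat.one_le_two_pow
    rw [← pow_succ]
    congr 1
    have : 2 ^ (r+1) = 2 ^ r + 2 ^ r := by rw [pow_succ]; omega
    omega

lemma map_mem_commutator' {G K : Type*} [Group G] [Group K] (f : G →* K) {x : G}
    (hx : x ∈ commutator G) : f x ∈ commutator K := by
  have h := Subgroup.map_commutator (H₁ := (⊤ : Subgroup G)) (H₂ := ⊤) f
  have hx' : f x ∈ Subgroup.map f (commutator G) := Subgroup.mem_map_of_mem f hx
  rw [commutator_def, h] at hx'
  exact Subgroup.commutator_mono le_top le_top hx'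

lemma ker_of' {G : Type*} [Group G] :
    (Abelianization.of : G →* Abelianization G).ker = commutator G := by
  ext x
  exact QuotientGroup.eq_one_iff x

lemma card_abelianization_eq {G A : Type*} [Group G] [CommGroup A] (f : G →* A)
    (hs : Function.Surjective f) (hk : f.ker = commutator G) :
    Nat.card (Abelianization G) = Nat.card A := by
  have e : (G ⧸ commutator G) ≃* A :=
    (QuotientGroup.quotientMulEquivOfEq hk.symm).trans
      (QuotientGroup.quotientKerEquivOfSurjective f hs)
  exact Nat.card_congr (e.toEquiv : Abelianization G ≃ A)

lemma swapφ_gen (N : Type*) [Group N] :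
    swapφ N (ofAdd 1) = (MulEquiv.prodComm : (N × N) ≃* (N × N)) := C2hom_gen _ _

lemma ofAdd_one_inv : (ofAdd (1 : ZMod 2))⁻¹ = ofAdd 1 := by decide

lemma ofAdd_one_mul_self : (ofAdd (1 : ZMod 2)) * (ofAdd 1) = 1 := by decide

lemma card_ab_W : ∀ r, Nat.card (Abelianization (W r)) = 2 ^ r
  | 0 => by
    haveI : Subsingleton (W 0) := inferInstanceAs (Subsingleton PUnit.{1})
    rw [pow_zero, card_abelianization_eq (1 : W 0 →* PUnit.{1})
      (fun x => ⟨1, Subsingleton.elim _ _⟩)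
      (by
        have hall : ∀ (S : Subgroup (W 0)) x, x ∈ S := fun S x => by
          rw [Subsingleton.elim x (1 : W 0)]; exact one_mem S
        ext x
        simp [hall])]
    exact Nat.card_eq_one_iff_unique.mpr ⟨inferInstance, inferInstance⟩
  | (r+1) => by
    show Nat.card (Abelianization ((W r × W r) ⋊[swapφ (W r)] C2)) = _
    set H := (W r : Type) with hH
    let f₁ : (H × H) →* Abelianization (W r) :=
      (Abelianization.of.comp (MonoidHom.fst H H)) * (Abelianization.of.comp (MonoidHom.snd H H))
    have hf₁ : ∀ p : H × H, f₁ p = Abelianization.of p.1 * Abelianization.of p.2 := fun p => rfl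
    have hcompat : ∀ g : C2, f₁.comp ((swapφ (W r)) g).toMonoidHom =
        (MulAut.conj ((1 : C2 →* Abelianization (W r)) g)).toMonoidHom.comp f₁ := by
      intro g
      refine MonoidHom.ext fun p => ?_
      have hrhs : ((MulAut.conj ((1 : C2 →* Abelianization (W r)) g)).toMonoidHom.comp f₁) p
          = f₁ p := by simp
      rw [hrhs]
      rcases C2_cases g with hg | hg
      · rw [hg, map_one]; rfl
      · rw [hg, swapφ_gen]
        show f₁ (p.2, p.1) = f₁ p
        rw [hf₁, hf₁, mul_comm]
    let fA := SemidirectProduct.lift f₁ 1 hcompat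
    let f : ((H × H) ⋊[swapφ (W r)] C2) →* (Abelianization (W r) × C2) :=
      fA.prod SemidirectProduct.rightHom
    have hfapp : ∀ z : (H × H) ⋊[swapφ (W r)] C2,
        f z = (Abelianization.of z.left.1 * Abelianization.of z.left.2, z.right) := by
      intro z
      show (fA z, SemidirectProduct.rightHom z) = _
      congr 1
      show f₁ z.left * (1 : C2 →* Abelianization (W r)) z.right = _
      rw [hf₁]; simp
    have hsurj : Function.Surjective f := by
      rintro ⟨x, ε⟩
      refine QuotientGroup.induction_on x ?_
      intro a
      exact ⟨⟨(a, 1), ε⟩, by rw [hfapp]; simp; rfl⟩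
    have hker : f.ker = commutator _ := by
      refine le_antisymm ?_ (Abelianization.commutator_subset_ker f)
      rintro ⟨⟨a, b⟩, g⟩ hz
      rw [MonoidHom.mem_ker, hfapp, Prod.mk_eq_one] at hz
      obtain ⟨hab, hg⟩ := hz
      have hcomm : a * b ∈ commutator (W r) := by
        rw [← ker_of', MonoidHom.mem_ker, map_mul]
        exact hab
      have key1 : (⟨(a, a⁻¹), 1⟩ : (H × H) ⋊[swapφ (W r)] C2) ∈
          commutator ((H × H) ⋊[swapφ (W r)] C2) := by
        have heq : (⟨(a, a⁻¹), 1⟩ : (H × H) ⋊[swapφ (W r)] C2) =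
            @Bracket.bracket _ _ (@commutatorElement ((H × H) ⋊[swapφ (W r)] C2) inferInstance) (SemidirectProduct.inl (a, 1) : (H × H) ⋊[swapφ (W r)] C2) (SemidirectProduct.inr (ofAdd 1) : (H × H) ⋊[swapφ (W r)] C2) := by
          rw [commutatorElement_def]
          refine SemidirectProduct.ext ?_ ?_
          · simp [SemidirectProduct.mul_left, SemidirectProduct.mul_right,
              SemidirectProduct.inv_left, SemidirectProduct.inv_right, ofAdd_one_inv,
              swapφ_gen]
          · simp [SemidirectProduct.mul_right, SemidirectProduct.inv_right, ofAdd_one_inv,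
              ofAdd_one_mul_self]
        rw [heq, commutator_def]
        exact Subgroup.commutator_mem_commutator (Subgroup.mem_top _) (Subgroup.mem_top _)
      have key2 : (⟨(1, a * b), 1⟩ : (H × H) ⋊[swapφ (W r)] C2) ∈
          commutator ((H × H) ⋊[swapφ (W r)] C2) :=
        map_mem_commutator' (SemidirectProduct.inl.comp (MonoidHom.inr H H)) hcomm
      have hsplit : (⟨(a, b), g⟩ : (H × H) ⋊[swapφ (W r)] C2) =
          ⟨(a, a⁻¹), 1⟩ * ⟨(1, a * b), 1⟩ := by
        refine SemidirectProduct.ext ?_ ?_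
        · rw [SemidirectProduct.mul_left]
          simp [Prod.ext_iff, mul_assoc]
        · rw [SemidirectProduct.mul_right, hg, mul_one]
      rw [hsplit]
      exact mul_mem key1 key2
    rw [card_abelianization_eq f hsurj hker, Nat.card_prod, card_ab_W r, card_C2, pow_succ]

def permCongrHom {α β : Type*} (e : α ≃ β) : Equiv.Perm α →* Equiv.Perm β where
  toFun p := e.permCongr p
  map_one' := e.permCongr_refl
  map_mul' p q := by
    ext x
    simp [Equiv.permCongr_apply, Equiv.Perm.mul_apply]

lemma permCongrHom_injective {α β : Type*} (e : α ≃ β) :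
    Function.Injective (permCongrHom e) := fun _ _ h => e.permCongr.injective h

lemma sumComm_sq (β : Type*) : ((Equiv.sumComm β β : Equiv.Perm (β ⊕ β))) ^ 2 = 1 := by
  ext x
  rw [sq]
  cases x <;> simp [Equiv.Perm.mul_apply, Equiv.Perm.inv_def]

lemma sumComm_conj {β : Type*} (p q : Equiv.Perm β) :
    (Equiv.sumComm β β : Equiv.Perm (β ⊕ β)) * Equiv.sumCongr p q *
      ((Equiv.sumComm β β : Equiv.Perm (β ⊕ β)))⁻¹ = Equiv.sumCongr q p := by
  ext x
  cases x <;> simp [Equiv.Perm.mul_apply, Equiv.Perm.inv_def]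

def Fj {M β : Type*} [Group M] (j : M →* Equiv.Perm β) : (M × M) →* Equiv.Perm (β ⊕ β) :=
  (Equiv.Perm.sumCongrHom β β).comp (j.prodMap j)

lemma Fj_apply {M β : Type*} [Group M] (j : M →* Equiv.Perm β) (p : M × M) :
    Fj j p = Equiv.sumCongr (j p.1) (j p.2) := rfl

def sumf₂ (β : Type*) : C2 →* Equiv.Perm (β ⊕ β) :=
  C2hom (Equiv.sumComm β β : Equiv.Perm (β ⊕ β)) (sumComm_sq β)

lemma compatW {β : Type*} (r : ℕ) (j : (W r : Type) →* Equiv.Perm β) :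
    ∀ g : C2, (Fj j).comp ((swapφ (W r)) g).toMonoidHom =
      (MulAut.conj (sumf₂ β g)).toMonoidHom.comp (Fj j) := by
  intro g
  rcases C2_cases g with hg | hg <;> subst hg
  · rw [map_one, map_one]
    rfl
  · refine MonoidHom.ext fun p => ?_
    show Fj j ((swapφ (W r)) (ofAdd 1) p) = MulAut.conj (sumf₂ β (ofAdd 1)) (Fj j p)
    rw [swapφ_gen]
    show Fj j (p.2, p.1) = MulAut.conj (sumf₂ β (ofAdd 1)) (Fj j p)
    have hs : sumf₂ β (ofAdd 1) = (Equiv.sumComm β β : Equiv.Perm (β ⊕ β)) := C2hom_gen _ _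
    rw [hs, Fj_apply, Fj_apply, MulAut.conj_apply, sumComm_conj]

def eqv (r : ℕ) : (Fin (2 ^ r) ⊕ Fin (2 ^ r)) ≃ Fin (2 ^ (r + 1)) :=
  finSumFinEquiv.trans (finCongr (by rw [pow_succ]; omega))

def ι : (r : ℕ) → ((W r : Type) →* Equiv.Perm (Fin (2 ^ r)))
  | 0 => 1
  | (r+1) =>
    (permCongrHom (eqv r)).comp (SemidirectProduct.lift (Fj (ι r)) (sumf₂ _) (compatW r (ι r)))

lemma ι_injective : ∀ r, Function.Injective (ι r)
  | 0 => by
    haveI : Subsingleton (W 0) := inferInstanceAs (Subsingleton PUnit.{1})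
    exact fun a b _ => Subsingleton.elim a b
  | (r+1) => by
    rw [injective_iff_map_eq_one]
    rintro ⟨⟨p, q⟩, g⟩ h
    have h1 : SemidirectProduct.lift (Fj (ι r)) (sumf₂ _) (compatW r (ι r)) ⟨(p, q), g⟩ = 1 :=
      permCongrHom_injective (eqv r) (by rw [← map_one (permCongrHom (eqv r))] at h; exact h)
    have h2 : Fj (ι r) (p, q) * sumf₂ _ g = 1 := h1
    rcases C2_cases g with hg | hg <;> subst hg
    · rw [map_one, mul_one, Fj_apply] at h2
      have h3 : Equiv.Perm.sumCongrHom _ _ (ι r p, ι r q) = 1 := h2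
      have h4 : (ι r p, ι r q) = (1, 1) := by
        apply Equiv.Perm.sumCongrHom_injective
        rw [h3, Prod.mk_one_one, map_one]
      rw [Prod.mk.injEq] at h4
      have hp : p = 1 := ι_injective r (by rw [h4.1, map_one])
      have hq : q = 1 := ι_injective r (by rw [h4.2, map_one])
      subst hp; subst hq; rfl
    · exfalso
      have hs : sumf₂ (Fin (2 ^ r)) (ofAdd 1) = (Equiv.sumComm _ _ : Equiv.Perm _) :=
        C2hom_gen _ _
      rw [hs, Fj_apply] at h2
      have := congrArg (fun (π : Equiv.Perm (Fin (2 ^ r) ⊕ Fin (2 ^ r))) =>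
        π (Sum.inl ⟨0, Nat.pow_pos (n := r) (by norm_num)⟩)) h2
      simp [Equiv.Perm.mul_apply] at this

def WL : List ℕ → GrpCat.{0}
  | [] => GrpCat.of PUnit.{1}
  | r :: t => GrpCat.of (Prod (W r) (WL t))

instance GL_finite : ∀ l, Finite (WL l)
  | [] => inferInstanceAs (Finite PUnit.{1})
  | r :: t => by
    have := GL_finite t
    exact inferInstanceAs (Finite (Prod (W r) (WL t)))

lemma card_GL : ∀ l : List ℕ, Nat.card (WL l) = 2 ^ ((l.map (fun r => 2 ^ r - 1)).sum)
  | [] => Nat.card_eq_one_iff_unique.mpr ⟨⟨fun a b => rfl⟩, ⟨(1 : WL [])⟩⟩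
  | r :: t => by
    show Nat.card (Prod (W r) (WL t)) = _
    rw [Nat.card_prod, card_W, card_GL t, ← pow_add, List.map_cons, List.sum_cons]

lemma of_surjective {G : Type*} [Group G] :
    Function.Surjective (Abelianization.of : G →* Abelianization G) := fun x =>
  QuotientGroup.induction_on x fun a => ⟨a, rfl⟩

lemma card_ab_GL : ∀ l : List ℕ, Nat.card (Abelianization (WL l)) = 2 ^ l.sum
  | [] => by
    haveI : Subsingleton (WL []) := inferInstanceAs (Subsingleton PUnit.{1})
    rw [List.sum_nil, pow_zero, card_abelianization_eq (1 : WL [] →* PUnit.{1})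
      (fun x => ⟨1, Subsingleton.elim _ _⟩)
      (by
        have hall : ∀ (S : Subgroup (WL [])) x, x ∈ S := fun S x => by
          rw [Subsingleton.elim x (1 : WL [])]; exact one_mem S
        ext x
        simp [hall])]
    exact Nat.card_eq_one_iff_unique.mpr ⟨inferInstance, inferInstance⟩
  | r :: t => by
    show Nat.card (Abelianization (Prod (W r) (WL t))) = _
    have hker : (MonoidHom.prodMap (Abelianization.of (G := W r))
        (Abelianization.of (G := WL t))).ker = commutator _ := by
      rw [MonoidHom.ker_prodMap, ker_of', ker_of', commutator_def, commutator_def,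
        commutator_def, ← Subgroup.commutator_prod_prod, Subgroup.top_prod_top]
    rw [card_abelianization_eq _ (Function.Surjective.prodMap of_surjective of_surjective) hker,
      Nat.card_prod, card_ab_W, card_ab_GL t, ← pow_add, List.sum_cons]

def sumLen (l : List ℕ) : ℕ := (l.map (fun r => 2 ^ r)).sum

def ιL : (l : List ℕ) → ((WL l : Type) →* Equiv.Perm (Fin (sumLen l)))
  | [] => 1
  | r :: t =>
    (permCongrHom ((finSumFinEquiv : Fin (2 ^ r) ⊕ Fin (sumLen t) ≃ Fin (2 ^ r + sumLen t)))).comp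
      ((Equiv.Perm.sumCongrHom _ _).comp ((ι r).prodMap (ιL t)))

lemma ιL_injective : ∀ l, Function.Injective (ιL l)
  | [] => by
    haveI : Subsingleton (WL []) := inferInstanceAs (Subsingleton PUnit.{1})
    exact fun a b _ => Subsingleton.elim a b
  | r :: t => by
    show Function.Injective ((permCongrHom _).comp
      ((Equiv.Perm.sumCongrHom _ _).comp ((ι r).prodMap (ιL t))))
    refine (permCongrHom_injective _).comp (Equiv.Perm.sumCongrHom_injective.comp ?_)
    show Function.Injective (Prod.map (ι r) (ιL t))
    exact Function.Injective.prodMap (ι_injective r) (ιL_injective t)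

lemma sum_split (l : List ℕ) (hp : l.Pairwise (· > ·)) :
    (l.map (fun r => 2 ^ r)).sum =
      2 * (((l.filter (fun x => x ≠ 0)).map (fun x => 2 ^ (x - 1))).sum) +
        (if 0 ∈ l then 1 else 0) := by
  induction l with
  | nil => simp
  | cons a t ih =>
    obtain ⟨h1, h2⟩ := List.pairwise_cons.mp hp
    rcases Nat.eq_zero_or_pos a with ha | ha
    · subst ha
      have ht : t = [] := by
        cases t with
        | nil => rfl
        | cons b s => exact absurd (h1 b (List.mem_cons_self (a := b) (l := s))) (by omega)
      subst ht
      simp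
    · have h0 : ¬(a = 0) := by omega
      have hmem : (0 ∈ a :: t) ↔ (0 ∈ t) := by
        rw [List.mem_cons]
        constructor
        · rintro (h | h)
          · omega
          · exact h
        · exact Or.inr
      have hcond : (decide (a ≠ 0)) = true := by simp [h0]
      have hpow : 2 ^ a = 2 * 2 ^ (a - 1) := by
        rw [← pow_succ']
        congr 1
        omega
      have hih := ih h2
      simp only [List.map_cons, List.sum_cons, List.filter_cons, hcond, if_true, hmem]
      omega

lemma filter_len (l : List ℕ) (hp : l.Pairwise (· > ·)) :
    (l.filter (fun x => x ≠ 0)).length + (if 0 ∈ l then 1 else 0) = l.length := by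
  induction l with
  | nil => simp
  | cons a t ih =>
    obtain ⟨h1, h2⟩ := List.pairwise_cons.mp hp
    rcases Nat.eq_zero_or_pos a with ha | ha
    · subst ha
      have ht : t = [] := by
        cases t with
        | nil => rfl
        | cons b s => exact absurd (h1 b (List.mem_cons_self (a := b) (l := s))) (by omega)
      subst ht
      simp
    · have h0 : ¬(a = 0) := by omega
      have hmem : (0 ∈ a :: t) ↔ (0 ∈ t) := by
        rw [List.mem_cons]
        constructor
        · rintro (h | h)
          · omega
          · exact h
        · exact Or.inr
      have hcond : (decide (a ≠ 0)) = true := by simp [h0]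
      have hih := ih h2
      simp only [List.filter_cons, hcond, if_true, hmem, List.length_cons]
      omega

lemma pairwise_filter_pred (l : List ℕ) (hp : l.Pairwise (· > ·)) :
    ((l.filter (fun x => x ≠ 0)).map (fun x => x - 1)).Pairwise (· > ·) := by
  rw [List.pairwise_map]
  have h1 : (l.filter (fun x => x ≠ 0)).Pairwise (· > ·) :=
    hp.sublist (List.filter_sublist (l := l))
  refine List.Pairwise.imp_of_mem ?_ h1
  intro a b ha hb hab
  have hb0 : b ≠ 0 := by simpa using List.of_mem_filter hb
  omega

lemma digits_sum_of_pairwise :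
    ∀ n : ℕ, ∀ l : List ℕ, l.Pairwise (· > ·) →
      (l.map (fun r => 2 ^ r)).sum = n → (Nat.digits 2 n).sum = l.length := by
  intro n
  induction n using Nat.strong_induction_on with
  | _ n ih =>
    intro l hp hs
    rcases Nat.eq_zero_or_pos n with h0 | h0
    · subst h0
      have hl : l = [] := by
        cases l with
        | nil => rfl
        | cons a t =>
          rw [List.map_cons, List.sum_cons] at hs
          have : 0 < 2 ^ a := Nat.pow_pos (n := a) (by norm_num)
          omega
      subst hl
      simp
    · rw [Nat.digits_def' (by norm_num : 1 < 2) h0, List.sum_cons]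
      set l' := (l.filter (fun x => x ≠ 0)).map (fun x => x - 1) with hl'
      have hsplit := sum_split l hp
      rw [hs] at hsplit
      have hml : (l'.map (fun r => 2 ^ r)).sum =
          ((l.filter (fun x => x ≠ 0)).map (fun x => 2 ^ (x - 1))).sum := by
        rw [hl', List.map_map]
        rfl
      have hif : (if 0 ∈ l then 1 else 0) ≤ 1 := by split <;> omega
      have hdiv : (l'.map (fun r => 2 ^ r)).sum = n / 2 := by omega
      have hrec := ih (n / 2) (Nat.div_lt_self h0 one_lt_two) l'
        (pairwise_filter_pred l hp) hdiv
      rw [hrec]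
      have hlen := filter_len l hp
      have hlenl' : l'.length = (l.filter (fun x => x ≠ 0)).length := List.length_map _
      have hmod : n % 2 = (if 0 ∈ l then 1 else 0) := by omega
      by_cases h00 : 0 ∈ l
      · simp only [h00, if_true] at hmod hlen
        omega
      · simp only [h00, if_false] at hmod hlen
        omega

lemma sum_sub_one (l : List ℕ) :
    (l.map (fun r => 2 ^ r - 1)).sum + l.length = (l.map (fun r => 2 ^ r)).sum := by
  induction l with
  | nil => simp
  | cons a t ih =>
    simp only [List.map_cons, List.sum_cons, List.length_cons]
    have : 0 < 2 ^ a := Nat.pow_pos (n := a) (by norm_num)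
    omega

/-- Write `n = 2^{r₁} + ⋯ + 2^{r_t}` in binary, `r₁ > ⋯ > r_t ≥ 0`, and let
`P` be a Sylow `2`-subgroup of `S_n`.  Then `|P/P'| = 2^{r₁ + ⋯ + r_t}`,
where `P'` is the commutator subgroup of `P`. -/
theorem sylow_two_abelianization_card (n : ℕ) (l : List ℕ)
    (hl : List.Chain' (· > ·) l) (hsum : (l.map (fun r => 2 ^ r)).sum = n)
    (P : Sylow 2 (Equiv.Perm (Fin n))) :
    Nat.card (Abelianization ↥(P : Subgroup (Equiv.Perm (Fin n)))) = 2 ^ l.sum := by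
  haveI : Fact (Nat.Prime 2) := ⟨Nat.prime_two⟩
  subst hsum
  have hpair : l.Pairwise (· > ·) := List.isChain_iff_pairwise.mp hl
  let Q : Subgroup (Equiv.Perm (Fin (sumLen l))) := (ιL l).range
  have e0 : (WL l : Type) ≃* Q := MonoidHom.ofInjective (ιL_injective l)
  have hcardQ : Nat.card Q = 2 ^ ((l.map (fun r => 2 ^ r - 1)).sum) := by
    rw [← card_GL l]
    exact (Nat.card_congr e0.toEquiv).symm
  have hdigits : (Nat.digits 2 (sumLen l)).sum = l.length :=
    digits_sum_of_pairwise (sumLen l) l hpair rfl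
  have hcard_eq : Nat.card Q =
      2 ^ ((Nat.card (Equiv.Perm (Fin (sumLen l)))).factorization 2) := by
    have hfact : (Nat.card (Equiv.Perm (Fin (sumLen l)))).factorization 2 =
        sumLen l - l.length := by
      rw [Nat.card_eq_fintype_card, Fintype.card_perm, Fintype.card_fin,
        Nat.factorization_def _ Nat.prime_two]
      have h := sub_one_mul_padicValNat_factorial (p := 2) (sumLen l)
      rw [hdigits] at h
      omega
    rw [hcardQ, hfact]
    congr 1
    have h1 := sum_sub_one l
    show (l.map (fun r => 2 ^ r - 1)).sum = (l.map (fun r => 2 ^ r)).sum - l.length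
    omega
  let S : Sylow 2 (Equiv.Perm (Fin (sumLen l))) := Sylow.ofCard Q hcard_eq
  have hS : (S : Subgroup (Equiv.Perm (Fin (sumLen l)))) = Q := Sylow.coe_ofCard Q hcard_eq
  calc Nat.card (Abelianization ↥(P : Subgroup (Equiv.Perm (Fin ((l.map (fun r => 2 ^ r)).sum)))))
      = Nat.card (Abelianization ↥(S : Subgroup (Equiv.Perm (Fin (sumLen l))))) :=
        Nat.card_congr (MulEquiv.abelianizationCongr (Sylow.equiv P S)).toEquiv
    _ = Nat.card (Abelianization (WL l : Type)) := by
        rw [hS]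
        exact (Nat.card_congr (MulEquiv.abelianizationCongr e0).toEquiv).symm
    _ = 2 ^ l.sum := card_ab_GL l
end

section
/- If μ is a sign partition of n whose smallest part b is repeated (i.e., appears with multiplicity m ≥ 2), then b = 1 and m = 2. Specifically, if 1 appears m ≥ 2 times in μ then χ^{(n-1,1)}(μ) = m - 1, and if b > 1 is the smallest part appearing m ≥ 2 times then χ^{(n-b,b)}(μ) = m. -/
def F (X : Finset ℕ) (l : List ℕ) : ℤ := ((legSums X l).map (fun L => (-1:ℤ)^L)).sum

lemma F_nil (X : Finset ℕ) : F X [] = if X = Finset.range X.card then 1 else 0 := by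
  unfold F legSums; split <;> simp

lemma F_cons (X : Finset ℕ) (a : ℕ) (r : List ℕ) :
    F X (a :: r) = ∑ x ∈ X.filter (fun x => a ≤ x ∧ x - a ∉ X),
      (-1:ℤ)^(legLen X a x) * F (insert (x-a) (X.erase x)) r := by
  unfold F legSums
  rw [Multiset.map_bind, Multiset.sum_bind, Finset.sum]
  apply congrArg
  apply Multiset.map_congr rfl
  intro x _
  rw [Multiset.map_map]
  show ((legSums _ r).map (fun L => (-1:ℤ)^(legLen X a x + L))).sum = _
  simp only [pow_add]
  rw [Multiset.sum_map_mul_left]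
  cases r <;> rfl

lemma F_onerow : ∀ (l : List ℕ) (c : ℕ), (∀ a ∈ l, 0 < a) → l.sum + 1 = c →
    F {c, 0} l = 1 := by
  intro l
  induction l with
  | nil =>
      intro c _ hc
      simp only [List.sum_nil, Nat.zero_add] at hc
      subst hc
      rw [F_nil, if_pos (by decide)]
  | cons a r ih =>
      intro c hpos hc
      have ha : 0 < a := hpos a (by simp)
      have hac : a < c := by simp only [List.sum_cons] at hc; omega
      rw [F_cons]
      have hfilter : ({c, 0} : Finset ℕ).filter
          (fun x => a ≤ x ∧ x - a ∉ ({c, 0} : Finset ℕ)) = {c} := by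
        ext y
        simp only [Finset.mem_filter, Finset.mem_insert, Finset.mem_singleton]
        omega
      rw [hfilter, Finset.sum_singleton]
      have hleg : legLen {c, 0} a c = 0 := by
        unfold legLen
        rw [Finset.card_eq_zero]
        ext y
        simp only [Finset.mem_filter, Finset.mem_insert, Finset.mem_singleton,
          Finset.notMem_empty, iff_false]
        omega
      have herase : ({c, 0} : Finset ℕ).erase c = {0} := by
        ext y
        simp only [Finset.mem_erase, Finset.mem_insert, Finset.mem_singleton]
        omega
      rw [hleg, herase, pow_zero, one_mul]
      exact ih (c - a) (fun x hx => hpos x (List.mem_cons_of_mem _ hx))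
        (by simp only [List.sum_cons] at hc; omega)

lemma F_01 : F {0, 1} [] = 1 := by rw [F_nil, if_pos (by decide)]

lemma list_small (b : ℕ) : ∀ (r : List ℕ), (∀ x ∈ r, b ≤ x) → r.sum < 2 * b →
    r = [] ∨ r = [r.sum]
  | [], _, _ => Or.inl rfl
  | [e], _, _ => Or.inr (by simp)
  | e :: f :: t, hg, hs => absurd hs (by
      have he := hg e (by simp)
      have hf := hg f (by simp)
      simp only [List.sum_cons]
      omega)

lemma F_tworow : ∀ (l : List ℕ) (b c : ℕ), 0 < b → b < c → (∀ a ∈ l, b ≤ a) →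
    l.sum = c + b - 1 →
    F {c, b} l = (l.count b : ℤ) - (if b = 1 then 1 else 0) := by
  intro l
  induction l with
  | nil =>
      intro b c hb hbc _ hsum
      simp only [List.sum_nil] at hsum
      omega
  | cons a r ih =>
      intro b c hb hbc hge hsum
      have ha : b ≤ a := hge a (by simp)
      have hcb : c ≠ b := by omega
      have hsum' : a + r.sum = c + b - 1 := by
        simp only [List.sum_cons] at hsum; omega
      have hrge : ∀ x ∈ r, b ≤ x := fun x hx => hge x (List.mem_cons_of_mem _ hx)
      rw [F_cons, Finset.sum_filter, Finset.sum_pair hcb]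
      have herase : ({c, b} : Finset ℕ).erase c = {b} := by
        ext y
        simp only [Finset.mem_erase, Finset.mem_insert, Finset.mem_singleton]
        omega
      have heraseb : ({c, b} : Finset ℕ).erase b = {c} := by
        ext y
        simp only [Finset.mem_erase, Finset.mem_insert, Finset.mem_singleton]
        omega
      -- the term for x = b
      have hTb : (if a ≤ b ∧ b - a ∉ ({c, b} : Finset ℕ) then
          (-1:ℤ)^(legLen {c, b} a b) * F (insert (b - a) (({c, b} : Finset ℕ).erase b)) r
          else 0) = if a = b then 1 else 0 := by
        by_cases hab : a = b
        · subst hab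
          rw [if_pos ⟨le_refl a, by
              simp only [Finset.mem_insert, Finset.mem_singleton]; omega⟩,
            if_pos rfl]
          have hleg : legLen {c, a} a a = 0 := by
            unfold legLen
            rw [Finset.card_eq_zero]
            ext y
            simp only [Finset.mem_filter, Finset.mem_insert, Finset.mem_singleton,
              Finset.notMem_empty, iff_false]
            omega
          rw [hleg, pow_zero, one_mul, heraseb]
          have : (insert (a - a) ({c} : Finset ℕ)) = {c, 0} := by
            ext y
            simp only [Finset.mem_insert, Finset.mem_singleton]
            omega
          rw [this]
          exact F_onerow r c (fun x hx => lt_of_lt_of_le hb (hrge x hx)) (by omega)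
        · rw [if_neg (fun h => hab (le_antisymm h.1 ha)), if_neg hab]
      rw [hTb]
      -- now analyse the term for x = c
      by_cases hac : a ≤ c
      · by_cases hd1 : c - a = b
        · -- c - a = b : no move at c
          rw [if_neg (by
            simp only [Finset.mem_insert, Finset.mem_singleton]
            omega)]
          have hrcount : r.count b = if b = 1 then 1 else 0 := by
            have hrs : r.sum = 2 * b - 1 := by omega
            rcases list_small b r hrge (by omega) with h | h
            · subst h; simp at hrs; omega
            · rw [h]
              have he : b ≤ r.sum := hrge r.sum (by rw [h]; simp)
              simp only [List.count_cons, List.count_nil, beq_iff_eq]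
              split_ifs <;> omega
          simp only [List.count_cons, hrcount, beq_iff_eq]
          split_ifs <;> push_cast <;> omega
        · by_cases hdb : b < c - a
          · -- move to a smaller two-row state
            rw [if_pos ⟨hac, by
              simp only [Finset.mem_insert, Finset.mem_singleton]; omega⟩]
            have hleg : legLen {c, b} a c = 0 := by
              unfold legLen
              rw [Finset.card_eq_zero]
              ext y
              simp only [Finset.mem_filter, Finset.mem_insert, Finset.mem_singleton,
                Finset.notMem_empty, iff_false]
              omega
            rw [hleg, pow_zero, one_mul, herase]
            have := ih b (c - a) hb hdb hrge (by omega)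
            rw [show (insert (c - a) ({b} : Finset ℕ)) = {c - a, b} from rfl, this]
            simp only [List.count_cons, beq_iff_eq]
            split_ifs <;> push_cast <;> omega
          · -- c - a < b
            have hdlt : c - a < b := by omega
            rw [if_pos ⟨hac, by
              simp only [Finset.mem_insert, Finset.mem_singleton]; omega⟩]
            have hleg : legLen {c, b} a c = 1 := by
              unfold legLen
              rw [show (({c, b} : Finset ℕ).filter (fun y => c - a < y ∧ y < c)) = {b} by
                ext y
                simp only [Finset.mem_filter, Finset.mem_insert, Finset.mem_singleton]
                omega]
              simp
            rw [hleg, herase]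
            rw [show (insert (c - a) ({b} : Finset ℕ)) = {c - a, b} from rfl]
            by_cases hb1 : b = 1
            · -- b = 1 : forced a = c, r = []
              subst hb1
              have hca : c - a = 0 := by omega
              have hrsum : r.sum = 0 := by omega
              have hrnil : r = [] := by
                rcases list_small 1 r hrge (by omega) with h | h
                · exact h
                · have := hrge r.sum (by rw [h]; simp)
                  exfalso; omega
              subst hrnil
              rw [hca, F_01]
              have hab : a ≠ 1 := by omega
              simp [List.count_cons, hab]
            · -- b ≥ 2
              have hb2 : 2 ≤ b := by omega
              have hrs : r.sum = b + (c - a) - 1 := by omega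
              rcases list_small b r hrge (by omega) with h | h
              · subst h; simp at hrs; omega
              · -- r = [e] with e = b + (c-a) - 1
                have he : b ≤ r.sum := hrge r.sum (by rw [h]; simp)
                have hd0 : 1 ≤ c - a := by omega
                rw [h, hrs]
                by_cases hd : c - a = 1
                · -- e = b, the hook contributes -1
                  rw [hd]
                  have hkey : F {1, b} [b + 1 - 1] = -1 := by
                    rw [show b + 1 - 1 = b from by omega, F_cons]
                    rw [show (({1, b} : Finset ℕ).filter
                        (fun x => b ≤ x ∧ x - b ∉ ({1, b} : Finset ℕ))) = {b} by
                      ext y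
                      simp only [Finset.mem_filter, Finset.mem_insert, Finset.mem_singleton]
                      omega]
                    rw [Finset.sum_singleton]
                    have hleg2 : legLen {1, b} b b = 1 := by
                      unfold legLen
                      rw [show (({1, b} : Finset ℕ).filter
                          (fun y => b - b < y ∧ y < b)) = {1} by
                        ext y
                        simp only [Finset.mem_filter, Finset.mem_insert, Finset.mem_singleton]
                        omega]
                      simp
                    rw [hleg2]
                    rw [show (insert (b - b) (({1, b} : Finset ℕ).erase b)) = {0, 1} by
                      ext y
                      simp only [Finset.mem_insert, Finset.mem_erase, Finset.mem_singleton]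
                      omega]
                    rw [F_01]
                    norm_num
                  rw [hkey]
                  rw [show ((-1:ℤ)^1 * -1) = 1 from by norm_num]
                  simp only [List.count_cons, List.count_nil, beq_iff_eq,
                    Nat.add_sub_cancel]
                  split_ifs <;> push_cast <;> omega
                · -- e > b, no further move: contribution 0
                  have hkey : F {c - a, b} [b + (c - a) - 1] = 0 := by
                    rw [F_cons]
                    rw [show (({c - a, b} : Finset ℕ).filter
                        (fun x => b + (c - a) - 1 ≤ x ∧
                          x - (b + (c - a) - 1) ∉ ({c - a, b} : Finset ℕ))) = ∅ by
                      ext y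
                      simp only [Finset.mem_filter, Finset.mem_insert, Finset.mem_singleton,
                        Finset.notMem_empty, iff_false]
                      omega]
                    rw [Finset.sum_empty]
                  rw [hkey]
                  simp only [List.count_cons, List.count_nil, beq_iff_eq]
                  split_ifs <;> push_cast <;> omega
      · -- a > c : no move at c
        rw [if_neg (by push_neg; intro h; omega)]
        have hb2 : 2 ≤ b := by omega
        have hrnil : r = [] := by
          rcases list_small b r hrge (by omega) with h | h
          · exact h
          · have := hrge r.sum (by rw [h]; simp)
            omega
        subst hrnil
        have hab : a ≠ b := by omega
        simp only [List.count_cons, List.count_nil, beq_iff_eq]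
        split_ifs <;> push_cast <;> omega

lemma sort_pair (x y : ℕ) (h : x ≤ y) :
    Multiset.sort (y ::ₘ {x}) (· ≤ ·) = [x, y] := by
  apply List.Perm.eq_of_pairwise' (r := (· ≤ ·)) (Multiset.pairwise_sort _ _)
  · simp [h]
  · rw [← Multiset.coe_eq_coe, Multiset.sort_eq]
    show y ::ₘ x ::ₘ 0 = ↑[x, y]
    rw [Multiset.cons_swap]
    rfl

lemma betaSet_pair (p q : ℕ) : betaSet [p, q] = {p + 1, q} := by
  ext y
  simp [betaSet, List.mapIdx, List.mapIdx.go]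

example : betaSet [5, 2] = {6, 2} := by rw [betaSet_pair]

/-- If `μ` is a sign partition of `n` whose smallest part `b` has multiplicity
`m ≥ 2`, then `b = 1` and `m = 2`.  Specifically, if `1` appears `m ≥ 2` times
in `μ` then `χ^{(n-1,1)}(μ) = m - 1`, and if the smallest part `b > 1` appears
`m ≥ 2` times then `χ^{(n-b,b)}(μ) = m`. -/
theorem smallest_repeated_part (n : ℕ) (μ : n.Partition) (b m : ℕ)
    (hb : b ∈ μ.parts) (hmin : ∀ a ∈ μ.parts, b ≤ a)
    (hcount : μ.parts.count b = m) (hm : 2 ≤ m) :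
    ((∀ lam : n.Partition, charValue lam μ ∈ ({0, 1, -1} : Set ℤ)) → b = 1 ∧ m = 2) ∧
    (b = 1 → ∀ lam : n.Partition, lam.parts = (n - 1) ::ₘ ({1} : Multiset ℕ) →
      charValue lam μ = (m : ℤ) - 1) ∧
    (1 < b → ∀ lam : n.Partition, lam.parts = (n - b) ::ₘ ({b} : Multiset ℕ) →
      charValue lam μ = (m : ℤ)) := by
  have hbpos : 0 < b := μ.parts_pos hb
  have hn : μ.parts.sum = n := μ.parts_sum
  have h2b : 2 * b ≤ n := by
    have hrep : Multiset.replicate 2 b ≤ μ.parts :=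
      Multiset.le_count_iff_replicate_le.mp (by omega)
    obtain ⟨u, hu⟩ := Multiset.le_iff_exists_add.mp hrep
    have : μ.parts.sum = 2 * b + u.sum := by
      rw [hu, Multiset.sum_add, Multiset.sum_replicate, smul_eq_mul]
    omega
  set l := sortedParts μ with hl
  have hlsum : l.sum = n := by
    rw [hl, sortedParts, List.sum_reverse, ← Multiset.sum_coe (Multiset.sort μ.parts (· ≤ ·)), Multiset.sort_eq, hn]
  have hlcount : l.count b = m := by
    rw [hl, sortedParts, List.count_reverse, ← Multiset.coe_count, Multiset.sort_eq, hcount]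
  have hlge : ∀ x ∈ l, b ≤ x := by
    intro x hx
    apply hmin
    rw [hl, sortedParts, List.mem_reverse, Multiset.mem_sort] at hx
    exact hx
  have key : ∀ lam : n.Partition, lam.parts = (n - b) ::ₘ ({b} : Multiset ℕ) →
      charValue lam μ = (m : ℤ) - (if b = 1 then 1 else 0) := by
    intro lam hparts
    have hble : b ≤ n - b := by omega
    have hsp : sortedParts lam = [n - b, b] := by
      rw [sortedParts, hparts, sort_pair b (n - b) hble]
      rfl
    rw [charValue, hsp]
    show F (betaSet [n - b, b]) l = _
    rw [betaSet_pair, F_tworow l b (n - b + 1) hbpos (by omega) hlge (by omega), hlcount]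
  refine ⟨?_, ?_, ?_⟩
  · intro hsign
    have hnb : 0 < n - b := by omega
    let lam0 : n.Partition :=
      ⟨(n - b) ::ₘ ({b} : Multiset ℕ), by
        intro i hi
        simp only [Multiset.mem_cons, Multiset.mem_singleton] at hi
        rcases hi with h | h <;> omega, by
        simp only [Multiset.sum_cons, Multiset.sum_singleton]
        omega⟩
    have hv := key lam0 rfl
    have := hsign lam0
    rw [hv] at this
    simp only [Set.mem_insert_iff, Set.mem_singleton_iff] at this
    split_ifs at this <;> constructor <;> omega
  · intro hb1 lam hparts
    have := key lam (by rw [hparts, hb1])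
    rw [this, if_pos hb1]
  · intro hb1 lam hparts
    have := key lam hparts
    rw [this, if_neg (by omega)]
    ring
end
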